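/- arXiv:1711.09935 — 9 statements merged into one kernel-verified Lean document; each statement's English description precedes it below -/
import Mathlib

section
/- If A is an n×n matrix with all entries in {0,1} that contains at most 2n nonzero entries, then |det(A)| ≤ 2^(n/6) · 3^(n/6) (that is, |det(A)| ≤ 6^(n/6)). -/
open scoped Classical

namespace DetOnesAux

open Finset Matrix

noncomputable def ones {n : ℕ} (A : Matrix (Fin n) (Fin n) ℝ) : ℕ :=
  (Finset.univ.filter fun p : Fin n × Fin n => A p.1 p.2 = 1).card

noncomputable def rones {n : ℕ} (A : Matrix (Fin n) (Fin n) ℝ) (r : Fin n) : ℕ :=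
  (Finset.univ.filter fun j => A r j = 1).card

noncomputable def cones {n : ℕ} (A : Matrix (Fin n) (Fin n) ℝ) (c : Fin n) : ℕ :=
  (Finset.univ.filter fun i => A i c = 1).card

lemma ones_eq_sum {n : ℕ} (A : Matrix (Fin n) (Fin n) ℝ) :
    ones A = ∑ i, ∑ j, if A i j = 1 then 1 else 0 := by
  rw [ones, Finset.card_filter, Fintype.sum_prod_type]

lemma rones_eq_sum {n : ℕ} (A : Matrix (Fin n) (Fin n) ℝ) (r : Fin n) :
    rones A r = ∑ j, if A r j = 1 then 1 else 0 := Finset.card_filter _ _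

lemma cones_eq_sum {n : ℕ} (A : Matrix (Fin n) (Fin n) ℝ) (c : Fin n) :
    cones A c = ∑ i, if A i c = 1 then 1 else 0 := Finset.card_filter _ _

lemma ones_transpose {n : ℕ} (A : Matrix (Fin n) (Fin n) ℝ) : ones Aᵀ = ones A := by
  rw [ones_eq_sum, ones_eq_sum, Finset.sum_comm]
  rfl

lemma rones_transpose {n : ℕ} (A : Matrix (Fin n) (Fin n) ℝ) (c : Fin n) :
    rones Aᵀ c = cones A c := rfl

lemma ones_submatrix {n : ℕ} (A : Matrix (Fin (n+1)) (Fin (n+1)) ℝ) (r c : Fin (n+1)) :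
    ones A + (if A r c = 1 then 1 else 0) =
      ones (A.submatrix r.succAbove c.succAbove) + rones A r + cones A c := by
  have h1 : ones A = rones A r +
      ∑ i' : Fin n, ((if A (r.succAbove i') c = 1 then 1 else 0) +
        ∑ j' : Fin n, (if A (r.succAbove i') (c.succAbove j') = 1 then 1 else 0)) := by
    rw [ones_eq_sum, Fin.sum_univ_succAbove (fun i => ∑ j, if A i j = 1 then (1:ℕ) else 0) r,
      rones_eq_sum]
    congr 1
    refine Finset.sum_congr rfl fun i' _ => ?_
    exact Fin.sum_univ_succAbove (fun j => if A (r.succAbove i') j = 1 then (1:ℕ) else 0) c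
  have h2 : cones A c = (if A r c = 1 then 1 else 0) +
      ∑ i' : Fin n, (if A (r.succAbove i') c = 1 then 1 else 0) := by
    rw [cones_eq_sum]
    exact Fin.sum_univ_succAbove (fun i => if A i c = 1 then (1:ℕ) else 0) r
  have h3 : ones (A.submatrix r.succAbove c.succAbove) =
      ∑ i' : Fin n, ∑ j' : Fin n, (if A (r.succAbove i') (c.succAbove j') = 1 then 1 else 0) := by
    rw [ones_eq_sum]; rfl
  rw [h1, h2, h3, Finset.sum_add_distrib]
  ring

lemma rones_submatrix {n : ℕ} (A : Matrix (Fin (n+1)) (Fin (n+1)) ℝ) (r c : Fin (n+1))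
    (i' : Fin n) :
    rones A (r.succAbove i') = (if A (r.succAbove i') c = 1 then 1 else 0) +
      rones (A.submatrix r.succAbove c.succAbove) i' := by
  rw [rones_eq_sum, rones_eq_sum,
    Fin.sum_univ_succAbove (fun j => if A (r.succAbove i') j = 1 then (1:ℕ) else 0) c]
  rfl

lemma cones_submatrix {n : ℕ} (A : Matrix (Fin (n+1)) (Fin (n+1)) ℝ) (r c : Fin (n+1))
    (j' : Fin n) :
    cones A (c.succAbove j') = (if A r (c.succAbove j') = 1 then 1 else 0) +
      cones (A.submatrix r.succAbove c.succAbove) j' := by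
  rw [cones_eq_sum, cones_eq_sum,
    Fin.sum_univ_succAbove (fun i => if A i (c.succAbove j') = 1 then (1:ℕ) else 0) r]
  rfl

lemma abs_det_le_expansion {n : ℕ} (A : Matrix (Fin (n+1)) (Fin (n+1)) ℝ) (r : Fin (n+1)) :
    |A.det| ≤ ∑ j, |A r j| * |(A.submatrix r.succAbove j.succAbove).det| := by
  rw [Matrix.det_succ_row A r]
  refine (Finset.abs_sum_le_sum_abs _ _).trans ?_
  refine Finset.sum_le_sum fun j _ => ?_
  rw [abs_mul, abs_mul, abs_pow, abs_neg, abs_one, one_pow, one_mul]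

lemma abs_det_le_expansion_col {n : ℕ} (A : Matrix (Fin (n+1)) (Fin (n+1)) ℝ) (c : Fin (n+1)) :
    |A.det| ≤ ∑ i, |A i c| * |(A.submatrix i.succAbove c.succAbove).det| := by
  have h := abs_det_le_expansion Aᵀ c
  rw [Matrix.det_transpose] at h
  refine h.trans (le_of_eq (Finset.sum_congr rfl fun i _ => ?_))
  rw [show (Aᵀ.submatrix c.succAbove i.succAbove) = (A.submatrix i.succAbove c.succAbove)ᵀ from rfl,
    Matrix.det_transpose]
  rfl





lemma le_rpow_of_pow_le {c x : ℝ} {k : ℕ} (hc : 0 ≤ c) (hk : 0 < k) (h : c ^ k ≤ x) :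
    c ≤ x ^ ((1:ℝ)/k) := by
  have hx : (0:ℝ) ≤ c ^ k := pow_nonneg hc k
  have h2 : (c ^ k : ℝ) ^ ((1:ℝ)/k) ≤ x ^ ((1:ℝ)/k) :=
    Real.rpow_le_rpow hx h (by positivity)
  calc c = (c ^ k : ℝ) ^ ((1:ℝ)/k) := by
            rw [← Real.rpow_natCast c k, ← Real.rpow_mul hc]
            rw [mul_one_div, div_self (by exact_mod_cast hk.ne')]
            exact (Real.rpow_one c).symm
    _ ≤ _ := h2

lemma num1 : (6:ℝ) ^ (-(2:ℝ)/6) + (6:ℝ) ^ (-(3:ℝ)/6) ≤ 1 := by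
  have h13 : (25/14 : ℝ) ≤ 6 ^ ((2:ℝ)/6) := by
    have := le_rpow_of_pow_le (c := 25/14) (x := 6) (k := 3) (by norm_num) (by norm_num)
      (by norm_num)
    rw [show ((1:ℝ)/(3:ℕ)) = (2:ℝ)/6 by norm_num] at this
    exact this
  have h12 : (12/5 : ℝ) ≤ 6 ^ ((3:ℝ)/6) := by
    have := le_rpow_of_pow_le (c := 12/5) (x := 6) (k := 2) (by norm_num) (by norm_num)
      (by norm_num)
    rw [show ((1:ℝ)/(2:ℕ)) = (3:ℝ)/6 by norm_num] at this
    exact this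
  have p1 : (0:ℝ) < 6 ^ ((2:ℝ)/6) := Real.rpow_pos_of_pos (by norm_num) _
  have p2 : (0:ℝ) < 6 ^ ((3:ℝ)/6) := Real.rpow_pos_of_pos (by norm_num) _
  have e1 : (6:ℝ) ^ (-(2:ℝ)/6) = ((6:ℝ) ^ ((2:ℝ)/6))⁻¹ := by
    rw [← Real.rpow_neg (by norm_num)]; norm_num
  have e2 : (6:ℝ) ^ (-(3:ℝ)/6) = ((6:ℝ) ^ ((3:ℝ)/6))⁻¹ := by
    rw [← Real.rpow_neg (by norm_num)]; norm_num
  rw [e1, e2]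
  have i1 : ((6:ℝ) ^ ((2:ℝ)/6))⁻¹ ≤ 14/25 := by
    rw [inv_le_comm₀ p1 (by norm_num)] at *
    · linarith
  have i2 : ((6:ℝ) ^ ((3:ℝ)/6))⁻¹ ≤ 5/12 := by
    rw [inv_le_comm₀ p2 (by norm_num)]
    linarith
  linarith

lemma pow6 : ∀ k : ℕ, 3 ≤ k → k ^ 6 ≤ 6 ^ (k + 1) := by
  intro k hk
  induction k with
  | zero => omega
  | succ n ih =>
    rcases Nat.lt_or_ge n 3 with h | h
    · interval_cases n
      · omega
      · omega
      · norm_num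
    · have h1 := ih h
      have h2 : 3 * (n+1) ≤ 4 * n := by omega
      have h3 : (3*(n+1))^6 ≤ (4*n)^6 := Nat.pow_le_pow_left h2 6
      have h4 : 729 * (n+1)^6 ≤ 4096 * n^6 := by
        calc 729 * (n+1)^6 = (3*(n+1))^6 := by rw [mul_pow]; norm_num
          _ ≤ (4*n)^6 := h3
          _ = 4096 * n^6 := by rw [mul_pow]; norm_num
      have h5 : 4096 * n^6 ≤ 4096 * 6^(n+1) := Nat.mul_le_mul_left _ h1
      have h6 : 729 * (n+1)^6 ≤ 729 * 6^(n+1+1) := by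
        calc 729 * (n+1)^6 ≤ 4096 * 6^(n+1) := le_trans h4 h5
          _ ≤ 4374 * 6^(n+1) := Nat.mul_le_mul_right _ (by norm_num)
          _ = 729 * 6^(n+1+1) := by ring
      exact Nat.le_of_mul_le_mul_left h6 (by norm_num)

lemma num2 {k : ℕ} (hk : 3 ≤ k) : (k:ℝ) * 6 ^ (-((k:ℝ)+1)/6) ≤ 1 := by
  have h1 : ((k:ℝ)) ^ (6:ℕ) ≤ (6:ℝ) ^ (k+1 : ℕ) := by
    exact_mod_cast pow6 k hk
  have h2 : (k:ℝ) ≤ ((6:ℝ) ^ (k+1:ℕ)) ^ ((1:ℝ)/(6:ℕ)) :=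
    le_rpow_of_pow_le (Nat.cast_nonneg k) (by norm_num) h1
  have h3 : ((6:ℝ) ^ (k+1:ℕ)) ^ ((1:ℝ)/(6:ℕ)) = (6:ℝ) ^ (((k:ℝ)+1)/6) := by
    rw [← Real.rpow_natCast 6 (k+1), ← Real.rpow_mul (by norm_num)]
    push_cast
    ring_nf
  rw [h3] at h2
  have hpos : (0:ℝ) < 6 ^ (((k:ℝ)+1)/6) := Real.rpow_pos_of_pos (by norm_num) _
  have e : (6:ℝ) ^ (-((k:ℝ)+1)/6) = ((6:ℝ) ^ (((k:ℝ)+1)/6))⁻¹ := by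
    rw [← Real.rpow_neg (by norm_num)]; ring_nf
  rw [e]
  rw [mul_inv_le_iff₀ hpos, one_mul]
  exact h2

lemma rpow_step {M a m n : ℕ} (h : M + a ≤ m) :
    (6:ℝ) ^ (((M:ℝ) - n)/6) ≤ 6 ^ (((m:ℝ) - (n+1))/6) * 6 ^ ((1 - (a:ℝ))/6) := by
  rw [← Real.rpow_add (by norm_num), ← add_div]
  apply Real.rpow_le_rpow_of_exponent_le (by norm_num)
  have : (M:ℝ) + a ≤ m := by exact_mod_cast h
  have : (M:ℝ) - n ≤ (m:ℝ) - (n+1) + (1 - a) := by linarith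
  gcongr


lemma rpow_le_mul {x y c : ℝ} (h : x ≤ y + c) : (6:ℝ)^(x/6) ≤ 6^(y/6) * 6^(c/6) := by
  rw [← Real.rpow_add (by norm_num), ← add_div]
  exact Real.rpow_le_rpow_of_exponent_le (by norm_num) (by linarith)

lemma rpow_le_one' {x : ℝ} (h : x ≤ 0) : (6:ℝ)^(x/6) ≤ 1 :=
  Real.rpow_le_one_of_one_le_of_nonpos (by norm_num) (by linarith)

-- structure of a 0/1 vector from its number of ones
lemma vec_zero {m : ℕ} {f : Fin m → ℝ} (h01 : ∀ j, f j = 0 ∨ f j = 1)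
    (h : (Finset.univ.filter fun j => f j = 1).card = 0) : ∀ j, f j = 0 := by
  intro j
  rcases h01 j with h' | h'
  · exact h'
  · exfalso
    have : j ∈ Finset.univ.filter fun j => f j = 1 := by simp [h']
    rw [Finset.card_eq_zero.mp h] at this
    simp at this

lemma vec_one {m : ℕ} {f : Fin m → ℝ} (h01 : ∀ j, f j = 0 ∨ f j = 1)
    (h : (Finset.univ.filter fun j => f j = 1).card = 1) :
    ∃ c, f c = 1 ∧ ∀ j, j ≠ c → f j = 0 := by
  obtain ⟨c, hc⟩ := Finset.card_eq_one.mp h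
  refine ⟨c, ?_, ?_⟩
  · have : c ∈ Finset.univ.filter fun j => f j = 1 := hc ▸ Finset.mem_singleton_self c
    simpa using this
  · intro j hj
    rcases h01 j with h' | h'
    · exact h'
    · exfalso
      have : j ∈ Finset.univ.filter fun j => f j = 1 := by simp [h']
      rw [hc] at this
      exact hj (Finset.mem_singleton.mp this)

lemma vec_two {m : ℕ} {f : Fin m → ℝ} (h01 : ∀ j, f j = 0 ∨ f j = 1)
    (h : (Finset.univ.filter fun j => f j = 1).card = 2) :
    ∃ c1 c2, c1 ≠ c2 ∧ f c1 = 1 ∧ f c2 = 1 ∧ ∀ j, j ≠ c1 → j ≠ c2 → f j = 0 := by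
  obtain ⟨c1, c2, hne, hs⟩ := Finset.card_eq_two.mp h
  have m1 : c1 ∈ Finset.univ.filter fun j => f j = 1 := hs ▸ by simp
  have m2 : c2 ∈ Finset.univ.filter fun j => f j = 1 := hs ▸ by simp
  refine ⟨c1, c2, hne, by simpa using m1, by simpa using m2, ?_⟩
  intro j h1 h2
  rcases h01 j with h' | h'
  · exact h'
  · exfalso
    have : j ∈ Finset.univ.filter fun j => f j = 1 := by simp [h']
    rw [hs] at this
    rcases Finset.mem_insert.mp this with h | h
    · exact h1 h
    · exact h2 (Finset.mem_singleton.mp h)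

lemma vec_mem {m : ℕ} {f : Fin m → ℝ} {c : Fin m} (h : f c = 1) :
    1 ≤ (Finset.univ.filter fun j => f j = 1).card :=
  Finset.card_pos.mpr ⟨c, by simp [h]⟩

-- second element of a two-element column
lemma vec_two_other {m : ℕ} {f : Fin m → ℝ} (h01 : ∀ j, f j = 0 ∨ f j = 1)
    (h : (Finset.univ.filter fun j => f j = 1).card = 2) {r : Fin m} (hr : f r = 1) :
    ∃ r1, r1 ≠ r ∧ f r1 = 1 ∧ ∀ i, i ≠ r → i ≠ r1 → f i = 0 := by
  obtain ⟨c1, c2, hne, h1, h2, hz⟩ := vec_two h01 h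
  by_cases hc : r = c1
  · exact ⟨c2, by rw [hc]; exact hne.symm, h2, fun i hi1 hi2 => hz i (hc ▸ hi1) hi2⟩
  · have : r = c2 := by
      by_contra hc2
      rw [hz r hc hc2] at hr; norm_num at hr
    exact ⟨c1, fun h' => hc (by rw [h']), h1, fun i hi1 hi2 => hz i hi2 (this ▸ hi1)⟩

lemma abs_det_le_single {n : ℕ} (A : Matrix (Fin (n+1)) (Fin (n+1)) ℝ) (r c : Fin (n+1))
    (h1 : |A r c| ≤ 1) (hz : ∀ j, j ≠ c → A r j = 0) :
    |A.det| ≤ |(A.submatrix r.succAbove c.succAbove).det| := by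
  refine (abs_det_le_expansion A r).trans ?_
  rw [Finset.sum_eq_single c (fun j _ hj => by rw [hz j hj, abs_zero, zero_mul])
    (fun h => absurd (Finset.mem_univ c) h)]
  exact mul_le_of_le_one_left (abs_nonneg _) h1

lemma abs_det_le_single_col {n : ℕ} (A : Matrix (Fin (n+1)) (Fin (n+1)) ℝ) (r c : Fin (n+1))
    (h1 : |A r c| ≤ 1) (hz : ∀ i, i ≠ r → A i c = 0) :
    |A.det| ≤ |(A.submatrix r.succAbove c.succAbove).det| := by
  refine (abs_det_le_expansion_col A c).trans ?_
  rw [Finset.sum_eq_single r (fun i _ hi => by rw [hz i hi, abs_zero, zero_mul])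
    (fun h => absurd (Finset.mem_univ r) h)]
  exact mul_le_of_le_one_left (abs_nonneg _) h1

lemma abs_det_le_two {n : ℕ} (A : Matrix (Fin (n+1)) (Fin (n+1)) ℝ) (r c1 c2 : Fin (n+1))
    (hne : c1 ≠ c2) (h1 : |A r c1| ≤ 1) (h2 : |A r c2| ≤ 1)
    (hz : ∀ j, j ≠ c1 → j ≠ c2 → A r j = 0) :
    |A.det| ≤ |(A.submatrix r.succAbove c1.succAbove).det| +
      |(A.submatrix r.succAbove c2.succAbove).det| := by
  refine (abs_det_le_expansion A r).trans ?_
  rw [Finset.sum_eq_add_of_mem c1 c2 (Finset.mem_univ _) (Finset.mem_univ _) hne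
    (fun j _ hj => by rw [hz j hj.1 hj.2, abs_zero, zero_mul])]
  exact add_le_add (mul_le_of_le_one_left (abs_nonneg _) h1)
    (mul_le_of_le_one_left (abs_nonneg _) h2)

lemma sub_case {n : ℕ} (A : Matrix (Fin n) (Fin n) ℝ)
    (h01 : ∀ i j, A i j = 0 ∨ A i j = 1) (r r1 c1 c2 : Fin n)
    (hrr : r1 ≠ r) (hc : c1 ≠ c2) (h1 : A r c1 = 1) (h2 : A r c2 = 1)
    (h3 : A r1 c1 = 1) (h4 : A r1 c2 = 1)
    (hz : ∀ j, j ≠ c1 → j ≠ c2 → A r j = 0) :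
    ∃ B : Matrix (Fin n) (Fin n) ℝ,
      (∀ i j, B i j = 0 ∨ B i j = 1) ∧ B.det = A.det ∧ ones B + 2 ≤ ones A := by
  set B := A.updateRow r1 (A r1 + (-1 : ℝ) • A r) with hB
  have hBapp : ∀ j, B r1 j = A r1 j - A r j := by
    intro j; simp [hB, Matrix.updateRow_apply]; ring
  have hBapp' : ∀ i j, i ≠ r1 → B i j = A i j := by
    intro i j hi; simp [hB, Matrix.updateRow_apply, hi]
  have hB01 : ∀ i j, B i j = 0 ∨ B i j = 1 := by
    intro i j
    by_cases hi : i = r1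
    · subst hi
      rw [hBapp]
      by_cases hj1 : j = c1
      · subst hj1; rw [h1, h3]; left; ring
      · by_cases hj2 : j = c2
        · subst hj2; rw [h2, h4]; left; ring
        · rw [hz j hj1 hj2, sub_zero]; exact h01 _ j
    · rw [hBapp' i j hi]; exact h01 i j
  have hBA : ∀ i j, B i j = 1 → A i j = 1 := by
    intro i j hij
    by_cases hi : i = r1
    · subst hi
      rw [hBapp] at hij
      by_cases hj1 : j = c1
      · subst hj1; rw [h1, h3] at hij; norm_num at hij
      · by_cases hj2 : j = c2
        · subst hj2; rw [h2, h4] at hij; norm_num at hij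
        · rw [hz j hj1 hj2, sub_zero] at hij; exact hij
    · rw [hBapp' i j hi] at hij; exact hij
  refine ⟨B, hB01, Matrix.det_updateRow_add_smul_self A hrr (-1), ?_⟩
  have hpair : ({(r1, c1), (r1, c2)} : Finset (Fin n × Fin n)) ⊆
      Finset.univ.filter fun p => A p.1 p.2 = 1 := by
    intro p hp
    rcases Finset.mem_insert.mp hp with h | h
    · subst h; simp [h3]
    · rw [Finset.mem_singleton.mp h]; simp [h4]
  have hsub : (Finset.univ.filter fun p : Fin n × Fin n => B p.1 p.2 = 1) ⊆
      (Finset.univ.filter fun p => A p.1 p.2 = 1) \ {(r1, c1), (r1, c2)} := by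
    intro p hp
    have hp1 : B p.1 p.2 = 1 := by simpa using hp
    rw [Finset.mem_sdiff]
    constructor
    · simp [hBA p.1 p.2 hp1]
    · intro hmem
      rcases Finset.mem_insert.mp hmem with h | h
      · rw [show p = (r1, c1) from h, hBapp, h1, h3] at hp1; norm_num at hp1
      · rw [show p = (r1, c2) from Finset.mem_singleton.mp h, hBapp, h2, h4] at hp1
        norm_num at hp1
  have hcard2 : ({(r1, c1), (r1, c2)} : Finset (Fin n × Fin n)).card = 2 := by
    rw [Finset.card_insert_of_notMem (by simp [hc]), Finset.card_singleton]
  have := Finset.card_le_card hsub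
  rw [Finset.card_sdiff_of_subset hpair, hcard2] at this
  have h2le : 2 ≤ ones A := hcard2 ▸ Finset.card_le_card hpair
  have eA : ones A = (Finset.univ.filter fun p : Fin n × Fin n => A p.1 p.2 = 1).card := rfl
  have eB : ones B = (Finset.univ.filter fun p : Fin n × Fin n => B p.1 p.2 = 1).card := rfl
  omega

lemma key {n : ℕ} (A : Matrix (Fin (n+1)) (Fin (n+1)) ℝ)
    (h01 : ∀ i j, A i j = 0 ∨ A i j = 1)
    (IH : ∀ k (B : Matrix (Fin k) (Fin k) ℝ), (∀ i j, B i j = 0 ∨ B i j = 1) →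
      k + ones B < (n+1) + ones A → |B.det| ≤ 6 ^ (((ones B : ℝ) - k)/6))
    (r : Fin (n+1)) (hr : rones A r ≤ 2) :
    |A.det| ≤ 6 ^ (((ones A : ℝ) - (n+1))/6) := by
  by_cases hz : ∃ i, rones A i = 0
  · obtain ⟨i, hi⟩ := hz
    have hz' : ∀ j, A i j = 0 := vec_zero (h01 i) hi
    rw [Matrix.det_eq_zero_of_row_eq_zero i hz', abs_zero]
    positivity
  push_neg at hz
  by_cases h1 : ∃ i, rones A i = 1
  · obtain ⟨i, hi⟩ := h1
    obtain ⟨c, hc1, hcz⟩ := vec_one (h01 i) hi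
    have hstep := abs_det_le_single A i c (by rw [hc1]; norm_num) hcz
    set M := A.submatrix i.succAbove c.succAbove with hM
    have hM01 : ∀ a b, M a b = 0 ∨ M a b = 1 := fun a b => h01 _ _
    have hcount := ones_submatrix A i c
    rw [if_pos hc1, ← hM] at hcount
    have hri : rones A i = 1 := hi
    have hcA : 1 ≤ cones A c := vec_mem hc1
    have honesM : ones M + 1 ≤ ones A := by omega
    have hIH := IH n M hM01 (by omega)
    refine hstep.trans (hIH.trans ?_)
    apply Real.rpow_le_rpow_of_exponent_le (by norm_num)
    have : (ones M : ℝ) + 1 ≤ ones A := by exact_mod_cast honesM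
    push_cast
    linarith
  push_neg at h1
  have hrow2 : ∀ i, 2 ≤ rones A i := by
    intro i
    have := hz i
    have := h1 i
    omega
  have hr2 : rones A r = 2 := le_antisymm hr (hrow2 r)
  obtain ⟨c1, c2, hcne, hc1, hc2, hcz⟩ := vec_two (h01 r) hr2
  set T := (6:ℝ) ^ (((ones A : ℝ) - (n+1))/6) with hT
  have hTpos : (0:ℝ) ≤ T := le_of_lt (Real.rpow_pos_of_pos (by norm_num) _)
  -- C0 : one of the two columns has a single one
  have keyC0 : ∀ c c' : Fin (n+1), c ≠ c' → A r c = 1 → A r c' = 1 →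
      (∀ j, j ≠ c → j ≠ c' → A r j = 0) → cones A c = 1 →
      |A.det| ≤ T := by
    intro c c' hne hac hac' hz' hγ
    obtain ⟨r0, hr0, hz0⟩ := vec_one (fun i => h01 i c) hγ
    have hrr0 : r = r0 := by
      by_contra h
      rw [hz0 r h] at hac; norm_num at hac
    subst hrr0
    have hstep := abs_det_le_single_col A r c (by rw [hac]; norm_num) hz0
    set M := A.submatrix r.succAbove c.succAbove with hM
    have hM01 : ∀ a b, M a b = 0 ∨ M a b = 1 := fun a b => h01 _ _
    have hcount := ones_submatrix A r c
    rw [if_pos hac, ← hM] at hcount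
    have hrr : rones A r = 2 := hr2
    have honesM : ones M + 2 ≤ ones A := by omega
    have hIH := IH n M hM01 (by omega)
    refine hstep.trans (hIH.trans ?_)
    apply Real.rpow_le_rpow_of_exponent_le (by norm_num)
    have : (ones M : ℝ) + 2 ≤ ones A := by exact_mod_cast honesM
    push_cast
    linarith
  -- C1 : both columns have ≥ 2 ones, second has ≥ 3
  have keyC1 : ∀ c c' : Fin (n+1), c ≠ c' → A r c = 1 → A r c' = 1 →
      (∀ j, j ≠ c → j ≠ c' → A r j = 0) → 2 ≤ cones A c → 3 ≤ cones A c' →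
      |A.det| ≤ T := by
    intro c c' hne hac hac' hz' hγ hγ'
    have hstep := abs_det_le_two A r c c' hne (by rw [hac]; norm_num)
      (by rw [hac']; norm_num) hz'
    set M1 := A.submatrix r.succAbove c.succAbove with hM1
    set M2 := A.submatrix r.succAbove c'.succAbove with hM2
    have hco1 := ones_submatrix A r c
    rw [if_pos hac, ← hM1] at hco1
    have hco2 := ones_submatrix A r c'
    rw [if_pos hac', ← hM2] at hco2
    have hrr : rones A r = 2 := hr2
    have hones1 : ones M1 + 3 ≤ ones A := by omega
    have hones2 : ones M2 + 4 ≤ ones A := by omega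
    have hb1 : |M1.det| ≤ T * 6 ^ ((-2:ℝ)/6) := by
      refine (IH n M1 (fun a b => h01 _ _) (by omega)).trans ?_
      refine rpow_le_mul ?_
      have : (ones M1 : ℝ) + 3 ≤ ones A := by exact_mod_cast hones1
      push_cast
      linarith
    have hb2 : |M2.det| ≤ T * 6 ^ ((-3:ℝ)/6) := by
      refine (IH n M2 (fun a b => h01 _ _) (by omega)).trans ?_
      refine rpow_le_mul ?_
      have : (ones M2 : ℝ) + 4 ≤ ones A := by exact_mod_cast hones2
      push_cast
      linarith
    have hnum : (6:ℝ) ^ ((-2:ℝ)/6) + 6 ^ ((-3:ℝ)/6) ≤ 1 := by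
      have h := num1
      norm_num at h ⊢
      convert h using 3 <;> norm_num
    calc |A.det| ≤ |M1.det| + |M2.det| := hstep
      _ ≤ T * 6 ^ ((-2:ℝ)/6) + T * 6 ^ ((-3:ℝ)/6) := add_le_add hb1 hb2
      _ = T * (6 ^ ((-2:ℝ)/6) + 6 ^ ((-3:ℝ)/6)) := by ring
      _ ≤ T * 1 := mul_le_mul_of_nonneg_left hnum hTpos
      _ = T := mul_one T
  have hγ1 : 1 ≤ cones A c1 := vec_mem hc1
  have hγ2 : 1 ≤ cones A c2 := vec_mem hc2
  by_cases hone1 : cones A c1 = 1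
  · exact keyC0 c1 c2 hcne hc1 hc2 hcz hone1
  by_cases hone2 : cones A c2 = 1
  · exact keyC0 c2 c1 hcne.symm hc2 hc1 (fun j h2' h1' => hcz j h1' h2') hone2
  have hγ1' : 2 ≤ cones A c1 := by omega
  have hγ2' : 2 ≤ cones A c2 := by omega
  by_cases hth2 : 3 ≤ cones A c2
  · exact keyC1 c1 c2 hcne hc1 hc2 hcz hγ1' hth2
  by_cases hth1 : 3 ≤ cones A c1
  · exact keyC1 c2 c1 hcne.symm hc2 hc1 (fun j h2' h1' => hcz j h1' h2') hγ2' hth1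
  have hg1 : cones A c1 = 2 := by omega
  -- C2 : both columns have exactly 2 ones
  obtain ⟨r1, hr1ne, hr1c1, hcolz⟩ := vec_two_other (fun i => h01 i c1) hg1 hc1
  by_cases hε : A r1 c2 = 1
  · -- row subtraction
    obtain ⟨B, hB01, hBdet, hBones⟩ :=
      sub_case A h01 r r1 c1 c2 hr1ne hcne hc1 hc2 hr1c1 hε hcz
    have hIH := IH (n+1) B hB01 (by omega)
    rw [← hBdet]
    refine hIH.trans ?_
    apply Real.rpow_le_rpow_of_exponent_le (by norm_num)
    have : (ones B : ℝ) + 2 ≤ ones A := by exact_mod_cast hBones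
    push_cast
    linarith
  · have hε0 : A r1 c2 = 0 := (h01 r1 c2).resolve_right hε
    have hn : n ≠ 0 := by
      rintro rfl
      exact hr1ne (Fin.ext (by omega))
    obtain ⟨n', rfl⟩ : ∃ n', n = n' + 1 := ⟨n - 1, by omega⟩
    have hstep := abs_det_le_two A r c1 c2 hcne (by rw [hc1]; norm_num)
      (by rw [hc2]; norm_num) hcz
    set M1 := A.submatrix r.succAbove c1.succAbove with hM1d
    set M2 := A.submatrix r.succAbove c2.succAbove with hM2d
    have hco1 := ones_submatrix A r c1
    rw [if_pos hc1, ← hM1d] at hco1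
    have hco2 := ones_submatrix A r c2
    rw [if_pos hc2, ← hM2d] at hco2
    have hrr : rones A r = 2 := hr2
    have hg2 : cones A c2 = 2 := by omega
    have hones1 : ones M1 + 3 ≤ ones A := by omega
    have hb1 : |M1.det| ≤ T * 6 ^ ((-2:ℝ)/6) := by
      refine (IH (n'+1) M1 (fun a b => h01 _ _) (by omega)).trans ?_
      refine rpow_le_mul ?_
      have : (ones M1 : ℝ) + 3 ≤ ones A := by exact_mod_cast hones1
      push_cast
      linarith
    -- two-step bound on M2
    obtain ⟨c1', hc1'⟩ := Fin.exists_succAbove_eq (show c1 ≠ c2 from hcne)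
    obtain ⟨r1', hr1'⟩ := Fin.exists_succAbove_eq (show r1 ≠ r from hr1ne)
    have hM2entry : M2 r1' c1' = 1 := by
      show A (r.succAbove r1') (c2.succAbove c1') = 1
      rw [hr1', hc1']
      exact hr1c1
    have hM2z : ∀ i', i' ≠ r1' → M2 i' c1' = 0 := by
      intro i' hi'
      show A (r.succAbove i') (c2.succAbove c1') = 0
      rw [hc1']
      refine hcolz _ (Fin.succAbove_ne r i') ?_
      intro h
      exact hi' (Fin.succAbove_right_injective (by rw [h, hr1']))
    have hstep2 := abs_det_le_single_col M2 r1' c1' (by rw [hM2entry]; norm_num) hM2z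
    set N := M2.submatrix r1'.succAbove c1'.succAbove with hNd
    have hcoN := ones_submatrix M2 r1' c1'
    rw [if_pos hM2entry, ← hNd] at hcoN
    have hrones := rones_submatrix A r c2 r1'
    rw [hr1', if_neg (by rw [hε0]; norm_num), ← hM2d] at hrones
    have hrM2 : 2 ≤ rones M2 r1' := by
      have := hrow2 r1
      omega
    have hcM2 : 1 ≤ cones M2 c1' := vec_mem hM2entry
    have honesN : ones N + 5 ≤ ones A := by omega
    have hbN : |N.det| ≤ T * 6 ^ ((-3:ℝ)/6) := by
      refine (IH n' N (fun a b => h01 _ _) (by omega)).trans ?_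
      refine rpow_le_mul ?_
      have : (ones N : ℝ) + 5 ≤ ones A := by exact_mod_cast honesN
      push_cast
      linarith
    have hnum : (6:ℝ) ^ ((-2:ℝ)/6) + 6 ^ ((-3:ℝ)/6) ≤ 1 := by
      have h := num1
      norm_num at h ⊢
      convert h using 3 <;> norm_num
    calc |A.det| ≤ |M1.det| + |M2.det| := hstep
      _ ≤ T * 6 ^ ((-2:ℝ)/6) + T * 6 ^ ((-3:ℝ)/6) :=
          add_le_add hb1 (hstep2.trans hbN)
      _ = T * (6 ^ ((-2:ℝ)/6) + 6 ^ ((-3:ℝ)/6)) := by ring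
      _ ≤ T * 1 := mul_le_mul_of_nonneg_left hnum hTpos
      _ = T := mul_one T

lemma key3 {n : ℕ} (A : Matrix (Fin (n+1)) (Fin (n+1)) ℝ)
    (h01 : ∀ i j, A i j = 0 ∨ A i j = 1)
    (IH : ∀ k (B : Matrix (Fin k) (Fin k) ℝ), (∀ i j, B i j = 0 ∨ B i j = 1) →
      k + ones B < (n+1) + ones A → |B.det| ≤ 6 ^ (((ones B : ℝ) - k)/6))
    (hrow : ∀ i, 3 ≤ rones A i) (hcol : ∀ c, 3 ≤ cones A c) :
    |A.det| ≤ 6 ^ (((ones A : ℝ) - (n+1))/6) := by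
  set T := (6:ℝ) ^ (((ones A : ℝ) - (n+1))/6) with hT
  have hTpos : (0:ℝ) ≤ T := le_of_lt (Real.rpow_pos_of_pos (by norm_num) _)
  set k := rones A 0 with hk
  set C := T * 6 ^ ((-((k:ℝ)+1))/6) with hC
  have hCpos : (0:ℝ) ≤ C := by
    apply mul_nonneg hTpos
    exact le_of_lt (Real.rpow_pos_of_pos (by norm_num) _)
  have hterm : ∀ j : Fin (n+1),
      |A 0 j| * |(A.submatrix (0:Fin (n+1)).succAbove j.succAbove).det| ≤ |A 0 j| * C := by
    intro j
    rcases h01 0 j with h | h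
    · rw [h, abs_zero, zero_mul, zero_mul]
    · have hco := ones_submatrix A 0 j
      rw [if_pos h] at hco
      set M := A.submatrix (0:Fin (n+1)).succAbove j.succAbove with hMd
      have hγ := hcol j
      have honesM : ones M + k + 2 ≤ ones A := by omega
      have hb : |M.det| ≤ C := by
        refine (IH n M (fun a b => h01 _ _) (by omega)).trans ?_
        refine rpow_le_mul ?_
        have : (ones M : ℝ) + k + 2 ≤ ones A := by exact_mod_cast honesM
        push_cast
        linarith
      exact mul_le_mul_of_nonneg_left hb (abs_nonneg _)
  have hsum : ∑ j, |A 0 j| = (k:ℝ) := by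
    rw [hk, rones_eq_sum]
    push_cast
    refine Finset.sum_congr rfl fun j _ => ?_
    rcases h01 0 j with h | h
    · simp [h]
    · simp [h]
  calc |A.det| ≤ ∑ j, |A 0 j| * |(A.submatrix (0:Fin (n+1)).succAbove j.succAbove).det| :=
        abs_det_le_expansion A 0
    _ ≤ ∑ j, |A 0 j| * C := Finset.sum_le_sum fun j _ => hterm j
    _ = (∑ j, |A 0 j|) * C := by rw [Finset.sum_mul]
    _ = (k:ℝ) * C := by rw [hsum]
    _ = T * ((k:ℝ) * 6 ^ ((-((k:ℝ)+1))/6)) := by ring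
    _ ≤ T * 1 := mul_le_mul_of_nonneg_left (num2 (hrow 0)) hTpos
    _ = T := mul_one T

lemma main : ∀ N n (A : Matrix (Fin n) (Fin n) ℝ), (∀ i j, A i j = 0 ∨ A i j = 1) →
    n + ones A ≤ N → |A.det| ≤ 6 ^ (((ones A : ℝ) - n)/6) := by
  intro N
  induction N using Nat.strong_induction_on with
  | _ N IH =>
    intro n A h01 hN
    match n, A, h01, hN with
    | 0, A, h01, hN =>
      have h0 : ones A = 0 := by
        rw [ones]
        simp
      rw [Matrix.det_fin_zero, h0]
      norm_num
    | n+1, A, h01, hN =>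
      have IH' : ∀ k (B : Matrix (Fin k) (Fin k) ℝ), (∀ i j, B i j = 0 ∨ B i j = 1) →
          k + ones B < (n+1) + ones A → |B.det| ≤ 6 ^ (((ones B : ℝ) - k)/6) := by
        intro k B hB hlt
        exact IH (k + ones B) (lt_of_lt_of_le hlt hN) k B hB le_rfl
      have hcast : ((n + 1 : ℕ) : ℝ) = (n:ℝ) + 1 := by push_cast; ring
      by_cases hrow : ∃ r, rones A r ≤ 2
      · obtain ⟨r, hr⟩ := hrow
        rw [hcast]
        exact key A h01 IH' r hr
      by_cases hcol : ∃ c, cones A c ≤ 2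
      · obtain ⟨c, hc⟩ := hcol
        have IH'' : ∀ k (B : Matrix (Fin k) (Fin k) ℝ), (∀ i j, B i j = 0 ∨ B i j = 1) →
            k + ones B < (n+1) + ones Aᵀ → |B.det| ≤ 6 ^ (((ones B : ℝ) - k)/6) := by
          rw [ones_transpose]
          exact IH'
        have hkey := key Aᵀ (fun i j => h01 j i) IH'' c (by rw [rones_transpose]; exact hc)
        rw [Matrix.det_transpose, ones_transpose] at hkey
        rw [hcast]
        exact hkey
      · push_neg at hrow hcol
        rw [hcast]
        exact key3 A h01 IH' (fun i => by have := hrow i; omega)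
          (fun c => by have := hcol c; omega)

end DetOnesAux

/-- If `A` is an `n × n` matrix with all entries in `{0,1}` that contains at most `2n`
nonzero entries (i.e. at most `2n` ones), then `|det A| ≤ 2^(n/6) · 3^(n/6)`. -/
theorem abs_det_le_of_le_two_n_ones (n : ℕ) (A : Matrix (Fin n) (Fin n) ℝ)
    (h01 : ∀ i j, A i j = 0 ∨ A i j = 1)
    (hcard : (Finset.univ.filter fun p : Fin n × Fin n => A p.1 p.2 = 1).card ≤ 2 * n) :
    |A.det| ≤ 2 ^ ((n : ℝ) / 6) * 3 ^ ((n : ℝ) / 6) := by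
  have h := DetOnesAux.main (n + DetOnesAux.ones A) n A h01 le_rfl
  have hones : DetOnesAux.ones A ≤ 2 * n := hcard
  have h2 : |A.det| ≤ (6:ℝ) ^ ((n:ℝ)/6) := by
    refine h.trans ?_
    apply Real.rpow_le_rpow_of_exponent_le (by norm_num)
    have : (DetOnesAux.ones A : ℝ) ≤ 2 * n := by exact_mod_cast hones
    linarith
  calc |A.det| ≤ (6:ℝ) ^ ((n:ℝ)/6) := h2
    _ = 2 ^ ((n:ℝ)/6) * 3 ^ ((n:ℝ)/6) := by
        rw [show (6:ℝ) = 2 * 3 by norm_num, Real.mul_rpow (by norm_num) (by norm_num)]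
end

section
/- If A is an n×n matrix with all entries in {0,1} such that every row of A contains at most two ones, then |det(A)| ≤ 2^(n/3). -/
open scoped Classical
set_option maxHeartbeats 1000000

open Finset

namespace DetTwoOnesAux

lemma rpow2_mono {x y : ℝ} (h : x ≤ y) : (2:ℝ) ^ x ≤ (2:ℝ) ^ y :=
  Real.rpow_le_rpow_of_exponent_le one_le_two h

lemma rpow2_pos (x : ℝ) : (0:ℝ) < (2:ℝ) ^ x := Real.rpow_pos_of_pos two_pos x

lemma filter_card_le_filter_card {k l : ℕ} (f : Fin k → Fin l) (hf : Function.Injective f)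
    (p : Fin k → Prop) (q : Fin l → Prop) [DecidablePred p] [DecidablePred q]
    (h : ∀ x, p x → q (f x)) :
    (univ.filter p).card ≤ (univ.filter q).card := by
  apply Finset.card_le_card_of_injOn f
  · intro x hx
    simp only [Finset.mem_coe, mem_filter, mem_univ, true_and] at hx ⊢
    exact h x hx
  · exact hf.injOn

lemma abs_det_col_single {m : ℕ} (A : Matrix (Fin (m+1)) (Fin (m+1)) ℝ) (i j : Fin (m+1))
    (h : ∀ i', i' ≠ i → A i' j = 0) :
    |A.det| = |A i j| * |(A.submatrix i.succAbove j.succAbove).det| := by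
  rw [Matrix.det_succ_column A j,
    Finset.sum_eq_single i (fun i' _ hne => by rw [h i' hne]; ring)
      (fun h' => absurd (mem_univ i) h')]
  rw [abs_mul, abs_mul, abs_pow, abs_neg, abs_one, one_pow, one_mul]

lemma abs_det_row_single {m : ℕ} (A : Matrix (Fin (m+1)) (Fin (m+1)) ℝ) (i j : Fin (m+1))
    (h : ∀ j', j' ≠ j → A i j' = 0) :
    |A.det| = |A i j| * |(A.submatrix i.succAbove j.succAbove).det| := by
  rw [Matrix.det_succ_row A i,
    Finset.sum_eq_single j (fun j' _ hne => by rw [h j' hne]; ring)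
      (fun h' => absurd (mem_univ j) h')]
  rw [abs_mul, abs_mul, abs_pow, abs_neg, abs_one, one_pow, one_mul]

lemma pair_of_card_two {α} [DecidableEq α] {s : Finset α} (h : s.card = 2) {a : α}
    (ha : a ∈ s) : ∃ c, a ≠ c ∧ s = {a, c} := by
  obtain ⟨p, q, hpq, rfl⟩ := Finset.card_eq_two.mp h
  rcases mem_insert.mp ha with rfl | h'
  · exact ⟨q, hpq, rfl⟩
  · rcases mem_singleton.mp h' with rfl
    exact ⟨p, hpq.symm, Finset.pair_comm p a⟩


lemma minor_row_le {k l : ℕ} (M : Matrix (Fin l) (Fin l) ℝ) (B : Matrix (Fin k) (Fin k) ℝ)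
    (fr : Fin k → Fin l) (fc : Fin k → Fin l) (hfc : Function.Injective fc)
    (hB : ∀ i j, B i j = M (fr i) (fc j)) (i : Fin k) :
    (univ.filter fun j => B i j ≠ 0).card ≤ (univ.filter fun j => M (fr i) j ≠ 0).card :=
  filter_card_le_filter_card fc hfc (fun j => B i j ≠ 0) (fun j => M (fr i) j ≠ 0)
    (fun j h => by simpa [hB] using h)

lemma minor_S {k l : ℕ} (M : Matrix (Fin l) (Fin l) ℝ) (B : Matrix (Fin k) (Fin k) ℝ)
    (fr : Fin k → Fin l) (fc : Fin k → Fin l) (hfr : Function.Injective fr)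
    (hB : ∀ i j, B i j = M (fr i) (fc j)) (S : Finset (Fin l))
    (hS : ∀ i ∉ S, ∀ j, M i j = 0 ∨ M i j = 1) :
    ∃ T : Finset (Fin k), T.card ≤ S.card ∧ ∀ i ∉ T, ∀ j, B i j = 0 ∨ B i j = 1 := by
  refine ⟨univ.filter fun i => fr i ∈ S, ?_, ?_⟩
  · exact Finset.card_le_card_of_injOn fr (fun x hx => (mem_filter.mp hx).2) hfr.injOn
  · intro i hi j
    rw [hB]
    apply hS
    intro hmem
    exact hi (mem_filter.mpr ⟨mem_univ _, hmem⟩)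

lemma key (m : ℕ) : ∀ (M : Matrix (Fin m) (Fin m) ℝ) (e : ℕ), e ≤ 1 →
    (∀ i j, M i j = 0 ∨ M i j = 1 ∨ M i j = -1) →
    (∀ i, (univ.filter fun j => M i j ≠ 0).card ≤ 2) →
    (∃ S : Finset (Fin m), S.card ≤ e ∧ ∀ i ∉ S, ∀ j, M i j = 0 ∨ M i j = 1) →
    |M.det| ≤ (2:ℝ) ^ (((m : ℝ) + e) / 3) := by
  induction m using Nat.strong_induction_on with
  | _ m IH =>
  rcases m with _ | m
  · intro M e _ _ _ _
    rw [Matrix.det_fin_zero, abs_one]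
    calc (1:ℝ) = 2 ^ (0:ℝ) := (Real.rpow_zero 2).symm
      _ ≤ _ := rpow2_mono (by positivity)
  intro M e he hent hrow hex
  obtain ⟨S, hScard, hS⟩ := hex
  have habs1 : ∀ i j, |M i j| ≤ 1 := by
    intro i j; rcases hent i j with h | h | h <;> simp [h]
  -- Case: a zero row
  by_cases hz : ∃ i, ∀ j, M i j = 0
  · obtain ⟨i, hi⟩ := hz
    rw [Matrix.det_eq_zero_of_row_eq_zero i hi, abs_zero]
    exact (rpow2_pos _).le
  push_neg at hz
  -- Case: a row with exactly one nonzero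
  by_cases h1 : ∃ i, (univ.filter fun j => M i j ≠ 0).card ≤ 1
  · obtain ⟨i, hi1⟩ := h1
    obtain ⟨j, hj⟩ := hz i
    have hne : (univ.filter fun j => M i j ≠ 0).Nonempty := ⟨j, by simp [hj]⟩
    obtain ⟨j0, hj0⟩ := Finset.card_eq_one.mp (le_antisymm hi1 (Finset.card_pos.mpr hne))
    have hz0 : ∀ j', j' ≠ j0 → M i j' = 0 := by
      intro j' hne'
      by_contra h
      have : j' ∈ (univ.filter fun j => M i j ≠ 0) := by simp [h]
      rw [hj0] at this
      exact hne' (mem_singleton.mp this)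
    rw [abs_det_row_single M i j0 hz0]
    set B := M.submatrix i.succAbove j0.succAbove with hBdef
    have hB : ∀ i' j', B i' j' = M (i.succAbove i') (j0.succAbove j') := fun _ _ => rfl
    obtain ⟨T, hTcard, hT⟩ := minor_S M B i.succAbove j0.succAbove
      Fin.succAbove_right_injective hB S hS
    have hbd := IH m (Nat.lt_succ_self m) B e he (fun i' j' => hent _ _)
      (fun i' => le_trans (minor_row_le M B _ _ Fin.succAbove_right_injective hB i') (hrow _))
      ⟨T, le_trans hTcard hScard, hT⟩
    calc |M i j0| * |B.det| ≤ 1 * ((2:ℝ) ^ (((m:ℝ) + e)/3)) :=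
          mul_le_mul (habs1 i j0) hbd (abs_nonneg _) zero_le_one
      _ = (2:ℝ) ^ (((m:ℝ) + e)/3) := one_mul _
      _ ≤ _ := rpow2_mono (by push_cast; linarith)
  push_neg at h1
  have hr2 : ∀ i, (univ.filter fun j => M i j ≠ 0).card = 2 := by
    intro i
    have := hrow i
    have := h1 i
    omega
  -- Case: a column with at most one nonzero
  by_cases hc1 : ∃ j, (univ.filter fun i => M i j ≠ 0).card ≤ 1
  · obtain ⟨j, hj1⟩ := hc1
    rcases Nat.le_one_iff_eq_zero_or_eq_one.mp hj1 with h0 | hone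
    · -- zero column
      have : ∀ i, M i j = 0 := by
        intro i
        by_contra h
        have : i ∈ (univ.filter fun i => M i j ≠ 0) := by simp [h]
        rw [Finset.card_eq_zero.mp h0] at this
        exact absurd this (notMem_empty i)
      rw [Matrix.det_eq_zero_of_column_eq_zero j this, abs_zero]
      exact (rpow2_pos _).le
    · obtain ⟨i0, hi0⟩ := Finset.card_eq_one.mp hone
      have hz0 : ∀ i', i' ≠ i0 → M i' j = 0 := by
        intro i' hne'
        by_contra h
        have : i' ∈ (univ.filter fun i => M i j ≠ 0) := by simp [h]
        rw [hi0] at this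
        exact hne' (mem_singleton.mp this)
      rw [abs_det_col_single M i0 j hz0]
      set B := M.submatrix i0.succAbove j.succAbove with hBdef
      have hB : ∀ i' j', B i' j' = M (i0.succAbove i') (j.succAbove j') := fun _ _ => rfl
      obtain ⟨T, hTcard, hT⟩ := minor_S M B i0.succAbove j.succAbove
        Fin.succAbove_right_injective hB S hS
      have hbd := IH m (Nat.lt_succ_self m) B e he (fun i' j' => hent _ _)
        (fun i' => le_trans (minor_row_le M B _ _ Fin.succAbove_right_injective hB i') (hrow _))
        ⟨T, le_trans hTcard hScard, hT⟩
      calc |M i0 j| * |B.det| ≤ 1 * ((2:ℝ) ^ (((m:ℝ) + e)/3)) :=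
            mul_le_mul (habs1 i0 j) hbd (abs_nonneg _) zero_le_one
        _ = (2:ℝ) ^ (((m:ℝ) + e)/3) := one_mul _
        _ ≤ _ := rpow2_mono (by push_cast; linarith)
  push_neg at hc1
  -- now every column has exactly two nonzeros
  have hc2 : ∀ j, (univ.filter fun i => M i j ≠ 0).card = 2 := by
    have hsum : (∑ j, (univ.filter fun i => M i j ≠ 0).card)
        = (∑ i, (univ.filter fun j => M i j ≠ 0).card) := by
      simp_rw [Finset.card_filter]
      exact Finset.sum_comm
    intro j
    by_contra hne
    have h3 : 3 ≤ (univ.filter fun i => M i j ≠ 0).card := by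
      have := hc1 j; omega
    have hlt : (∑ j : Fin (m+1), 2) < ∑ j, (univ.filter fun i => M i j ≠ 0).card :=
      Finset.sum_lt_sum (fun j _ => hc1 j) ⟨j, mem_univ j, by omega⟩
    rw [hsum] at hlt
    simp only [Finset.sum_const, card_univ, Fintype.card_fin, smul_eq_mul] at hlt
    rw [Finset.sum_congr rfl (fun i _ => hr2 i)] at hlt
    simp at hlt
  -- every row and column has exactly two nonzero entries
  rcases m with _ | m
  · have h2 := hr2 0
    have : (univ.filter fun j => M 0 j ≠ 0).card ≤ 1 :=
      le_trans (Finset.card_filter_le _ _) (by simp)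
    omega
  -- choose the (possibly) exceptional row s
  obtain ⟨s, hs⟩ : ∃ s : Fin (m+2), ∀ i, i ≠ s → ∀ j, M i j = 0 ∨ M i j = 1 := by
    rcases S.eq_empty_or_nonempty with rfl | ⟨s, hsS⟩
    · exact ⟨0, fun i _ j => hS i (notMem_empty i) j⟩
    · refine ⟨s, fun i hi j => hS i (fun hiS => hi ?_) j⟩
      exact Finset.card_le_one.mp (le_trans hScard he) i hiS s hsS
  -- row s has exactly two nonzeros, at columns a and b
  obtain ⟨a, b, hab, hfs⟩ := Finset.card_eq_two.mp (hr2 s)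
  have hsa : M s a ≠ 0 := by
    have : a ∈ ({a,b} : Finset _) := by simp
    rw [← hfs] at this; exact (mem_filter.mp this).2
  have hsb : M s b ≠ 0 := by
    have : b ∈ ({a,b} : Finset _) := by simp
    rw [← hfs] at this; exact (mem_filter.mp this).2
  have hs0 : ∀ j, j ≠ a → j ≠ b → M s j = 0 := by
    intro j h1' h2'
    by_contra h
    have : j ∈ ({a,b} : Finset _) := by rw [← hfs]; simp [h]
    simp [h1', h2'] at this
  have hu : M s a = 1 ∨ M s a = -1 := by rcases hent s a with h | h | h <;> tauto
  have hv : M s b = 1 ∨ M s b = -1 := by rcases hent s b with h | h | h <;> tauto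
  have huu : M s a * M s a = 1 := by rcases hu with h | h <;> rw [h] <;> norm_num
  have hau : |M s a| = 1 := by rcases hu with h | h <;> rw [h] <;> norm_num
  -- column a has exactly two nonzeros, at rows s and r
  have hsa' : s ∈ univ.filter (fun i => M i a ≠ 0) := by simp [hsa]
  obtain ⟨r, hsr, hca⟩ := pair_of_card_two (hc2 a) hsa'
  have hrs : r ≠ s := hsr.symm
  have hra : M r a ≠ 0 := by
    have : r ∈ ({s,r} : Finset _) := by simp
    rw [← hca] at this; exact (mem_filter.mp this).2
  have hca0 : ∀ i, i ≠ s → i ≠ r → M i a = 0 := by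
    intro i h1' h2'
    by_contra h
    have : i ∈ ({s,r} : Finset _) := by rw [← hca]; simp [h]
    simp [h1', h2'] at this
  have hra1 : M r a = 1 := (hs r hrs a).resolve_left hra
  -- row r has exactly two nonzeros, at columns a and c
  have hra' : a ∈ univ.filter (fun j => M r j ≠ 0) := by simp [hra]
  obtain ⟨c, hac, hfr⟩ := pair_of_card_two (hr2 r) hra'
  have hrc : M r c ≠ 0 := by
    have : c ∈ ({a,c} : Finset _) := by simp
    rw [← hfr] at this; exact (mem_filter.mp this).2
  have hrc1 : M r c = 1 := (hs r hrs c).resolve_left hrc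
  have hr0 : ∀ j, j ≠ a → j ≠ c → M r j = 0 := by
    intro j h1' h2'
    by_contra h
    have : j ∈ ({a,c} : Finset _) := by rw [← hfr]; simp [h]
    simp [h1', h2'] at this
  -- degenerate case: rows s and r proportional
  by_cases hdeg : c = b ∧ M s a = M s b
  · obtain ⟨hcb, huv⟩ := hdeg
    subst hcb
    have hdet0 : M.det = 0 := by
      rw [← Matrix.det_updateRow_add_smul_self M hsr (-(M s a))]
      apply Matrix.det_eq_zero_of_row_eq_zero s
      intro j
      rw [Matrix.updateRow_self]
      simp only [Pi.add_apply, Pi.smul_apply, smul_eq_mul]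
      by_cases hja : j = a
      · subst hja; rw [hra1]; ring
      by_cases hjc : j = c
      · subst hjc; rw [hrc1, ← huv]; ring
      · rw [hs0 j hja hjc, hr0 j hja hjc]; ring
    rw [hdet0, abs_zero]
    exact (rpow2_pos _).le
  -- the row operation: subtract (M s a) times row s from row r
  set N := M.updateRow r (M r + (-(M s a)) • M s) with hNdef
  have hdetN : N.det = M.det := Matrix.det_updateRow_add_smul_self M hrs (-(M s a))
  have hNr : ∀ j, N r j = M r j - M s a * M s j := by
    intro j
    rw [hNdef, Matrix.updateRow_self]
    simp only [Pi.add_apply, Pi.smul_apply, smul_eq_mul]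
    ring
  have hNo : ∀ i, i ≠ r → ∀ j, N i j = M i j := by
    intro i hi j
    rw [hNdef, Matrix.updateRow_ne hi]
  -- column a of N is zero except at row s
  have hNcol : ∀ i, i ≠ s → N i a = 0 := by
    intro i hi
    by_cases hir : i = r
    · subst hir; rw [hNr, hra1, huu]; ring
    · rw [hNo i hir]; exact hca0 i hi hir
  have hNsa : N s a = M s a := hNo s hsr a
  rw [← hdetN, abs_det_col_single N s a hNcol, hNsa, hau, one_mul]
  obtain ⟨b', hb'⟩ := Fin.exists_succAbove_eq (show b ≠ a from hab.symm)
  obtain ⟨r', hr'⟩ := Fin.exists_succAbove_eq (show r ≠ s from hrs)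
  by_cases hcb : c = b
  · -- row r of N has a single nonzero entry, equal to 2, at column b
    have huv : M s a ≠ M s b := fun h => hdeg ⟨hcb, h⟩
    subst hcb
    have huvm : M s a * M s c = -1 := by
      rcases hu with h | h <;> rcases hv with h' | h' <;>
        first
        | (exact absurd (h.trans h'.symm) huv)
        | (rw [h, h']; norm_num)
    have e1 : e = 1 := by
      have hneg : M s a = -1 ∨ M s c = -1 := by
        rcases hu with h | h
        · rcases hv with h' | h'
          · exact absurd (h.trans h'.symm) huv
          · exact Or.inr h'
        · exact Or.inl h
      have hsS : s ∈ S := by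
        by_contra h
        rcases hneg with h' | h'
        · rcases hS s h a with h'' | h'' <;> rw [h''] at h' <;> norm_num at h'
        · rcases hS s h c with h'' | h'' <;> rw [h''] at h' <;> norm_num at h'
      have : 1 ≤ S.card := Finset.card_pos.mpr ⟨s, hsS⟩
      omega
    have hBr : ∀ j', j' ≠ b' →
        (N.submatrix s.succAbove a.succAbove) r' j' = 0 := by
      intro j' hj'
      show N (s.succAbove r') (a.succAbove j') = 0
      rw [hr', hNr]
      have hj0a : a.succAbove j' ≠ a := Fin.succAbove_ne a j'
      have hj0b : a.succAbove j' ≠ c := by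
        intro h
        exact hj' (Fin.succAbove_right_injective (h.trans hb'.symm))
      rw [hr0 _ hj0a hj0b, hs0 _ hj0a hj0b]
      ring
    have hBrb : (N.submatrix s.succAbove a.succAbove) r' b' = 2 := by
      show N (s.succAbove r') (a.succAbove b') = 2
      rw [hr', hb', hNr, hrc1, huvm]
      norm_num
    rw [abs_det_row_single (N.submatrix s.succAbove a.succAbove) r' b' hBr, hBrb]
    set C := (N.submatrix s.succAbove a.succAbove).submatrix r'.succAbove b'.succAbove with hCdef
    have hC : ∀ i'' j'', C i'' j'' =
        M (s.succAbove (r'.succAbove i'')) (a.succAbove (b'.succAbove j'')) := by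
      intro i'' j''
      show N (s.succAbove (r'.succAbove i'')) (a.succAbove (b'.succAbove j'')) = _
      rw [hNo]
      intro h
      rw [← hr'] at h
      exact Fin.succAbove_ne r' i'' (Fin.succAbove_right_injective h)
    have hC01 : ∀ i'' j'', C i'' j'' = 0 ∨ C i'' j'' = 1 := by
      intro i'' j''
      rw [hC]
      exact hs _ (Fin.succAbove_ne s _) _
    have hinjc : Function.Injective (fun j'' : Fin m => a.succAbove (b'.succAbove j'')) :=
      Fin.succAbove_right_injective.comp Fin.succAbove_right_injective
    have hbd := IH m (by omega) C 0 (by norm_num)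
      (fun i'' j'' => (hC01 i'' j'').imp id Or.inl)
      (fun i'' => le_trans (minor_row_le M C _ _ hinjc hC i'') (hrow _))
      ⟨∅, by simp, fun i'' _ j'' => hC01 i'' j''⟩
    rw [e1]
    have hfin : ((m:ℝ) + ((0:ℕ):ℝ))/3 + 1 ≤ (((m+1+1 : ℕ) : ℝ) + ((1:ℕ):ℝ))/3 := by
      push_cast; linarith
    calc |(2:ℝ)| * |C.det|
        = 2 * |C.det| := by norm_num
      _ ≤ 2 * (2:ℝ) ^ (((m:ℝ) + ((0:ℕ):ℝ))/3) :=
          mul_le_mul_of_nonneg_left hbd (by norm_num)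
      _ = (2:ℝ) ^ (((m:ℝ) + ((0:ℕ):ℝ))/3 + 1) := by
          rw [Real.rpow_add two_pos, Real.rpow_one]; ring
      _ ≤ _ := rpow2_mono hfin
  · -- main case A: c ≠ b, one exceptional (signed) row survives in the minor
    obtain ⟨c', hc'⟩ := Fin.exists_succAbove_eq (show c ≠ a from hac.symm)
    set B := N.submatrix s.succAbove a.succAbove with hBdef
    have hBval : ∀ j', B r' j' = N r (a.succAbove j') := by
      intro j'
      rw [← hr']
      rfl
    have hBrb' : B r' b' = -(M s a * M s b) := by
      rw [hBval, hb', hNr, hr0 b hab.symm (fun h => hcb h.symm)]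
      ring
    have hBrc' : B r' c' = 1 := by
      rw [hBval, hc', hNr, hrc1, hs0 c hac.symm hcb]
      ring
    have hBr0 : ∀ j', j' ≠ b' → j' ≠ c' → B r' j' = 0 := by
      intro j' h1' h2'
      rw [hBval, hNr]
      have hj0a : a.succAbove j' ≠ a := Fin.succAbove_ne a j'
      have hj0b : a.succAbove j' ≠ b :=
        fun h => h1' (Fin.succAbove_right_injective (h.trans hb'.symm))
      have hj0c : a.succAbove j' ≠ c :=
        fun h => h2' (Fin.succAbove_right_injective (h.trans hc'.symm))
      rw [hr0 _ hj0a hj0c, hs0 _ hj0a hj0b]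
      ring
    have hother : ∀ i', i' ≠ r' → ∀ j', B i' j' = M (s.succAbove i') (a.succAbove j') := by
      intro i' hi' j'
      show N _ _ = _
      rw [hNo]
      intro h
      rw [← hr'] at h
      exact hi' (Fin.succAbove_right_injective h)
    have hentB : ∀ i' j', B i' j' = 0 ∨ B i' j' = 1 ∨ B i' j' = -1 := by
      intro i' j'
      by_cases hi' : i' = r'
      · subst hi'
        by_cases h1' : j' = b'
        · subst h1'
          rw [hBrb']
          rcases hu with h | h <;> rcases hv with h' | h' <;> rw [h, h'] <;> norm_num
        by_cases h2' : j' = c'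
        · subst h2'; rw [hBrc']; norm_num
        · rw [hBr0 j' h1' h2']; norm_num
      · rw [hother i' hi' j']; exact hent _ _
    have hrowB : ∀ i', (univ.filter fun j' => B i' j' ≠ 0).card ≤ 2 := by
      intro i'
      by_cases hi' : i' = r'
      · rw [hi']
        have hsub : (univ.filter fun j' => B r' j' ≠ 0) ⊆ {b', c'} := by
          intro j' hj'
          simp only [mem_filter] at hj'
          by_contra hmem
          simp only [mem_insert, mem_singleton] at hmem
          push_neg at hmem
          exact hj'.2 (hBr0 j' hmem.1 hmem.2)
        exact le_trans (Finset.card_le_card hsub)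
          (le_trans (Finset.card_insert_le _ _) (by simp))
      · refine le_trans (filter_card_le_filter_card a.succAbove Fin.succAbove_right_injective
          (fun j' => B i' j' ≠ 0) (fun j0 => M (s.succAbove i') j0 ≠ 0) ?_) (hrow _)
        intro j' h
        simpa [hother i' hi' j'] using h
    have hSB : ∀ i' ∉ ({r'} : Finset (Fin (m+1))), ∀ j', B i' j' = 0 ∨ B i' j' = 1 := by
      intro i' hi' j'
      rw [hother i' (by simpa using hi') j']
      exact hs _ (Fin.succAbove_ne s i') _
    have hbd := IH (m+1) (by omega) B 1 le_rfl hentB hrowB ⟨{r'}, le_of_eq (Finset.card_singleton r'), hSB⟩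
    refine le_trans hbd (rpow2_mono ?_)
    have he0 : (0:ℝ) ≤ (e:ℝ) := by positivity
    push_cast
    linarith

end DetTwoOnesAux

/-- If `A` is an `n × n` 0/1-matrix in which every row contains at most two ones,
then `|det A| ≤ 2^(n/3)`. -/
theorem abs_det_le_of_rows_at_most_two_ones (n : ℕ) (A : Matrix (Fin n) (Fin n) ℝ)
    (h01 : ∀ i j, A i j = 0 ∨ A i j = 1)
    (hrow : ∀ i, (Finset.univ.filter fun j => A i j = 1).card ≤ 2) :
    |A.det| ≤ 2 ^ ((n : ℝ) / 3) := by
  have h := DetTwoOnesAux.key n A 0 (by norm_num)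
    (fun i j => (h01 i j).imp id Or.inl)
    (fun i => by
      have : (univ.filter fun j => A i j ≠ 0) = (univ.filter fun j => A i j = 1) := by
        apply Finset.filter_congr
        intro j _
        rcases h01 i j with h | h <;> simp [h]
      rw [this]; exact hrow i)
    ⟨∅, by simp, fun i _ j => h01 i j⟩
  simpa using h
end

section
/- Let I be an m×n matrix with all entries in {0,1} that contains exactly two ones in each row. Then det(I·Iᵀ) ≤ 2^m if m ≤ n/2, and det(I·Iᵀ) ≤ 2^((n+m)/3) if m ≥ n/2. -/
open scoped Classical
open Matrix
open Finset Real

noncomputable def bb : ℝ := (2 * Real.log 2 - 3) / 9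
noncomputable def aa : ℝ := 1 - 2 * bb
noncomputable def cc : ℝ := -aa - bb
noncomputable def rr : ℝ := 9 / (6 - 4 * Real.log 2)

lemma log2_lt : Real.log 2 < 0.6931471808 := Real.log_two_lt_d9
lemma log2_gt : (0.6931471803:ℝ) < Real.log 2 := Real.log_two_gt_d9

lemma bb_neg : bb < 0 := by
  have := log2_lt; unfold bb; nlinarith

lemma denom_pos : (0:ℝ) < 6 - 4 * Real.log 2 := by have := log2_lt; nlinarith

lemma rr_gt_one : 1 < rr := by
  have h := denom_pos; have := log2_gt
  rw [rr, lt_div_iff₀ h]; nlinarith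

lemma rr_lt_four : rr < 4 := by
  have h := denom_pos; have := log2_lt
  rw [rr, div_lt_iff₀ h]; nlinarith

noncomputable def KK (t : ℝ) : ℝ := cc + aa * t + bb * t ^ 2 - Real.log t

lemma KK_hasDeriv {t : ℝ} (ht : 0 < t) :
    HasDerivAt KK (2 * bb * (t - 1) * (t - rr) / t) t := by
  have h1 : HasDerivAt (fun t : ℝ => cc + aa * t + bb * t ^ 2) (aa + 2 * bb * t) t := by
    have : HasDerivAt (fun t : ℝ => cc + aa * t + bb * t ^ 2)
        (0 + aa * 1 + bb * (2 * t ^ 1)) t := by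
      exact (((hasDerivAt_const t cc).add ((hasDerivAt_id t).const_mul aa)).add
        ((hasDerivAt_pow 2 t).const_mul bb))
    convert this using 1
    ring
  have h2 := (h1.sub (Real.hasDerivAt_log (ne_of_gt ht)))
  refine HasDerivAt.congr_deriv (f := KK) h2 ?_
  have hd := denom_pos
  have hbr : 2 * bb * rr = -1 := by
    have hd' := hd.ne'
    have hx : (2 * ((2 * Real.log 2 - 3) / 9)) * (9 / (6 - 4 * Real.log 2))
        = (4 * Real.log 2 - 6) / (6 - 4 * Real.log 2) := by ring
    rw [bb, rr, hx, div_eq_iff hd']; ring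
  have har : aa = -(2 * bb) * (1 + rr) := by
    have : aa = 1 - 2*bb := rfl
    rw [this]; nlinarith [hbr]
  have ht' := ht.ne'
  field_simp
  nlinarith [hbr, har]

lemma KK_one : KK 1 = 0 := by simp [KK, cc]; ring

lemma KK_four : KK 4 = 0 := by
  have h4 : Real.log 4 = 2 * Real.log 2 := by
    rw [show (4:ℝ) = 2^(2:ℕ) by norm_num, Real.log_pow]; push_cast; ring
  simp [KK, cc, aa, bb, h4]; ring

lemma KK_contOn {s : Set ℝ} (hs : s ⊆ Set.Ioi 0) : ContinuousOn KK s := by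
  intro x hx
  exact ((KK_hasDeriv (hs hx)).continuousAt).continuousWithinAt

lemma KK_diffOn {s : Set ℝ} (hs : s ⊆ Set.Ioi 0) : DifferentiableOn ℝ KK s := by
  intro x hx
  exact ((KK_hasDeriv (hs hx)).differentiableAt).differentiableWithinAt

lemma KK_nonneg {t : ℝ} (h0 : 0 < t) (h4 : t ≤ 4) : 0 ≤ KK t := by
  have hb := bb_neg
  have hr1 := rr_gt_one
  have hr4 := rr_lt_four
  rcases le_or_gt t 1 with hle | hgt
  · -- antitone on [t,1]
    have hsub : Set.Icc t 1 ⊆ Set.Ioi 0 := fun x hx => lt_of_lt_of_le h0 hx.1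
    have hanti : AntitoneOn KK (Set.Icc t 1) := by
      apply antitoneOn_of_deriv_nonpos (convex_Icc t 1) (KK_contOn hsub)
      · exact KK_diffOn (fun x hx => (interior_subset.trans hsub) hx)
      · intro x hx
        rw [interior_Icc] at hx
        have hx0 : 0 < x := lt_trans h0 hx.1
        rw [(KK_hasDeriv hx0).deriv]
        apply div_nonpos_of_nonpos_of_nonneg _ (le_of_lt hx0)
        nlinarith [mul_pos_of_neg_of_neg (show x - 1 < 0 by linarith [hx.2]) (show x - rr < 0 by nlinarith [hx.2]), hb]
    have := hanti (Set.mem_Icc.2 ⟨le_refl t, hle⟩) (Set.mem_Icc.2 ⟨hle, le_refl 1⟩) hle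
    rw [KK_one] at this; linarith
  · rcases le_or_gt t rr with hler | hgtr
    · have hsub : Set.Icc 1 t ⊆ Set.Ioi 0 := fun x hx => lt_of_lt_of_le one_pos hx.1
      have hmono : MonotoneOn KK (Set.Icc 1 t) := by
        apply monotoneOn_of_deriv_nonneg (convex_Icc 1 t) (KK_contOn hsub)
        · exact KK_diffOn (fun x hx => (interior_subset.trans hsub) hx)
        · intro x hx
          rw [interior_Icc] at hx
          have hx0 : 0 < x := lt_trans one_pos hx.1
          rw [(KK_hasDeriv hx0).deriv]
          apply div_nonneg _ (le_of_lt hx0)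
          nlinarith [mul_neg_of_pos_of_neg (show 0 < x - 1 by linarith [hx.1]) (show x - rr < 0 by nlinarith [hx.2, hler]), hb]
      have := hmono (Set.mem_Icc.2 ⟨le_refl 1, le_of_lt hgt⟩)
        (Set.mem_Icc.2 ⟨le_of_lt hgt, le_refl t⟩) (le_of_lt hgt)
      rw [KK_one] at this; linarith
    · have hsub : Set.Icc t 4 ⊆ Set.Ioi 0 := fun x hx => lt_of_lt_of_le h0 hx.1
      have hanti : AntitoneOn KK (Set.Icc t 4) := by
        apply antitoneOn_of_deriv_nonpos (convex_Icc t 4) (KK_contOn hsub)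
        · exact KK_diffOn (fun x hx => (interior_subset.trans hsub) hx)
        · intro x hx
          rw [interior_Icc] at hx
          have hx0 : 0 < x := lt_trans h0 hx.1
          rw [(KK_hasDeriv hx0).deriv]
          apply div_nonpos_of_nonpos_of_nonneg _ (le_of_lt hx0)
          nlinarith [mul_pos (show 0 < x - 1 by nlinarith [hx.1, hgtr]) (show 0 < x - rr by nlinarith [hx.1, hgtr]), hb]
      have := hanti (Set.mem_Icc.2 ⟨le_refl t, h4⟩) (Set.mem_Icc.2 ⟨h4, le_refl 4⟩) h4
      rw [KK_four] at this; linarith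

lemma key_ineq {t : ℝ} (h0 : 0 ≤ t) (h4 : t ≤ 4) :
    t ≤ Real.exp (cc + aa * t + bb * t ^ 2) := by
  rcases eq_or_lt_of_le h0 with h | h
  · exact le_of_lt (h ▸ Real.exp_pos _)
  · have := KK_nonneg h h4
    have hlog : Real.log t ≤ cc + aa * t + bb * t ^ 2 := by unfold KK at this; linarith
    calc t = Real.exp (Real.log t) := (Real.exp_log h).symm
    _ ≤ _ := Real.exp_le_exp.2 hlog

variable {m n : ℕ}

lemma gram_posSemidef {k : ℕ} (A : Matrix (Fin k) (Fin n) ℝ) : (A * Aᵀ).PosSemidef := by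
  have := Matrix.posSemidef_self_mul_conjTranspose A
  rwa [Matrix.conjTranspose_eq_transpose_of_trivial] at this

lemma gram_det_nonneg {k : ℕ} (A : Matrix (Fin k) (Fin n) ℝ) : 0 ≤ (A * Aᵀ).det := by
  have h := gram_posSemidef A
  rw [h.1.det_eq_prod_eigenvalues]
  apply Finset.prod_nonneg
  intro i _
  exact h.eigenvalues_nonneg i

-- kernel extension: if the reduced Gram is singular, so is the full one
lemma gram_det_zero_step (I : Matrix (Fin (m+1)) (Fin n) ℝ)
    (h : ((I.submatrix Fin.castSucc id) * (I.submatrix Fin.castSucc id)ᵀ).det = 0) :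
    (I * Iᵀ).det = 0 := by
  set I' := I.submatrix Fin.castSucc id with hI'
  obtain ⟨x, hx0, hx⟩ := (Matrix.exists_mulVec_eq_zero_iff).mpr h
  have hker : I'ᵀ *ᵥ x = 0 := by
    have h1 : x ⬝ᵥ ((I' * I'ᵀ) *ᵥ x) = 0 := by rw [hx, dotProduct_zero]
    have h2 : x ⬝ᵥ ((I' * I'ᵀ) *ᵥ x) = (I'ᵀ *ᵥ x) ⬝ᵥ (I'ᵀ *ᵥ x) := by
      rw [← Matrix.mulVec_mulVec, Matrix.dotProduct_mulVec, ← Matrix.mulVec_transpose]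
    rw [h2] at h1
    exact dotProduct_self_eq_zero.mp h1
  set y : Fin (m+1) → ℝ := Fin.snoc x 0 with hy
  have hy0 : y ≠ 0 := by
    intro hcon
    apply hx0
    funext i
    have := congrFun hcon (Fin.castSucc i)
    simpa [hy, Fin.snoc_castSucc] using this
  have hyk : Iᵀ *ᵥ y = 0 := by
    funext j
    have : (Iᵀ *ᵥ y) j = ∑ i : Fin (m+1), I i j * y i := by
      simp [Matrix.mulVec, dotProduct, Matrix.transpose_apply, mul_comm]
    rw [this, Fin.sum_univ_castSucc]
    simp [hy, Fin.snoc_castSucc, Fin.snoc_last]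
    have := congrFun hker j
    simpa [Matrix.mulVec, dotProduct, hI', Matrix.transpose_apply,
      Matrix.submatrix_apply, mul_comm] using this
  rw [← Matrix.exists_mulVec_eq_zero_iff]
  refine ⟨y, hy0, ?_⟩
  rw [← Matrix.mulVec_mulVec, hyk, Matrix.mulVec_zero]

lemma dot_shift {a b : ℕ} (A : Matrix (Fin a) (Fin b) ℝ) (x : Fin b → ℝ) (y : Fin a → ℝ) :
    (A *ᵥ x) ⬝ᵥ y = x ⬝ᵥ (Aᵀ *ᵥ y) := by
  rw [Matrix.dotProduct_mulVec, ← Matrix.mulVec_transpose, Matrix.transpose_transpose]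

lemma dotProduct_self_nonneg' {k : ℕ} (v : Fin k → ℝ) : 0 ≤ v ⬝ᵥ v :=
  Finset.sum_nonneg fun i _ => mul_self_nonneg (v i)

-- projection lemmas, stated for a general matrix A (the reduced matrix) and vector r
lemma proj_facts {m n : ℕ} (A : Matrix (Fin m) (Fin n) ℝ) (r : Fin n → ℝ)
    (hu : IsUnit (A * Aᵀ).det) :
    0 ≤ (A *ᵥ r) ⬝ᵥ ((A * Aᵀ)⁻¹ *ᵥ (A *ᵥ r)) ∧
    (∀ i₀ : Fin m, A i₀ ⬝ᵥ A i₀ = 2 → r ⬝ᵥ A i₀ = 1 →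
      1/2 ≤ (A *ᵥ r) ⬝ᵥ ((A * Aᵀ)⁻¹ *ᵥ (A *ᵥ r))) := by
  classical
  have hGs : (A * Aᵀ)ᵀ = A * Aᵀ := by rw [Matrix.transpose_mul, Matrix.transpose_transpose]
  have hGis : ((A * Aᵀ)⁻¹)ᵀ = (A * Aᵀ)⁻¹ := by rw [Matrix.transpose_nonsing_inv, hGs]
  set G : Matrix (Fin m) (Fin m) ℝ := A * Aᵀ with hG
  set P : Matrix (Fin n) (Fin n) ℝ := Aᵀ * G⁻¹ * A with hP
  have hPt : Pᵀ = P := by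
    rw [hP, Matrix.transpose_mul, Matrix.transpose_mul, Matrix.transpose_transpose, hGis,
      Matrix.mul_assoc]
  have hPIt : P * Aᵀ = Aᵀ := by
    rw [hP, Matrix.mul_assoc, Matrix.mul_assoc, ← hG,
      Matrix.nonsing_inv_mul _ hu, Matrix.mul_one]
  have hPP : P * P = P := by
    rw [hP, Matrix.mul_assoc, Matrix.mul_assoc, Matrix.mul_assoc,
      ← Matrix.mul_assoc A Aᵀ, ← hG, ← Matrix.mul_assoc G,
      Matrix.mul_nonsing_inv _ hu, Matrix.one_mul]
  set w : Fin n → ℝ := P *ᵥ r with hw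
  set q : ℝ := (A *ᵥ r) ⬝ᵥ (G⁻¹ *ᵥ (A *ᵥ r)) with hq
  have hqr : q = r ⬝ᵥ (P *ᵥ r) := by
    rw [hq, dot_shift, Matrix.mulVec_mulVec, Matrix.mulVec_mulVec, hP, Matrix.mul_assoc]
  have hwq : w ⬝ᵥ w = q := by
    rw [hw, dot_shift, hPt, Matrix.mulVec_mulVec, hPP, hqr]
  constructor
  · rw [← hwq]; exact dotProduct_self_nonneg' w
  · intro i₀ hu2 hru
    set u : Fin n → ℝ := A i₀ with hu'
    have husingle : u = Aᵀ *ᵥ Pi.single i₀ 1 := by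
      funext j
      simp [hu', Matrix.mulVec, dotProduct, Matrix.transpose_apply, Pi.single_apply]
    have hPu : P *ᵥ u = u := by
      rw [husingle, Matrix.mulVec_mulVec, hPIt]
    have hwu : w ⬝ᵥ u = 1 := by
      rw [hw, dot_shift, hPt, hPu]
      exact hru
    have hcs := Finset.sum_mul_sq_le_sq_mul_sq Finset.univ w u
    have h1 : (∑ i, w i * u i) = 1 := hwu
    have h2 : (∑ i, w i ^ 2) = q := by
      rw [← hwq]; simp [dotProduct, pow_two]
    have h3 : (∑ i, u i ^ 2) = 2 := by
      rw [← hu2]; simp [hu', dotProduct, pow_two]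
    rw [h1, h2, h3] at hcs
    nlinarith

lemma gram_det_step_formula {m n : ℕ} (I : Matrix (Fin (m+1)) (Fin n) ℝ)
    (hr : I (Fin.last m) ⬝ᵥ I (Fin.last m) = 2)
    (hu : IsUnit ((I.submatrix Fin.castSucc id) * (I.submatrix Fin.castSucc id)ᵀ).det) :
    (I * Iᵀ).det = ((I.submatrix Fin.castSucc id) * (I.submatrix Fin.castSucc id)ᵀ).det *
      (2 - ((I.submatrix Fin.castSucc id) *ᵥ I (Fin.last m)) ⬝ᵥ
        (((I.submatrix Fin.castSucc id) * (I.submatrix Fin.castSucc id)ᵀ)⁻¹ *ᵥ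
          ((I.submatrix Fin.castSucc id) *ᵥ I (Fin.last m)))) := by
  classical
  set A : Matrix (Fin m) (Fin n) ℝ := I.submatrix Fin.castSucc id with hA
  set G : Matrix (Fin m) (Fin m) ℝ := A * Aᵀ with hG
  set v : Fin m → ℝ := A *ᵥ I (Fin.last m) with hv
  set e : Fin m ⊕ Fin 1 ≃ Fin (m+1) := finSumFinEquiv with he
  have hdet : (I * Iᵀ).det = ((I * Iᵀ).submatrix e e).det :=
    (Matrix.det_submatrix_equiv_self e _).symm
  have hlast : ∀ i : Fin 1, e (Sum.inr i) = Fin.last m := by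
    intro i
    rw [Subsingleton.elim i (0 : Fin 1)]
    rw [he]
    simp [finSumFinEquiv]
    ext
    simp
  have hcast : ∀ i : Fin m, e (Sum.inl i) = Fin.castSucc i := by
    intro i; rw [he]; simp [finSumFinEquiv]; rfl
  have hblock : (I * Iᵀ).submatrix e e =
      Matrix.fromBlocks G (Matrix.of fun i (_ : Fin 1) => v i) (Matrix.of fun (_ : Fin 1) i => v i)
        (Matrix.of fun _ _ => 2) := by
    ext i j
    rcases i with i | i
    · rcases j with j | j
      · simp only [Matrix.submatrix_apply, hcast, Matrix.fromBlocks_apply₁₁, hG, hA,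
          Matrix.mul_apply, Matrix.transpose_apply, Matrix.submatrix_apply, id]
      · simp only [Matrix.submatrix_apply, hcast, hlast, Matrix.fromBlocks_apply₁₂, Matrix.of_apply, hv, hA,
          Matrix.mul_apply, Matrix.transpose_apply, Matrix.mulVec, dotProduct,
          Matrix.submatrix_apply, id]
    · rcases j with j | j
      · simp only [Matrix.submatrix_apply, hcast, hlast, Matrix.fromBlocks_apply₂₁, Matrix.of_apply, hv, hA,
          Matrix.mul_apply, Matrix.transpose_apply, Matrix.mulVec, dotProduct,
          Matrix.submatrix_apply, id]
        exact Finset.sum_congr rfl fun x _ => mul_comm _ _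
      · simp only [Matrix.submatrix_apply, hlast, Matrix.fromBlocks_apply₂₂, Matrix.of_apply]
        exact hr
  have : Invertible G := Matrix.invertibleOfIsUnitDet _ hu
  rw [hdet, hblock, Matrix.det_fromBlocks₁₁]
  congr 1
  rw [Matrix.det_fin_one, Matrix.invOf_eq_nonsing_inv]
  simp only [Matrix.sub_apply, Matrix.of_apply, Matrix.mul_apply, dotProduct, Matrix.mulVec,
    dotProduct, Finset.mul_sum, Finset.sum_mul]
  congr 1
  rw [Finset.sum_comm]
  exact Finset.sum_congr rfl fun i _ => Finset.sum_congr rfl fun j _ => by ring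

lemma step_le_two {m n : ℕ} (I : Matrix (Fin (m+1)) (Fin n) ℝ)
    (hr : I (Fin.last m) ⬝ᵥ I (Fin.last m) = 2) :
    (I * Iᵀ).det ≤ 2 * ((I.submatrix Fin.castSucc id) * (I.submatrix Fin.castSucc id)ᵀ).det := by
  by_cases hu : IsUnit ((I.submatrix Fin.castSucc id) * (I.submatrix Fin.castSucc id)ᵀ).det
  · have hq := (proj_facts (I.submatrix Fin.castSucc id) (I (Fin.last m)) hu).1
    have hd := gram_det_nonneg (I.submatrix Fin.castSucc id)
    rw [gram_det_step_formula I hr hu]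
    nlinarith
  · have h0 : ((I.submatrix Fin.castSucc id) * (I.submatrix Fin.castSucc id)ᵀ).det = 0 := by
      by_contra h; exact hu (isUnit_iff_ne_zero.mpr h)
    rw [gram_det_zero_step I h0, h0]
    norm_num

lemma step_le_threehalf {m n : ℕ} (I : Matrix (Fin (m+1)) (Fin n) ℝ)
    (hr : I (Fin.last m) ⬝ᵥ I (Fin.last m) = 2)
    (hex : ∃ i₀ : Fin m, (I.submatrix Fin.castSucc id) i₀ ⬝ᵥ (I.submatrix Fin.castSucc id) i₀ = 2 ∧
      I (Fin.last m) ⬝ᵥ (I.submatrix Fin.castSucc id) i₀ = 1) :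
    (I * Iᵀ).det ≤ (3/2) * ((I.submatrix Fin.castSucc id) * (I.submatrix Fin.castSucc id)ᵀ).det := by
  by_cases hu : IsUnit ((I.submatrix Fin.castSucc id) * (I.submatrix Fin.castSucc id)ᵀ).det
  · obtain ⟨i₀, h2, h1⟩ := hex
    have hq := (proj_facts (I.submatrix Fin.castSucc id) (I (Fin.last m)) hu).2 i₀ h2 h1
    have hd := gram_det_nonneg (I.submatrix Fin.castSucc id)
    rw [gram_det_step_formula I hr hu]
    nlinarith
  · have h0 : ((I.submatrix Fin.castSucc id) * (I.submatrix Fin.castSucc id)ᵀ).det = 0 := by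
      by_contra h; exact hu (isUnit_iff_ne_zero.mpr h)
    rw [gram_det_zero_step I h0, h0]
    norm_num

lemma dot01 {n : ℕ} (f g : Fin n → ℝ) (hf : ∀ j, f j = 0 ∨ f j = 1)
    (hg : ∀ j, g j = 0 ∨ g j = 1) :
    f ⬝ᵥ g = ((Finset.univ.filter fun j => f j = 1 ∧ g j = 1).card : ℝ) := by
  classical
  rw [dotProduct]
  rw [Finset.card_filter]
  push_cast
  apply Finset.sum_congr rfl
  intro j _
  rcases hf j with h | h <;> rcases hg j with h' | h' <;> simp [h, h']

lemma row_dot_self {n : ℕ} (f : Fin n → ℝ) (h01 : ∀ j, f j = 0 ∨ f j = 1)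
    (h2 : (Finset.univ.filter fun j => f j = 1).card = 2) : f ⬝ᵥ f = 2 := by
  classical
  rw [dot01 f f h01 h01]
  simp only [and_self]
  rw [h2]; norm_num

lemma part1_aux : ∀ m n : ℕ, ∀ I : Matrix (Fin m) (Fin n) ℝ,
    (∀ i, I i ⬝ᵥ I i = 2) → (I * Iᵀ).det ≤ 2 ^ m := by
  intro m
  induction m with
  | zero => intro n I _; rw [Matrix.det_fin_zero]; norm_num
  | succ M ih =>
    intro n I hrows
    have h1 : (I * Iᵀ).det ≤ 2 * ((I.submatrix Fin.castSucc id) * (I.submatrix Fin.castSucc id)ᵀ).det :=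
      step_le_two I (hrows _)
    have h2 := ih n (I.submatrix Fin.castSucc id) (fun i => hrows _)
    calc (I * Iᵀ).det ≤ 2 * _ := h1
    _ ≤ 2 * 2 ^ M := by linarith
    _ = 2 ^ (M + 1) := by ring

-- generic 0/1 sum
lemma sum01 {k : ℕ} (f : Fin k → ℝ) (hf : ∀ i, f i = 0 ∨ f i = 1) :
    ∑ i, f i = ((Finset.univ.filter fun i => f i = 1).card : ℝ) := by
  classical
  rw [Finset.card_filter]
  push_cast
  apply Finset.sum_congr rfl
  intro i _
  rcases hf i with h | h <;> simp [h]

lemma gram_entry {m n : ℕ} (I : Matrix (Fin m) (Fin n) ℝ) (i i' : Fin m) :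
    (I * Iᵀ) i i' = I i ⬝ᵥ I i' := by
  simp [Matrix.mul_apply, dotProduct, Matrix.transpose_apply]

lemma det_zero_dup {m n : ℕ} (I : Matrix (Fin m) (Fin n) ℝ) {i i' : Fin m}
    (hne : i ≠ i') (heq : I i = I i') : (I * Iᵀ).det = 0 := by
  apply Matrix.det_zero_of_row_eq hne
  funext j
  simp [Matrix.mul_apply, heq]

lemma perm_gram {m n : ℕ} (I : Matrix (Fin m) (Fin n) ℝ) (ρ : Equiv.Perm (Fin m))
    (σ : Equiv.Perm (Fin n)) :
    (I.submatrix ρ σ) * (I.submatrix ρ σ)ᵀ = (I * Iᵀ).submatrix ρ ρ := by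
  ext i i'
  simp only [Matrix.mul_apply, Matrix.submatrix_apply, Matrix.transpose_apply]
  exact Equiv.sum_comp σ (fun j => I (ρ i) j * I (ρ i') j)

lemma perm_det {m n : ℕ} (I : Matrix (Fin m) (Fin n) ℝ) (ρ : Equiv.Perm (Fin m))
    (σ : Equiv.Perm (Fin n)) :
    ((I.submatrix ρ σ) * (I.submatrix ρ σ)ᵀ).det = (I * Iᵀ).det := by
  rw [perm_gram, Matrix.det_submatrix_equiv_self]

lemma filter_card_comp {n : ℕ} (σ : Equiv.Perm (Fin n)) (p : Fin n → Prop) [DecidablePred p] :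
    (Finset.univ.filter fun j => p (σ j)).card = (Finset.univ.filter p).card := by
  apply Finset.card_bij' (fun j _ => σ j) (fun j _ => σ.symm j)
  · intro a ha; simp at ha ⊢; exact ha
  · intro a ha; simp at ha ⊢; simpa using ha
  · intro a ha; simp
  · intro a ha; simp

lemma filter_card_castSucc {N : ℕ} (f : Fin (N+1) → ℝ) (hl : f (Fin.last N) ≠ 1) :
    (Finset.univ.filter fun j : Fin N => f j.castSucc = 1).card
      = (Finset.univ.filter fun j => f j = 1).card := by
  classical
  rw [Finset.card_filter, Finset.card_filter, Fin.sum_univ_castSucc]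
  simp [hl]

lemma gram_drop_last {M N : ℕ} (A : Matrix (Fin M) (Fin (N+1)) ℝ)
    (h : ∀ i, A i (Fin.last N) = 0) :
    (A.submatrix id Fin.castSucc) * (A.submatrix id Fin.castSucc)ᵀ = A * Aᵀ := by
  ext i i'
  simp only [Matrix.mul_apply, Matrix.submatrix_apply, Matrix.transpose_apply, id]
  rw [Fin.sum_univ_castSucc]
  simp [h]

lemma inter_card_le_one {m n : ℕ} (I : Matrix (Fin m) (Fin n) ℝ)
    (h01 : ∀ i j, I i j = 0 ∨ I i j = 1)
    (hrow : ∀ i, (Finset.univ.filter fun j => I i j = 1).card = 2)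
    (hnodup : ∀ i i', i ≠ i' → I i ≠ I i') {i i' : Fin m} (hne : i ≠ i') :
    (Finset.univ.filter fun j => I i j = 1 ∧ I i' j = 1).card ≤ 1 := by
  classical
  by_contra hc
  push_neg at hc
  have h2 : 2 ≤ (Finset.univ.filter fun j => I i j = 1 ∧ I i' j = 1).card := hc
  have hsub1 : (Finset.univ.filter fun j => I i j = 1 ∧ I i' j = 1) ⊆
      (Finset.univ.filter fun j => I i j = 1) := by
    intro a ha; simp at ha ⊢; exact ha.1
  have hsub2 : (Finset.univ.filter fun j => I i j = 1 ∧ I i' j = 1) ⊆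
      (Finset.univ.filter fun j => I i' j = 1) := by
    intro a ha; simp at ha ⊢; exact ha.2
  have he1 := Finset.eq_of_subset_of_card_le hsub1 (by rw [hrow i]; exact h2)
  have he2 := Finset.eq_of_subset_of_card_le hsub2 (by rw [hrow i']; exact h2)
  apply hnodup i i' hne
  funext j
  by_cases h : I i j = 1
  · have hj : j ∈ (Finset.univ.filter fun j => I i j = 1) := by simp [h]
    rw [← he1, he2] at hj
    simp at hj
    rw [h, hj]
  · have h0 : I i j = 0 := (h01 i j).resolve_right h
    have hj : j ∉ (Finset.univ.filter fun j => I i' j = 1) := by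
      rw [← he2, he1]; simp [h]
    simp at hj
    have h0' : I i' j = 0 := (h01 i' j).resolve_right hj
    rw [h0, h0']

lemma quad_bound {m : ℕ} (G : Matrix (Fin m) (Fin m) ℝ)
    (hsym : ∀ i j, G i j = G j i) (hnn : ∀ i j, 0 ≤ G i j)
    (hrs : ∀ i, ∑ j, G i j = 4) (x : Fin m → ℝ) :
    x ⬝ᵥ (G *ᵥ x) ≤ 4 * (x ⬝ᵥ x) := by
  have hexp : x ⬝ᵥ (G *ᵥ x) = ∑ i, ∑ j, G i j * x i * x j := by
    simp only [dotProduct, Matrix.mulVec, Finset.mul_sum]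
    apply Finset.sum_congr rfl; intro i _
    apply Finset.sum_congr rfl; intro j _
    ring
  rw [hexp]
  have step1 : ∑ i, ∑ j, G i j * x i * x j ≤ ∑ i, ∑ j, G i j * (x i ^ 2 + x j ^ 2) / 2 := by
    apply Finset.sum_le_sum; intro i _
    apply Finset.sum_le_sum; intro j _
    nlinarith [hnn i j, sq_nonneg (x i - x j)]
  have step2 : ∑ i, ∑ j, G i j * (x i ^ 2 + x j ^ 2) / 2
      = (∑ i, ∑ j, G i j * x i ^ 2 + ∑ i, ∑ j, G i j * x j ^ 2) / 2 := by
    rw [← Finset.sum_add_distrib, Finset.sum_div]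
    apply Finset.sum_congr rfl; intro i _
    rw [← Finset.sum_add_distrib, ← Finset.sum_div]
    congr 1
    apply Finset.sum_congr rfl; intro j _
    ring
  have step3 : ∑ i, ∑ j, G i j * x j ^ 2 = ∑ i, ∑ j, G i j * x i ^ 2 := by
    rw [Finset.sum_comm]
    apply Finset.sum_congr rfl; intro i _
    apply Finset.sum_congr rfl; intro j _
    rw [hsym]
  have step4 : ∑ i, ∑ j, G i j * x i ^ 2 = 4 * (x ⬝ᵥ x) := by
    simp only [dotProduct, Finset.mul_sum]
    apply Finset.sum_congr rfl; intro i _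
    rw [← Finset.sum_mul, hrs]
    ring
  calc ∑ i, ∑ j, G i j * x i * x j ≤ _ := step1
    _ = _ := step2
    _ = 4 * (x ⬝ᵥ x) := by rw [step3, step4]; ring

lemma detG_le_spectral {m : ℕ} (G : Matrix (Fin m) (Fin m) ℝ) (hpsd : G.PosSemidef)
    (h4 : ∀ x : Fin m → ℝ, x ⬝ᵥ (G *ᵥ x) ≤ 4 * (x ⬝ᵥ x))
    (htr : G.trace = 2 * m) (htr2 : (G * G).trace = 6 * m) :
    G.det ≤ Real.exp (m * (2/3 * Real.log 2)) := by
  classical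
  have hherm : G.IsHermitian := hpsd.1
  set t : Fin m → ℝ := hherm.eigenvalues with ht
  set U := hherm.eigenvectorUnitary with hU
  set D : Matrix (Fin m) (Fin m) ℝ := Matrix.diagonal t with hD
  have hofReal : (RCLike.ofReal ∘ t : Fin m → ℝ) = t := by
    funext i; simp
  have hspec : G = (U : Matrix (Fin m) (Fin m) ℝ) * D * star (U : Matrix (Fin m) (Fin m) ℝ) := by
    have := hherm.spectral_theorem
    rwa [hofReal] at this
  have hsUU : star (U : Matrix (Fin m) (Fin m) ℝ) * (U : Matrix (Fin m) (Fin m) ℝ) = 1 :=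
    Unitary.coe_star_mul_self U
  -- sum of eigenvalues = trace
  have hsum : ∑ i, t i = 2 * m := by
    have h1 : G.trace = ((U : Matrix (Fin m) (Fin m) ℝ) * D * star (U : Matrix (Fin m) (Fin m) ℝ)).trace := by rw [← hspec]
    rw [Matrix.trace_mul_cycle, hsUU, Matrix.one_mul, Matrix.trace_diagonal] at h1
    rw [← h1, htr]
  -- sum of squares = trace of square
  have hGG : G * G = (U : Matrix (Fin m) (Fin m) ℝ) * (D * D) * star (U : Matrix (Fin m) (Fin m) ℝ) := by
    rw [hspec]
    simp only [Matrix.mul_assoc]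
    rw [← Matrix.mul_assoc (star (U : Matrix (Fin m) (Fin m) ℝ)) (U : Matrix (Fin m) (Fin m) ℝ),
      hsUU, Matrix.one_mul]
  have hsum2 : ∑ i, t i ^ 2 = 6 * m := by
    have h1 : (G * G).trace = ((U : Matrix (Fin m) (Fin m) ℝ) * (D * D) * star (U : Matrix (Fin m) (Fin m) ℝ)).trace := by rw [← hGG]
    rw [Matrix.trace_mul_cycle, hsUU, Matrix.one_mul] at h1
    rw [hD, Matrix.diagonal_mul_diagonal, Matrix.trace_diagonal] at h1
    rw [← htr2, h1]
    exact Finset.sum_congr rfl fun i _ => pow_two (t i)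
  -- eigenvalue bounds
  have htnn : ∀ i, 0 ≤ t i := fun i => hpsd.eigenvalues_nonneg i
  have ht4 : ∀ i, t i ≤ 4 := by
    intro i
    by_contra hlt
    push_neg at hlt
    set v : Fin m → ℝ := ⇑(hherm.eigenvectorBasis i) with hv
    have hv0 : v ≠ 0 := by
      have := hherm.eigenvectorBasis.orthonormal.ne_zero i
      intro hc
      apply this
      apply PiLp.ext
      intro j
      exact congrFun hc j
    have hvv : 0 < v ⬝ᵥ v := by
      rcases lt_or_eq_of_le (dotProduct_self_nonneg' v) with h | h
      · exact h
      · exact absurd (dotProduct_self_eq_zero.mp h.symm) hv0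
    have hev : G *ᵥ v = t i • v := hherm.mulVec_eigenvectorBasis i
    have hq := h4 v
    rw [hev] at hq
    simp only [dotProduct_smul, smul_eq_mul] at hq
    nlinarith
  -- assemble
  have hdet : G.det = ∏ i, t i := by
    have := hherm.det_eq_prod_eigenvalues
    simpa using this
  rw [hdet]
  calc ∏ i, t i ≤ ∏ i, Real.exp (cc + aa * t i + bb * t i ^ 2) := by
        apply Finset.prod_le_prod (fun i _ => htnn i)
        intro i _
        exact key_ineq (htnn i) (ht4 i)
    _ = Real.exp (∑ i, (cc + aa * t i + bb * t i ^ 2)) := by rw [Real.exp_sum]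
    _ = Real.exp (m * cc + aa * (2*m) + bb * (6*m)) := by
        rw [Finset.sum_add_distrib, Finset.sum_add_distrib, ← Finset.mul_sum, ← Finset.mul_sum,
          hsum, hsum2]
        simp [Finset.sum_const, mul_comm]
    _ = Real.exp (m * (2/3 * Real.log 2)) := by
        congr 1
        rw [cc, aa, bb]; ring

lemma threehalf_le_rpow : (3/2 : ℝ) ≤ 2 ^ (2/3 : ℝ) := by
  have hb : (0:ℝ) ≤ 2 ^ (2/3 : ℝ) := le_of_lt (Real.rpow_pos_of_pos two_pos _)
  have hcube : ((2:ℝ) ^ (2/3 : ℝ)) ^ (3:ℕ) = 4 := by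
    rw [← Real.rpow_natCast ((2:ℝ) ^ (2/3 : ℝ)) 3, ← Real.rpow_mul (by norm_num)]
    norm_num
  set p : ℝ := 2 ^ (2/3 : ℝ) with hp
  have hp3 : p ^ (3:ℕ) = 4 := hcube
  nlinarith [sq_nonneg (p - 3/2), sq_nonneg (p + 3/2), sq_nonneg p, hb]

lemma bound_mul_threehalf {x : ℝ} (N M : ℕ) (hx : x ≤ 2 ^ (((N:ℝ) + (M:ℝ))/3)) :
    (3/2) * x ≤ 2 ^ ((((N:ℝ)+1) + ((M:ℝ)+1))/3) := by
  have hsplit : ((((N:ℝ)+1) + ((M:ℝ)+1))/3) = ((N:ℝ) + (M:ℝ))/3 + 2/3 := by ring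
  rw [hsplit, Real.rpow_add two_pos]
  have h1 : (0:ℝ) ≤ 2 ^ (((N:ℝ) + (M:ℝ))/3) := le_of_lt (Real.rpow_pos_of_pos two_pos _)
  nlinarith [threehalf_le_rpow, h1]

lemma bound_mul_two {x : ℝ} (N M : ℕ) (hx : x ≤ 2 ^ (((N:ℝ) + (M:ℝ))/3)) :
    2 * x ≤ 2 ^ ((((N:ℝ)+2) + ((M:ℝ)+1))/3) := by
  have hsplit : ((((N:ℝ)+2) + ((M:ℝ)+1))/3) = ((N:ℝ) + (M:ℝ))/3 + 1 := by ring
  rw [hsplit, Real.rpow_add two_pos, Real.rpow_one]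
  nlinarith


lemma det_zero_low_support (M n : ℕ) (I : Matrix (Fin (M+1)) (Fin n) ℝ)
    (h01 : ∀ i j, I i j = 0 ∨ I i j = 1)
    (S : Finset (Fin n))
    (hSdef : S = Finset.univ.filter (fun j => (Finset.univ.filter fun i => I i j = 1).card ≠ 0))
    (hlow : S.card < M+1) :
    (I * Iᵀ).det = 0 := by
  classical
  set f : Fin (M+1) → (↥S → ℝ) := fun i => fun j => I i j.1 with hf
  have hnli : ¬ LinearIndependent ℝ f := by
    intro hli
    have hcard := hli.fintype_card_le_finrank
    rw [Module.finrank_fintype_fun_eq_card] at hcard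
    rw [Fintype.card_fin, Fintype.card_coe] at hcard
    omega
  obtain ⟨c, hc0, i, hi⟩ := Fintype.not_linearIndependent_iff.mp hnli
  have hzero_col : ∀ j, j ∉ S → ∀ i', I i' j = 0 := by
    intro j hj i'
    rw [hSdef, Finset.mem_filter] at hj
    simp only [Finset.mem_univ, true_and, not_not] at hj
    rw [Finset.card_eq_zero] at hj
    rcases h01 i' j with h | h
    · exact h
    · exfalso
      have : i' ∈ Finset.univ.filter (fun i => I i j = 1) := by simp [h]
      rw [hj] at this
      exact absurd this (Finset.notMem_empty i')
  have hvm : c ᵥ* I = 0 := by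
    funext j
    by_cases hjS : j ∈ S
    · have hcomp := congrFun hc0 (⟨j, hjS⟩ : ↥S)
      rw [Finset.sum_apply] at hcomp
      simp only [hf, Pi.smul_apply, smul_eq_mul] at hcomp
      show (∑ i', c i' * I i' j) = 0
      simpa using hcomp
    · show (∑ i', c i' * I i' j) = 0
      apply Finset.sum_eq_zero
      intro i' _
      rw [hzero_col j hjS i', mul_zero]
  have hzero : c ᵥ* (I * Iᵀ) = 0 := by
    rw [← Matrix.vecMul_vecMul, hvm, Matrix.zero_vecMul]
  have hcne : c ≠ 0 := fun h => hi (by rw [h]; rfl)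
  exact (Matrix.exists_vecMul_eq_zero_iff).mp ⟨c, hcne, hzero⟩

lemma caseC2_bound (M n : ℕ) (I : Matrix (Fin (M+1)) (Fin n) ℝ)
    (h01 : ∀ i j, I i j = 0 ∨ I i j = 1)
    (hrow : ∀ i, (Finset.univ.filter fun j => I i j = 1).card = 2)
    (hnodup : ∀ i i', i ≠ i' → I i ≠ I i')
    (hdeg1 : ¬ ∃ j₀, (Finset.univ.filter fun i => I i j₀ = 1).card = 1)
    (hlow : ¬ ((Finset.univ.filter fun j : Fin n =>
        (Finset.univ.filter fun i => I i j = 1).card ≠ 0).card < M+1)) :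
    (I * Iᵀ).det ≤ (2:ℝ) ^ (((n:ℝ) + ((M:ℝ)+1))/3) := by
  classical
  push_neg at hdeg1
  set deg : Fin n → ℕ := fun j => (Finset.univ.filter fun i => I i j = 1).card with hdeg
  set S : Finset (Fin n) := Finset.univ.filter (fun j => deg j ≠ 0) with hS
  -- double counting
  have hdouble : ∑ j, deg j = 2 * (M+1) := by
    simp only [hdeg, Finset.card_filter]
    rw [Finset.sum_comm]
    have hthis : ∀ i : Fin (M+1), (∑ j, if I i j = 1 then 1 else 0) = 2 := fun i => by
      rw [← Finset.card_filter]; exact hrow i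
    rw [Finset.sum_congr rfl (fun i _ => hthis i)]
    simp [Finset.sum_const, Fintype.card_fin, mul_comm]
  have hS2 : ∀ j ∈ S, 2 ≤ deg j := by
    intro j hj
    rw [hS, Finset.mem_filter] at hj
    have h1 : deg j ≠ 1 := by simpa [hdeg] using hdeg1 j
    have h2 : deg j ≠ 0 := hj.2
    omega
  have hSsum : ∑ j ∈ S, deg j = 2 * (M+1) := by
    rw [← hdouble]
    symm
    rw [← Finset.sum_filter_add_sum_filter_not Finset.univ (fun j => deg j ≠ 0)]
    have : ∑ j ∈ Finset.univ.filter (fun j => ¬ deg j ≠ 0), deg j = 0 := by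
      apply Finset.sum_eq_zero
      intro j hj
      simp at hj
      exact hj
    rw [← hS] at *
    omega
  have hScard : S.card = M + 1 := by
    have h1 : 2 * S.card ≤ 2 * (M+1) := by
      calc 2 * S.card = ∑ _j ∈ S, 2 := by simp [Finset.sum_const, mul_comm]
      _ ≤ ∑ j ∈ S, deg j := Finset.sum_le_sum hS2
      _ = 2 * (M+1) := hSsum
    have h3 : S.card ≤ M + 1 := by omega
    have h4 : M + 1 ≤ S.card := by omega
    omega
  -- all nonzero degrees are exactly 2
  have hdeg2 : ∀ j ∈ S, deg j = 2 := by
    by_contra hcon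
    push_neg at hcon
    obtain ⟨j', hj'S, hj'⟩ := hcon
    have hlt : 2 < deg j' := lt_of_le_of_ne (hS2 j' hj'S) (Ne.symm hj')
    have := Finset.sum_lt_sum hS2 ⟨j', hj'S, hlt⟩
    rw [hSsum] at this
    have hconst : ∑ _j ∈ S, 2 = 2 * (M+1) := by
      simp [Finset.sum_const, hScard, mul_comm]
    omega
  -- column sums
  have hcol2 : ∀ (a : Fin (M+1)) (j : Fin n), I a j * (∑ b, I b j) = I a j * 2 := by
    intro a j
    rcases h01 a j with h | h
    · rw [h, zero_mul, zero_mul]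
    · have hjS : j ∈ S := by
        rw [hS, Finset.mem_filter]
        refine ⟨Finset.mem_univ _, ?_⟩
        have : a ∈ Finset.univ.filter (fun i => I i j = 1) := by simp [h]
        exact Finset.card_ne_zero_of_mem this
      have hcol : (∑ b, I b j) = 2 := by
        rw [sum01 (fun b => I b j) (fun b => h01 b j)]
        have hdj := hdeg2 j hjS
        have h22 : (Finset.univ.filter (fun i => I i j = 1)).card = 2 := by
          simpa [hdeg] using hdj
        rw [h22]
        norm_num
      rw [hcol]
  -- Gram matrix facts
  have hGsym : ∀ a b : Fin (M+1), (I * Iᵀ) a b = (I * Iᵀ) b a := by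
    intro a b
    rw [gram_entry, gram_entry, dotProduct_comm]
  have hGdiag : ∀ a, (I * Iᵀ) a a = 2 := by
    intro a
    rw [gram_entry]
    exact row_dot_self _ (h01 a) (hrow a)
  have hGnn : ∀ a b, 0 ≤ (I * Iᵀ) a b := by
    intro a b
    rw [gram_entry, dot01 _ _ (h01 a) (h01 b)]
    positivity
  have hG01off : ∀ a b, a ≠ b → (I * Iᵀ) a b = 0 ∨ (I * Iᵀ) a b = 1 := by
    intro a b hab
    rw [gram_entry, dot01 _ _ (h01 a) (h01 b)]
    have := inter_card_le_one I h01 hrow hnodup hab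
    interval_cases h : (Finset.univ.filter fun j => I a j = 1 ∧ I b j = 1).card
    · left; norm_num
    · right; norm_num
  have hGrowsum : ∀ a, ∑ b, (I * Iᵀ) a b = 4 := by
    intro a
    have hexp : ∑ b, (I * Iᵀ) a b = ∑ j, I a j * (∑ b, I b j) := by
      simp only [gram_entry, dotProduct]
      rw [Finset.sum_comm]
      apply Finset.sum_congr rfl
      intro j _
      rw [Finset.mul_sum]
    rw [hexp]
    have : ∑ j, I a j * (∑ b, I b j) = ∑ j, I a j * 2 :=
      Finset.sum_congr rfl (fun j _ => hcol2 a j)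
    rw [this, ← Finset.sum_mul, sum01 _ (h01 a), hrow a]
    norm_num
  -- traces
  have htr : (I * Iᵀ).trace = 2 * ((M:ℝ)+1) := by
    rw [Matrix.trace]
    have : ∀ a, (I * Iᵀ).diag a = 2 := fun a => hGdiag a
    rw [Finset.sum_congr rfl (fun a _ => this a)]
    simp [Finset.sum_const, Fintype.card_fin]
    push_cast
    try ring
  have htr2 : ((I * Iᵀ) * (I * Iᵀ)).trace = 6 * ((M:ℝ)+1) := by
    have hsq : ∀ a, ∑ b, (I * Iᵀ) a b * (I * Iᵀ) b a = 6 := by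
      intro a
      have h1 : ∀ b, (I * Iᵀ) a b * (I * Iᵀ) b a = (I * Iᵀ) a b * (I * Iᵀ) a b := fun b => by
        rw [hGsym b a]
      rw [Finset.sum_congr rfl (fun b _ => h1 b)]
      have h2 : ∑ b, ((I * Iᵀ) a b * (I * Iᵀ) a b - (I * Iᵀ) a b) = 2 := by
        rw [Finset.sum_eq_single a]
        · rw [hGdiag]; norm_num
        · intro b _ hb
          rcases hG01off a b (Ne.symm hb) with h | h <;> rw [h] <;> ring
        · intro h; exact absurd (Finset.mem_univ a) h
      have h3 : ∑ b, (I * Iᵀ) a b * (I * Iᵀ) a b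
          = ∑ b, ((I * Iᵀ) a b * (I * Iᵀ) a b - (I * Iᵀ) a b) + ∑ b, (I * Iᵀ) a b := by
        rw [← Finset.sum_add_distrib]
        apply Finset.sum_congr rfl
        intro b _
        ring
      rw [h3, h2, hGrowsum]
      norm_num
    rw [Matrix.trace]
    have : ∀ a, ((I * Iᵀ) * (I * Iᵀ)).diag a = 6 := by
      intro a
      show ((I * Iᵀ) * (I * Iᵀ)) a a = 6
      rw [Matrix.mul_apply]
      exact hsq a
    rw [Finset.sum_congr rfl (fun a _ => this a)]
    simp [Finset.sum_const, Fintype.card_fin]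
    push_cast
    try ring
  -- spectral bound
  have hspec := detG_le_spectral (I * Iᵀ) (gram_posSemidef I)
    (quad_bound (I * Iᵀ) hGsym hGnn hGrowsum) (by push_cast; exact htr) (by push_cast; exact htr2)
  have hexp_eq : Real.exp (((M:ℝ)+1) * (2/3 * Real.log 2)) = (2:ℝ) ^ ((2*((M:ℝ)+1))/3) := by
    rw [Real.rpow_def_of_pos two_pos]
    congr 1
    ring
  have hmono : (2:ℝ) ^ ((2*((M:ℝ)+1))/3) ≤ (2:ℝ) ^ (((n:ℝ) + ((M:ℝ)+1))/3) := by
    apply Real.rpow_le_rpow_of_exponent_le one_le_two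
    have hn : (M:ℝ) + 1 ≤ n := by
      have h2 : S.card ≤ n := by
        have := Finset.card_le_univ S
        simpa [Fintype.card_fin] using this
      rw [hScard] at h2
      exact_mod_cast h2
    linarith
  calc (I * Iᵀ).det ≤ Real.exp (((M:ℝ)+1) * (2/3 * Real.log 2)) := by
        have h := hspec
        push_cast at h
        exact h
    _ = _ := hexp_eq
    _ ≤ _ := hmono

lemma caseB_bound (M n : ℕ)
    (ih : ∀ (n : ℕ) (I : Matrix (Fin M) (Fin n) ℝ),
      (∀ i j, I i j = 0 ∨ I i j = 1) →
      (∀ i, (Finset.univ.filter fun j => I i j = 1).card = 2) →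
      (I * Iᵀ).det ≤ (2:ℝ) ^ (((n:ℝ) + (M:ℝ))/3))
    (I : Matrix (Fin (M+1)) (Fin n) ℝ)
    (h01 : ∀ i j, I i j = 0 ∨ I i j = 1)
    (hrow : ∀ i, (Finset.univ.filter fun j => I i j = 1).card = 2)
    (hnodup : ∀ i i', i ≠ i' → I i ≠ I i')
    (j₀ : Fin n)
    (hj₀ : (Finset.univ.filter fun i => I i j₀ = 1).card = 1) :
    (I * Iᵀ).det ≤ (2:ℝ) ^ (((n:ℝ) + ((M:ℝ)+1))/3) := by
  classical
  obtain ⟨i, hi_eq⟩ := Finset.card_eq_one.mp hj₀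
  have hIij₀ : I i j₀ = 1 := by
    have : i ∈ Finset.univ.filter (fun i' => I i' j₀ = 1) := by
      rw [hi_eq]; exact Finset.mem_singleton_self i
    simpa using this
  have huniq : ∀ i', I i' j₀ = 1 → i' = i := by
    intro i' h
    have : i' ∈ Finset.univ.filter (fun i'' => I i'' j₀ = 1) := by simp [h]
    rw [hi_eq] at this
    simpa using this
  have hzero_col : ∀ i', i' ≠ i → I i' j₀ = 0 := by
    intro i' hne
    rcases h01 i' j₀ with h | h
    · exact h
    · exact absurd (huniq i' h) hne
  obtain ⟨k, hkj₀, hIik⟩ : ∃ k, k ≠ j₀ ∧ I i k = 1 := by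
    by_contra h
    push_neg at h
    have hsub : Finset.univ.filter (fun j => I i j = 1) ⊆ {j₀} := by
      intro x hx
      simp only [Finset.mem_filter, Finset.mem_univ, true_and] at hx
      simp only [Finset.mem_singleton]
      by_contra hne
      exact h x hne hx
    have := Finset.card_le_card hsub
    rw [hrow i] at this
    simp at this
  have hn2 : 2 ≤ n := by
    by_contra h
    push_neg at h
    have h1 := j₀.isLt
    have h2 := k.isLt
    exact hkj₀ (Fin.ext (by omega))
  by_cases hdegk : ∃ i', i' ≠ i ∧ I i' k = 1
  · -- B1 : k has degree ≥ 2
    obtain ⟨i', hi'ne, hi'k⟩ := hdegk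
    obtain ⟨N, rfl⟩ : ∃ N, n = N + 1 := ⟨n - 1, by omega⟩
    set ρ : Equiv.Perm (Fin (M+1)) := Equiv.swap (Fin.last M) i with hρ
    set σ : Equiv.Perm (Fin (N+1)) := Equiv.swap (Fin.last N) j₀ with hσ
    set J : Matrix (Fin (M+1)) (Fin (N+1)) ℝ := I.submatrix ρ σ with hJdef
    have hJ01 : ∀ a b, J a b = 0 ∨ J a b = 1 := fun a b => h01 _ _
    have hJrow : ∀ a, (Finset.univ.filter fun j => J a j = 1).card = 2 := by
      intro a
      calc (Finset.univ.filter fun j => J a j = 1).card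
          = (Finset.univ.filter fun j => I (ρ a) (σ j) = 1).card := rfl
        _ = (Finset.univ.filter fun j => I (ρ a) j = 1).card :=
            filter_card_comp σ (fun j => I (ρ a) j = 1)
        _ = 2 := hrow _
    have hρlast : ρ (Fin.last M) = i := Equiv.swap_apply_left _ _
    have hσlast : σ (Fin.last N) = j₀ := Equiv.swap_apply_left _ _
    have hρne : ∀ a, a ≠ Fin.last M → ρ a ≠ i := by
      intro a hne hcon
      apply hne
      apply ρ.injective
      rw [hρlast, hcon]
    have hJcol : ∀ a, a ≠ Fin.last M → J a (Fin.last N) = 0 := by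
      intro a hne
      show I (ρ a) (σ (Fin.last N)) = 0
      rw [hσlast]
      exact hzero_col _ (hρne a hne)
    set ii : Fin (M+1) := ρ.symm i' with hii
    have hρii : ρ ii = i' := Equiv.apply_symm_apply ρ i'
    have hii_ne : ii ≠ Fin.last M := by
      intro h
      apply hi'ne
      rw [← hρii, h, hρlast]
    obtain ⟨i₀, hi₀⟩ := Fin.exists_castSucc_eq.mpr hii_ne
    have hrowfun : (J.submatrix Fin.castSucc id) i₀ = J ii := by
      funext j
      rw [← hi₀]
      rfl
    have hr2 : J (Fin.last M) ⬝ᵥ J (Fin.last M) = 2 :=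
      row_dot_self _ (fun j => hJ01 _ j) (hJrow _)
    have hex : ∃ i₁ : Fin M, (J.submatrix Fin.castSucc id) i₁ ⬝ᵥ (J.submatrix Fin.castSucc id) i₁ = 2 ∧
        J (Fin.last M) ⬝ᵥ (J.submatrix Fin.castSucc id) i₁ = 1 := by
      refine ⟨i₀, ?_, ?_⟩
      · rw [hrowfun]
        exact row_dot_self _ (fun j => hJ01 _ j) (hJrow _)
      · rw [hrowfun]
        rw [dot01 _ _ (fun j => hJ01 _ j) (fun j => hJ01 _ j)]
        have hcard : (Finset.univ.filter fun j => J (Fin.last M) j = 1 ∧ J ii j = 1).card = 1 := by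
          have h1 : (Finset.univ.filter fun j => J (Fin.last M) j = 1 ∧ J ii j = 1)
              = (Finset.univ.filter fun j => I i (σ j) = 1 ∧ I i' (σ j) = 1) := by
            apply Finset.filter_congr
            intro j _
            show (J (Fin.last M) j = 1 ∧ J ii j = 1) ↔ _
            rw [show J (Fin.last M) j = I i (σ j) from by rw [hJdef, Matrix.submatrix_apply, hρlast],
              show J ii j = I i' (σ j) from by rw [hJdef, Matrix.submatrix_apply, hρii]]
          rw [h1, filter_card_comp σ (fun j => I i j = 1 ∧ I i' j = 1)]
          have hle := inter_card_le_one I h01 hrow hnodup (Ne.symm hi'ne)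
          have hge : 0 < (Finset.univ.filter fun j => I i j = 1 ∧ I i' j = 1).card :=
            Finset.card_pos.mpr ⟨k, by simp [hIik, hi'k]⟩
          omega
        rw [hcard]
        norm_num
    have hstep := step_le_threehalf J hr2 hex
    have hJ'col : ∀ aa : Fin M, (J.submatrix Fin.castSucc (id : Fin (N+1) → Fin (N+1))) aa (Fin.last N) = 0 :=
      fun aa => hJcol _ (Fin.castSucc_lt_last aa).ne
    have hgram := gram_drop_last (J.submatrix Fin.castSucc id) hJ'col
    set I₂ : Matrix (Fin M) (Fin N) ℝ := (J.submatrix Fin.castSucc id).submatrix id Fin.castSucc with hI₂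
    have hI₂01 : ∀ a b, I₂ a b = 0 ∨ I₂ a b = 1 := fun a b => h01 _ _
    have hI₂row : ∀ aa, (Finset.univ.filter fun j : Fin N => I₂ aa j = 1).card = 2 := by
      intro aa
      have hl : J (Fin.castSucc aa) (Fin.last N) ≠ 1 := by
        rw [hJcol _ (Fin.castSucc_lt_last aa).ne]
        norm_num
      calc (Finset.univ.filter fun j : Fin N => I₂ aa j = 1).card
          = (Finset.univ.filter fun j : Fin N => J (Fin.castSucc aa) (Fin.castSucc j) = 1).card := rfl
        _ = (Finset.univ.filter fun j : Fin (N+1) => J (Fin.castSucc aa) j = 1).card :=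
            filter_card_castSucc (fun j => J (Fin.castSucc aa) j) hl
        _ = 2 := hJrow _
    have hIH := ih N I₂ hI₂01 hI₂row
    have hdet_eq : (J * Jᵀ).det = (I * Iᵀ).det := perm_det I ρ σ
    have hgram_det : ((J.submatrix Fin.castSucc id) * (J.submatrix Fin.castSucc id)ᵀ).det
        = (I₂ * I₂ᵀ).det := by rw [hI₂, hgram]
    push_cast
    calc (I * Iᵀ).det = (J * Jᵀ).det := hdet_eq.symm
      _ ≤ (3/2) * ((J.submatrix Fin.castSucc id) * (J.submatrix Fin.castSucc id)ᵀ).det := hstep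
      _ = (3/2) * (I₂ * I₂ᵀ).det := by rw [hgram_det]
      _ ≤ 2 ^ ((((N:ℝ)+1) + ((M:ℝ)+1))/3) := by
          apply bound_mul_threehalf
          exact hIH
  · -- B2 : k also has degree 1 (isolated edge)
    push_neg at hdegk
    have hzero_colk : ∀ i', i' ≠ i → I i' k = 0 := by
      intro i' hne
      rcases h01 i' k with h | h
      · exact h
      · exact absurd h (hdegk i' hne)
    obtain ⟨N, rfl⟩ : ∃ N, n = N + 2 := ⟨n - 2, by omega⟩
    set ρ : Equiv.Perm (Fin (M+1)) := Equiv.swap (Fin.last M) i with hρ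
    set p₁ : Fin (N+2) := Fin.last (N+1) with hp₁
    set p₂ : Fin (N+2) := (Fin.last N).castSucc with hp₂
    have hp₂p₁ : p₂ ≠ p₁ := (Fin.castSucc_lt_last _).ne
    set σ₁ : Equiv.Perm (Fin (N+2)) := Equiv.swap p₁ j₀ with hσ₁
    set y : Fin (N+2) := σ₁.symm k with hy
    have hσ₁y : σ₁ y = k := Equiv.apply_symm_apply σ₁ k
    have hyp₁ : y ≠ p₁ := by
      intro h
      apply hkj₀
      rw [← hσ₁y, h]
      exact Equiv.swap_apply_left _ _
    set σ₂ : Equiv.Perm (Fin (N+2)) := Equiv.swap p₂ y with hσ₂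
    set σ : Equiv.Perm (Fin (N+2)) := σ₂.trans σ₁ with hσ
    have hσp₁ : σ p₁ = j₀ := by
      show σ₁ (σ₂ p₁) = j₀
      rw [hσ₂, Equiv.swap_apply_of_ne_of_ne (Ne.symm hp₂p₁) (fun h => hyp₁ h.symm)]
      exact Equiv.swap_apply_left _ _
    have hσp₂ : σ p₂ = k := by
      show σ₁ (σ₂ p₂) = k
      rw [hσ₂]
      rw [Equiv.swap_apply_left]
      exact hσ₁y
    set J : Matrix (Fin (M+1)) (Fin (N+2)) ℝ := I.submatrix ρ σ with hJdef
    have hJ01 : ∀ a b, J a b = 0 ∨ J a b = 1 := fun a b => h01 _ _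
    have hJrow : ∀ a, (Finset.univ.filter fun j => J a j = 1).card = 2 := by
      intro a
      calc (Finset.univ.filter fun j => J a j = 1).card
          = (Finset.univ.filter fun j => I (ρ a) (σ j) = 1).card := rfl
        _ = (Finset.univ.filter fun j => I (ρ a) j = 1).card :=
            filter_card_comp σ (fun j => I (ρ a) j = 1)
        _ = 2 := hrow _
    have hρlast : ρ (Fin.last M) = i := Equiv.swap_apply_left _ _
    have hρne : ∀ a, a ≠ Fin.last M → ρ a ≠ i := by
      intro a hne hcon
      apply hne
      apply ρ.injective
      rw [hρlast, hcon]
    have hJcol₁ : ∀ a, a ≠ Fin.last M → J a p₁ = 0 := by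
      intro a hne
      show I (ρ a) (σ p₁) = 0
      rw [hσp₁]
      exact hzero_col _ (hρne a hne)
    have hJcol₂ : ∀ a, a ≠ Fin.last M → J a p₂ = 0 := by
      intro a hne
      show I (ρ a) (σ p₂) = 0
      rw [hσp₂]
      exact hzero_colk _ (hρne a hne)
    have hr2 : J (Fin.last M) ⬝ᵥ J (Fin.last M) = 2 :=
      row_dot_self _ (fun j => hJ01 _ j) (hJrow _)
    have hstep := step_le_two J hr2
    -- drop the last two columns
    have hA₁col : ∀ aa : Fin M, (J.submatrix Fin.castSucc (id : Fin (N+2) → Fin (N+2))) aa (Fin.last (N+1)) = 0 :=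
      fun aa => hJcol₁ _ (Fin.castSucc_lt_last aa).ne
    have hgram1 := gram_drop_last (J.submatrix Fin.castSucc id) hA₁col
    set A₂ : Matrix (Fin M) (Fin (N+1)) ℝ := (J.submatrix Fin.castSucc id).submatrix id Fin.castSucc with hA₂
    have hA₂col : ∀ aa : Fin M, A₂ aa (Fin.last N) = 0 := by
      intro aa
      show J (Fin.castSucc aa) ((Fin.last N).castSucc) = 0
      exact hJcol₂ _ (Fin.castSucc_lt_last aa).ne
    have hgram2 := gram_drop_last A₂ hA₂col
    set I₂ : Matrix (Fin M) (Fin N) ℝ := A₂.submatrix id Fin.castSucc with hI₂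
    have hI₂01 : ∀ a b, I₂ a b = 0 ∨ I₂ a b = 1 := fun a b => h01 _ _
    have hI₂row : ∀ aa, (Finset.univ.filter fun j : Fin N => I₂ aa j = 1).card = 2 := by
      intro aa
      have hl₂ : A₂ aa (Fin.last N) ≠ 1 := by rw [hA₂col aa]; norm_num
      have hl₁ : J (Fin.castSucc aa) (Fin.last (N+1)) ≠ 1 := by
        rw [hJcol₁ _ (Fin.castSucc_lt_last aa).ne]; norm_num
      calc (Finset.univ.filter fun j : Fin N => I₂ aa j = 1).card
          = (Finset.univ.filter fun j : Fin N => A₂ aa (Fin.castSucc j) = 1).card := rfl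
        _ = (Finset.univ.filter fun j : Fin (N+1) => A₂ aa j = 1).card :=
            filter_card_castSucc (fun j => A₂ aa j) hl₂
        _ = (Finset.univ.filter fun j : Fin (N+1) => J (Fin.castSucc aa) (Fin.castSucc j) = 1).card := rfl
        _ = (Finset.univ.filter fun j : Fin (N+2) => J (Fin.castSucc aa) j = 1).card :=
            filter_card_castSucc (fun j => J (Fin.castSucc aa) j) hl₁
        _ = 2 := hJrow _
    have hIH := ih N I₂ hI₂01 hI₂row
    have hdet_eq : (J * Jᵀ).det = (I * Iᵀ).det := perm_det I ρ σ
    have hgram_det : ((J.submatrix Fin.castSucc id) * (J.submatrix Fin.castSucc id)ᵀ).det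
        = (I₂ * I₂ᵀ).det := by rw [hI₂, hgram2, hA₂, hgram1]
    push_cast
    calc (I * Iᵀ).det = (J * Jᵀ).det := hdet_eq.symm
      _ ≤ 2 * ((J.submatrix Fin.castSucc id) * (J.submatrix Fin.castSucc id)ᵀ).det := hstep
      _ = 2 * (I₂ * I₂ᵀ).det := by rw [hgram_det]
      _ ≤ 2 ^ ((((N:ℝ)+2) + ((M:ℝ)+1))/3) := by
          apply bound_mul_two
          exact hIH


theorem part2_aux : ∀ m n : ℕ, ∀ I : Matrix (Fin m) (Fin n) ℝ,
    (∀ i j, I i j = 0 ∨ I i j = 1) →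
    (∀ i, (Finset.univ.filter fun j => I i j = 1).card = 2) →
    (I * Iᵀ).det ≤ (2:ℝ) ^ (((n:ℝ) + (m:ℝ))/3) := by
  intro m
  induction m with
  | zero =>
    intro n I _ _
    rw [Matrix.det_fin_zero]
    calc (1:ℝ) = 2 ^ (0:ℝ) := (Real.rpow_zero 2).symm
    _ ≤ _ := Real.rpow_le_rpow_of_exponent_le one_le_two (by positivity)
  | succ M ih =>
    intro n I h01 hrow
    by_cases hdup : ∃ i i', i ≠ i' ∧ I i = I i'
    · obtain ⟨i, i', hne, heq⟩ := hdup
      rw [det_zero_dup I hne heq]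
      positivity
    · push_neg at hdup
      have hnodup : ∀ i i', i ≠ i' → I i ≠ I i' := fun i i' h => hdup i i' h
      by_cases hdeg1 : ∃ j₀, (Finset.univ.filter fun i => I i j₀ = 1).card = 1
      · obtain ⟨j₀, hj₀⟩ := hdeg1
        have := caseB_bound M n ih I h01 hrow hnodup j₀ hj₀
        push_cast at this ⊢
        exact this
      · by_cases hlow : ((Finset.univ.filter fun j : Fin n =>
            (Finset.univ.filter fun i => I i j = 1).card ≠ 0).card < M+1)
        · rw [det_zero_low_support M n I h01 _ rfl hlow]
          positivity
        · have := caseC2_bound M n I h01 hrow hnodup hdeg1 hlow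
          push_cast at this ⊢
          exact this

/-- If `I` is an `m × n` 0/1-matrix with exactly two ones in each row, then
`det (I ⬝ Iᵀ) ≤ 2^m` when `m ≤ n/2`, and `det (I ⬝ Iᵀ) ≤ 2^((n+m)/3)` when `m ≥ n/2`. -/
theorem det_gram_le_of_two_ones_per_row (m n : ℕ) (I : Matrix (Fin m) (Fin n) ℝ)
    (h01 : ∀ i j, I i j = 0 ∨ I i j = 1)
    (hrow : ∀ i, (Finset.univ.filter fun j => I i j = 1).card = 2) :
    ((m : ℝ) ≤ (n : ℝ) / 2 → (I * Iᵀ).det ≤ 2 ^ m) ∧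
    ((n : ℝ) / 2 ≤ (m : ℝ) → (I * Iᵀ).det ≤ 2 ^ (((n : ℝ) + (m : ℝ)) / 3)) := by
  constructor
  · intro _
    exact part1_aux m n I (fun i => row_dot_self _ (h01 i) (hrow i))
  · intro _
    exact part2_aux m n I h01 hrow
end

section
/- If T is a tree on n ≥ 2 vertices and I ∈ {0,1}^{E(T)×V(T)} is the edge-vertex incidence matrix of T (an (n−1)×n matrix), then det(I·Iᵀ) = n, where I·Iᵀ is the (n−1)×(n−1) Gramian of the rows of I. -/
open scoped Classical
open Matrix


/-- depth of a vertex in the parent structure `p` (as a natural-number function). -/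
def treeDepth (m : ℕ) (p : Fin m → Fin (m+1)) : ℕ → ℕ
  | 0 => 0
  | (k+1) => if h : k < m then treeDepth m p (min ((p ⟨k, h⟩ : Fin (m+1)) : ℕ) k) + 1 else 0
decreasing_by omega

lemma treeDepth_succ (m : ℕ) (p : Fin m → Fin (m+1)) (i : Fin m)
    (hp : ((p i : Fin (m+1)) : ℕ) ≤ (i : ℕ)) :
    treeDepth m p ((i : ℕ) + 1) = treeDepth m p ((p i : Fin (m+1)) : ℕ) + 1 := by
  rw [treeDepth]
  rw [dif_pos i.isLt]
  simp only [Fin.eta]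
  rw [min_eq_left hp]

lemma det_gram_parent (m : ℕ) (p : Fin m → Fin (m+1))
    (hp : ∀ i, ((p i : Fin (m+1)) : ℕ) ≤ (i : ℕ))
    (A : Matrix (Fin m) (Fin (m+1)) ℝ)
    (hA : ∀ i w, A i w = (if w = Fin.succ i then (1:ℝ) else 0) + (if w = p i then 1 else 0)) :
    (A * Aᵀ).det = m + 1 := by
  have hpne : ∀ i : Fin m, p i ≠ Fin.succ i := by
    intro i h
    have := hp i
    have : ((p i : Fin (m+1)) : ℕ) = (i : ℕ) + 1 := by rw [h]; rfl
    omega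
  set ε : Fin (m+1) → ℝ := fun v => (-1 : ℝ) ^ (treeDepth m p (v : ℕ)) with hεdef
  have hε2 : ∀ v, ε v * ε v = 1 := by
    intro v
    rw [hεdef]
    simp only [← pow_add]
    exact (Even.add_self _).neg_one_pow
  have hεsucc : ∀ i : Fin m, ε (Fin.succ i) = - ε (p i) := by
    intro i
    have h1 : ((Fin.succ i : Fin (m+1)) : ℕ) = (i : ℕ) + 1 := rfl
    rw [hεdef]
    simp only [h1, treeDepth_succ m p i (hp i), pow_succ]
    ring
  have hε0 : ε 0 = 1 := by
    rw [hεdef]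
    norm_num [treeDepth]
  set B : Matrix (Fin (m+1)) (Fin (m+1)) ℝ := Matrix.of (Fin.cons ε (fun i => A i)) with hBdef
  set M : Matrix (Fin (m+1)) (Fin (m+1)) ℝ := Matrix.of (Fin.cons (fun _ => (1:ℝ))
    (fun i w => (if w = Fin.succ i then (1:ℝ) else 0) - (if w = p i then 1 else 0))) with hMdef
  set s : Fin (m+1) → ℝ := Fin.cons 1 (fun i => ε (Fin.succ i)) with hsdef
  -- B * diagonal ε = diagonal s * M
  have hBD : B * Matrix.diagonal ε = Matrix.diagonal s * M := by
    ext r w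
    rw [Matrix.mul_diagonal, Matrix.diagonal_mul]
    induction r using Fin.cases with
    | zero => simp [hBdef, hMdef, hsdef, hε2]
    | succ i =>
      simp only [hBdef, hMdef, hsdef, Matrix.of_apply, Fin.cons_succ, hA]
      rcases eq_or_ne w (Fin.succ i) with h | h
      · subst h
        have h2 : ¬(Fin.succ i = p i) := fun hh => hpne i hh.symm
        simp only [if_pos rfl, if_neg h2]
        ring
      · simp only [if_neg h]
        rcases eq_or_ne w (p i) with h2 | h2
        · subst h2
          simp only [if_pos rfl, hεsucc]
          ring
        · simp only [if_neg h2]; ring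
  -- the elementary matrix E
  set E : Matrix (Fin (m+1)) (Fin (m+1)) ℝ :=
    Matrix.updateCol (1 : Matrix (Fin (m+1)) (Fin (m+1)) ℝ) 0 (fun _ => (1:ℝ)) with hEdef
  have hEapply : ∀ i j, E i j = if j = 0 then (1:ℝ) else if i = j then 1 else 0 := by
    intro i j
    rcases eq_or_ne j 0 with h | h
    · subst h; simp [hEdef, Matrix.updateCol_self]
    · rw [hEdef, Matrix.updateCol_ne h, if_neg h, Matrix.one_apply]
  have hEtri : E.BlockTriangular OrderDual.toDual := by
    intro i j hij
    have hij' : i < j := hij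
    have hj0 : j ≠ 0 := fun h => by subst h; exact absurd hij' (Fin.not_lt_zero i)
    rw [hEapply, if_neg hj0, if_neg (ne_of_lt hij')]
  have hEdet : E.det = 1 := by
    rw [Matrix.det_of_lowerTriangular E hEtri]
    rw [Finset.prod_congr rfl (fun i _ => ?_), Finset.prod_const_one]
    rw [hEapply]
    split <;> simp
  -- entries of M * E
  have hME0 : ∀ i : Fin m, (M * E) (Fin.succ i) 0 = 0 := by
    intro i
    rw [Matrix.mul_apply]
    simp only [hEapply, if_pos rfl, mul_one]
    simp [hMdef, Finset.sum_sub_distrib]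
  have hME00 : (M * E) 0 0 = (m+1 : ℝ) := by
    rw [Matrix.mul_apply]
    simp only [hEapply, if_pos rfl, mul_one]
    simp [hMdef]
  have hMEsub : ∀ i j : Fin m, (M * E) (Fin.succ i) (Fin.succ j) =
      (if j = i then (1:ℝ) else 0) - (if Fin.succ j = p i then 1 else 0) := by
    intro i j
    rw [Matrix.mul_apply]
    have : ∀ w : Fin (m+1), M (Fin.succ i) w * E w (Fin.succ j)
        = if w = Fin.succ j then M (Fin.succ i) w else 0 := by
      intro w
      rw [hEapply, if_neg (Fin.succ_ne_zero j)]
      by_cases h : w = Fin.succ j <;> simp [h]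
    rw [Finset.sum_congr rfl (fun w _ => this w), Finset.sum_ite_eq' Finset.univ]
    simp only [Finset.mem_univ, if_pos, hMdef, Matrix.of_apply, Fin.cons_succ]
    congr 1
    simp [Fin.succ_inj]
  have hdetME : (M * E).det = (m + 1 : ℝ) := by
    rw [Matrix.det_succ_column_zero]
    rw [Fin.sum_univ_succ]
    have hz : ∀ i : Fin m, ((-1:ℝ)) ^ ((Fin.succ i : Fin (m+1)) : ℕ) * (M * E) (Fin.succ i) 0 *
        ((M * E).submatrix (Fin.succAbove (Fin.succ i)) Fin.succ).det = 0 := by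
      intro i; rw [hME0]; ring
    rw [Finset.sum_congr rfl (fun i _ => hz i), Finset.sum_const_zero, add_zero]
    rw [hME00]
    have htri : ((M * E).submatrix Fin.succ Fin.succ).BlockTriangular OrderDual.toDual := by
      intro i j hij
      have hij' : i < j := hij
      rw [Matrix.submatrix_apply, hMEsub,
        if_neg (fun h => by subst h; exact lt_irrefl _ hij'),
        if_neg (fun h => by
          have h1 := hp i
          have h2 : ((Fin.succ j : Fin (m+1)) : ℕ) = (j:ℕ)+1 := rfl
          have h3 : (j:ℕ)+1 = ((p i : Fin (m+1)):ℕ) := by rw [← h2, h]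
          have h4 : (i:ℕ) < (j:ℕ) := hij'
          omega)]
      ring
    have hsub : ((M * E).submatrix (Fin.succAbove 0) Fin.succ).det = 1 := by
      rw [Fin.succAbove_zero]
      rw [Matrix.det_of_lowerTriangular _ htri]
      rw [Finset.prod_congr rfl (fun i _ => ?_), Finset.prod_const_one]
      rw [Matrix.submatrix_apply, hMEsub, if_pos rfl,
        if_neg (fun h => by
          have h1 := hp i
          have h2 : ((Fin.succ i : Fin (m+1)) : ℕ) = (i:ℕ)+1 := rfl
          omega)]
      ring
    rw [hsub]
    norm_num
  have hdetM : M.det = (m + 1 : ℝ) := by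
    have := Matrix.det_mul M E
    rw [hEdet, mul_one] at this
    rw [← this, hdetME]
  -- products of signs
  set P : ℝ := ∏ i : Fin m, ε (Fin.succ i) with hPdef
  have hP2 : P * P = 1 := by
    rw [hPdef, ← Finset.prod_mul_distrib]
    exact Finset.prod_eq_one (fun i _ => hε2 _)
  have hprodε : ∏ v : Fin (m+1), ε v = P := by
    rw [Fin.prod_univ_succ, hε0, one_mul, hPdef]
  have hprods : ∏ v : Fin (m+1), s v = P := by
    rw [Fin.prod_univ_succ, hsdef]
    simp only [Fin.cons_zero, Fin.cons_succ, one_mul]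
    rw [hPdef]
  -- det B = m + 1
  have hdetB : B.det = (m + 1 : ℝ) := by
    have h1 : B.det * P = P * (m+1 : ℝ) := by
      have := congrArg Matrix.det hBD
      rw [Matrix.det_mul, Matrix.det_mul, Matrix.det_diagonal, Matrix.det_diagonal,
        hprodε, hprods, hdetM] at this
      exact this
    calc B.det = B.det * (P * P) := by rw [hP2, mul_one]
    _ = (B.det * P) * P := by ring
    _ = (P * (m+1:ℝ)) * P := by rw [h1]
    _ = (P * P) * (m+1:ℝ) := by ring
    _ = (m+1:ℝ) := by rw [hP2, one_mul]
  -- structure of B * Bᵀ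
  have hBBT : ∀ r w, (B * Bᵀ) r w = ∑ v : Fin (m+1), B r v * B w v := by
    intro r w
    rw [Matrix.mul_apply]
    rfl
  have hdot : ∀ j : Fin m, ∑ v : Fin (m+1), ε v * A j v = 0 := by
    intro j
    have : ∀ v : Fin (m+1), ε v * A j v =
        (if v = Fin.succ j then ε v else 0) + (if v = p j then ε v else 0) := by
      intro v
      rw [hA]
      split <;> split <;> simp_all
    rw [Finset.sum_congr rfl (fun v _ => this v), Finset.sum_add_distrib,
      Finset.sum_ite_eq' Finset.univ, Finset.sum_ite_eq' Finset.univ]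
    simp [hεsucc j]
  have hB00 : (B * Bᵀ) 0 0 = (m+1 : ℝ) := by
    rw [hBBT]
    simp only [hBdef, Matrix.of_apply, Fin.cons_zero]
    rw [Finset.sum_congr rfl (fun v _ => hε2 v)]
    simp
  have hB0succ : ∀ j : Fin m, (B * Bᵀ) 0 (Fin.succ j) = 0 := by
    intro j
    rw [hBBT]
    simp only [hBdef, Matrix.of_apply, Fin.cons_zero, Fin.cons_succ]
    exact hdot j
  have hBsucc0 : ∀ i : Fin m, (B * Bᵀ) (Fin.succ i) 0 = 0 := by
    intro i
    rw [hBBT]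
    simp only [hBdef, Matrix.of_apply, Fin.cons_zero, Fin.cons_succ]
    rw [← hdot i]
    exact Finset.sum_congr rfl (fun v _ => mul_comm _ _)
  have hBsub : ∀ i j : Fin m, (B * Bᵀ) (Fin.succ i) (Fin.succ j) = (A * Aᵀ) i j := by
    intro i j
    rw [hBBT, Matrix.mul_apply]
    simp [hBdef]
  have hdetBBT : (B * Bᵀ).det = (m+1:ℝ) * (A * Aᵀ).det := by
    rw [Matrix.det_succ_column_zero, Fin.sum_univ_succ]
    have hz : ∀ i : Fin m, ((-1:ℝ)) ^ ((Fin.succ i : Fin (m+1)) : ℕ) * (B * Bᵀ) (Fin.succ i) 0 *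
        (((B * Bᵀ)).submatrix (Fin.succAbove (Fin.succ i)) Fin.succ).det = 0 := by
      intro i; rw [hBsucc0]; ring
    rw [Finset.sum_congr rfl (fun i _ => hz i), Finset.sum_const_zero, add_zero]
    rw [hB00, Fin.succAbove_zero]
    have : ((B * Bᵀ).submatrix Fin.succ Fin.succ) = A * Aᵀ := by
      ext i j; rw [Matrix.submatrix_apply, hBsub]
    rw [this]
    norm_num
  have hfinal : (m+1:ℝ) * (A * Aᵀ).det = (m+1:ℝ) * (m+1:ℝ) := by
    rw [← hdetBBT, Matrix.det_mul, Matrix.det_transpose, hdetB]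
  have hne : (m+1:ℝ) ≠ 0 := by positivity
  exact mul_left_cancel₀ hne hfinal


lemma walk_boundary {V : Type} (G : SimpleGraph V) (S : Finset V) :
    ∀ {x y : V}, G.Walk x y → x ∈ S → y ∉ S → ∃ a ∈ S, ∃ b, b ∉ S ∧ G.Adj a b := by
  intro x y w
  induction w with
  | nil => intro hx hy; exact absurd hx hy
  | @cons x v y h q ih =>
    intro hx hy
    by_cases hm : v ∈ S
    · exact ih hm hy
    · exact ⟨x, hx, v, hm, h⟩

lemma exists_boundary_adj {V : Type} [Fintype V] (G : SimpleGraph V)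
    (hG : G.Connected) (S : Finset V) (hS : S.Nonempty) (hS' : S ≠ Finset.univ) :
    ∃ a ∈ S, ∃ b, b ∉ S ∧ G.Adj a b := by
  obtain ⟨a₀, ha₀⟩ := hS
  have hb : ∃ b₀, b₀ ∉ S := by
    by_contra h
    push_neg at h
    exact hS' (Finset.eq_univ_iff_forall.mpr h)
  obtain ⟨b₀, hb₀⟩ := hb
  obtain ⟨w⟩ := hG.preconnected a₀ b₀
  exact walk_boundary G S w ha₀ hb₀

def goodList {V : Type} (G : SimpleGraph V) (l : List V) : Prop :=
  ∀ i : ℕ, ∀ hi : i < l.length, 0 < i →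
    ∃ j : ℕ, ∃ hj : j < l.length, j < i ∧ G.Adj l[i] l[j]

lemma goodList_append {V : Type} (G : SimpleGraph V) (l : List V) (a b : V)
    (ha : a ∈ l) (hadj : G.Adj b a) (h : goodList G l) : goodList G (l ++ [b]) := by
  intro i hi h0
  rw [List.length_append, List.length_singleton] at hi
  by_cases hlt : i < l.length
  · obtain ⟨j, hj, hji, hadj'⟩ := h i hlt h0
    refine ⟨j, by rw [List.length_append, List.length_singleton]; omega, hji, ?_⟩
    rw [List.getElem_append_left hlt, List.getElem_append_left hj]
    exact hadj'
  · have hieq : i = l.length := by omega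
    obtain ⟨j, hj, hja⟩ := List.mem_iff_getElem.mp ha
    refine ⟨j, by rw [List.length_append, List.length_singleton]; omega, by omega, ?_⟩
    have h1 : (l ++ [b])[i] = b := by
      subst hieq
      simp
    have h2 : (l ++ [b])[j]'(by rw [List.length_append]; omega) = a := by
      rw [List.getElem_append_left hj]
      exact hja
    rw [h1, h2]
    exact hadj

lemma exists_good_list {V : Type} [Fintype V] [DecidableEq V] (G : SimpleGraph V)
    (hG : G.Connected) :
    ∃ l : List V, l.Nodup ∧ (∀ x, x ∈ l) ∧ goodList G l := by
  obtain ⟨v₀⟩ := hG.nonempty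
  suffices h : ∀ k (l : List V), l ≠ [] → l.Nodup → goodList G l →
      Fintype.card V - l.length ≤ k →
      ∃ l' : List V, l'.Nodup ∧ (∀ x, x ∈ l') ∧ goodList G l' by
    refine h (Fintype.card V) [v₀] (by simp) (by simp) ?_ (by simp)
    intro i hi h0
    simp only [List.length_singleton] at hi
    omega
  intro k
  induction k with
  | zero =>
    intro l hne hnd hg hle
    refine ⟨l, hnd, ?_, hg⟩
    intro x
    have hcard : l.toFinset.card = l.length := List.toFinset_card_of_nodup hnd
    have : l.toFinset = Finset.univ := by
      apply Finset.eq_univ_of_card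
      rw [hcard]
      have := l.toFinset.card_le_univ
      rw [hcard] at this
      omega
    rw [← List.mem_toFinset, this]
    exact Finset.mem_univ x
  | succ k ih =>
    intro l hne hnd hg hle
    by_cases hall : ∀ x, x ∈ l
    · exact ⟨l, hnd, hall, hg⟩
    · push_neg at hall
      obtain ⟨b₀, hb₀⟩ := hall
      have hSne : l.toFinset.Nonempty := by
        obtain ⟨x, hx⟩ := List.exists_mem_of_ne_nil l hne
        exact ⟨x, List.mem_toFinset.mpr hx⟩
      have hSne' : l.toFinset ≠ Finset.univ := by
        intro h
        exact hb₀ (List.mem_toFinset.mp (h ▸ Finset.mem_univ b₀))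
      obtain ⟨a, ha, b, hb, hadj⟩ := exists_boundary_adj G hG l.toFinset hSne hSne'
      have hbl : b ∉ l := fun h => hb (List.mem_toFinset.mpr h)
      have hlen : l.length < Fintype.card V := by
        have hcard : l.toFinset.card = l.length := List.toFinset_card_of_nodup hnd
        have h1 : l.toFinset ⊂ Finset.univ := (Finset.ssubset_univ_iff).mpr hSne'
        have := Finset.card_lt_card h1
        rw [hcard, Finset.card_univ] at this
        exact this
      refine ih (l ++ [b]) (by simp) ?_ (goodList_append G l a b (List.mem_toFinset.mp ha) hadj.symm hg) ?_
      · rw [List.nodup_append]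
        exact ⟨hnd, List.nodup_singleton b, by rintro a ha c hc rfl; rw [List.mem_singleton] at hc; exact hbl (hc ▸ ha)⟩
      · rw [List.length_append, List.length_singleton]
        omega

lemma exists_enum {V : Type} [Fintype V] [DecidableEq V] (G : SimpleGraph V)
    (hG : G.Connected) (m : ℕ) (hcard : Fintype.card V = m + 1) :
    ∃ (v : Fin (m+1) → V) (p : Fin m → Fin (m+1)),
      Function.Bijective v ∧ (∀ i, ((p i : Fin (m+1)) : ℕ) ≤ (i : ℕ)) ∧
      ∀ i, G.Adj (v (Fin.succ i)) (v (p i)) := by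
  obtain ⟨l, hnd, hall, hg⟩ := exists_good_list G hG
  have hlen : l.length = m + 1 := by
    rw [← hcard]
    have hcard' : l.toFinset.card = l.length := List.toFinset_card_of_nodup hnd
    have huniv : l.toFinset = Finset.univ :=
      Finset.eq_univ_iff_forall.mpr (fun x => List.mem_toFinset.mpr (hall x))
    rw [← hcard', huniv, Finset.card_univ]
  have hgood : ∀ i : Fin m, ∃ j : ℕ, ∃ hj : j < l.length, j < (i:ℕ)+1 ∧
      G.Adj (l[(i:ℕ)+1]'(by have := i.isLt; omega)) l[j] :=
    fun i => hg ((i:ℕ)+1) (by have := i.isLt; omega) (Nat.succ_pos _)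
  choose pj hpj hplt hpadj using hgood
  refine ⟨fun i => l[(i:ℕ)]'(by have := i.isLt; omega),
    fun i => ⟨pj i, by have := hpj i; omega⟩, ⟨?_, ?_⟩, ?_, ?_⟩
  · intro a b hab
    have := (hnd.getElem_inj_iff (hi := by have := a.isLt; omega)
      (hj := by have := b.isLt; omega)).mp hab
    exact Fin.ext this
  · intro x
    obtain ⟨j, hj, hjx⟩ := List.mem_iff_getElem.mp (hall x)
    exact ⟨⟨j, by omega⟩, hjx⟩
  · intro i
    have := hplt i
    simpa using by omega
  · intro i
    exact hpadj i

/-- If `T` is a tree on `n ≥ 2` vertices and `I` is its edge-vertex incidence matrix,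
then `det (I ⬝ Iᵀ) = n`. -/
theorem det_gram_incidence_tree {V : Type} [Fintype V] [DecidableEq V] (n : ℕ)
    (T : SimpleGraph V) [DecidableRel T.Adj] (hT : T.IsTree)
    (hn : Fintype.card V = n) (h2 : 2 ≤ n)
    (I : Matrix T.edgeSet V ℝ)
    (hI : ∀ (e : T.edgeSet) (v : V), I e v = if v ∈ (e : Sym2 V) then 1 else 0) :
    (I * Iᵀ).det = n := by
  obtain ⟨m, rfl⟩ : ∃ m, n = m + 1 := ⟨n - 1, by omega⟩
  obtain ⟨v, p, hvbij, hple, hadj⟩ := exists_enum T hT.isConnected m hn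
  have hvinj := hvbij.injective
  -- the edge enumeration
  have hcardE : Fintype.card T.edgeSet = m := by
    have h1 := hT.card_edgeFinset
    rw [hn] at h1
    rw [← SimpleGraph.edgeFinset_card]
    omega
  have hpne : ∀ i : Fin m, p i ≠ Fin.succ i := by
    intro i h
    have h1 := hple i
    have h2 : ((p i : Fin (m+1)) : ℕ) = (i : ℕ) + 1 := by rw [h]; rfl
    omega
  set g : Fin m → T.edgeSet :=
    fun i => ⟨s(v (Fin.succ i), v (p i)), T.mem_edgeSet.mpr (hadj i)⟩ with hgdef
  have hginj : Function.Injective g := by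
    intro i j hij
    have h1 : s(v (Fin.succ i), v (p i)) = s(v (Fin.succ j), v (p j)) :=
      congrArg Subtype.val hij
    rw [Sym2.eq_iff] at h1
    rcases h1 with ⟨h2, _⟩ | ⟨h2, h3⟩
    · exact Fin.succ_injective m (hvinj h2)
    · exfalso
      have e1 : Fin.succ i = p j := hvinj h2
      have e2 : p i = Fin.succ j := hvinj h3
      have f1 : (i : ℕ) + 1 = ((p j : Fin (m+1)) : ℕ) := by rw [← e1]; rfl
      have f2 : ((p i : Fin (m+1)) : ℕ) = (j : ℕ) + 1 := by rw [e2]; rfl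
      have := hple i
      have := hple j
      omega
  have hgbij : Function.Bijective g :=
    (Fintype.bijective_iff_injective_and_card g).mpr ⟨hginj, by simp [hcardE]⟩
  -- the reindexed incidence matrix
  set A : Matrix (Fin m) (Fin (m+1)) ℝ := Matrix.of (fun i w => I (g i) (v w)) with hAdef
  have hA : ∀ i w, A i w = (if w = Fin.succ i then (1:ℝ) else 0) + (if w = p i then 1 else 0) := by
    intro i w
    rw [hAdef, Matrix.of_apply, hI]
    have hmem : (v w ∈ (g i : Sym2 V)) ↔ (w = Fin.succ i ∨ w = p i) := by
      rw [hgdef]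
      simp only [Sym2.mem_iff]
      constructor
      · rintro (h | h)
        · exact Or.inl (hvinj h)
        · exact Or.inr (hvinj h)
      · rintro (h | h)
        · exact Or.inl (congrArg v h)
        · exact Or.inr (congrArg v h)
    rcases eq_or_ne w (Fin.succ i) with h | h
    · subst h
      rw [if_pos (hmem.mpr (Or.inl rfl)), if_pos rfl,
        if_neg (fun hh => hpne i hh.symm)]
      norm_num
    · rcases eq_or_ne w (p i) with h2 | h2
      · subst h2
        rw [if_pos (hmem.mpr (Or.inr rfl)), if_neg h, if_pos rfl]
        norm_num
      · rw [if_neg (fun hh => by rcases hmem.mp hh with h3 | h3; exact h h3; exact h2 h3),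
          if_neg h, if_neg h2]
        norm_num
  -- relate A * Aᵀ to I * Iᵀ
  set gE : Fin m ≃ T.edgeSet := Equiv.ofBijective g hgbij with hgEdef
  have hAA : A * Aᵀ = (I * Iᵀ).submatrix gE gE := by
    ext i j
    rw [Matrix.mul_apply, Matrix.submatrix_apply, Matrix.mul_apply]
    have : ∀ w : Fin (m+1), A i w * Aᵀ w j = (fun u => I (gE i) u * Iᵀ u (gE j)) (v w) := by
      intro w
      simp only [Matrix.transpose_apply, hAdef, Matrix.of_apply]
      rfl
    rw [Finset.sum_congr rfl (fun w _ => this w)]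
    exact hvbij.sum_comp (fun u => I (gE i) u * Iᵀ u (gE j))
  have hdet := det_gram_parent m p hple A hA
  rw [hAA, Matrix.det_submatrix_equiv_self] at hdet
  rw [hdet]
  push_cast
  ring
end

section
/- Let G be a connected simple graph with n vertices and m edges that is not a tree (so m ≥ n), and let I be the edge-vertex incidence matrix of G. If m > n, or if G contains a cycle of even length, then det(I·Iᵀ) = 0. If m = n and G contains a cycle of odd length, then det(I·Iᵀ) = 4. -/
open scoped Classical
open Matrix

variable {V : Type} [Fintype V] [DecidableEq V] {G : SimpleGraph V}

noncomputable def altSum (z : V) : List (Sym2 V) → ℝ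
  | [] => 0
  | e :: t => (if z ∈ e then (1:ℝ) else 0) - altSum z t

lemma altSum_walk {v u : V} (p : G.Walk v u) (z : V) :
    altSum z p.edges = (if z = v then (1:ℝ) else 0)
      - (-1) ^ p.length * (if z = u then (1:ℝ) else 0) := by
  induction p with
  | nil => simp [altSum]
  | cons h p ih =>
    rename_i a b c
    have hne : a ≠ b := h.ne
    have hmem : (if z ∈ s(a,b) then (1:ℝ) else 0)
        = (if z = a then (1:ℝ) else 0) + (if z = b then (1:ℝ) else 0) := by
      by_cases hza : z = a <;> by_cases hzb : z = b <;>
        simp_all [Sym2.mem_iff]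
    rw [SimpleGraph.Walk.edges_cons, altSum, ih, hmem, SimpleGraph.Walk.length_cons, pow_succ]
    ring

lemma sum_indicator_eq_altSum [DecidableRel G.Adj] (c : List (Sym2 V)) (hnd : c.Nodup)
    (hc : ∀ e ∈ c, e ∈ G.edgeSet) (z : V) :
    ∑ e : G.edgeSet, (if (e : Sym2 V) ∈ c then ((-1:ℝ)) ^ (c.idxOf (e : Sym2 V)) else 0)
        * (if z ∈ (e : Sym2 V) then (1:ℝ) else 0) = altSum z c := by
  induction c with
  | nil => simp [altSum]
  | cons a t ih =>
    have ha : a ∈ G.edgeSet := hc a (List.mem_cons_self)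
    have hat : a ∉ t := (List.nodup_cons.mp hnd).1
    have hndt : t.Nodup := (List.nodup_cons.mp hnd).2
    set a' : G.edgeSet := ⟨a, ha⟩ with ha'
    rw [← Finset.add_sum_erase _ _ (Finset.mem_univ a')]
    have h1 : (if (a' : Sym2 V) ∈ a :: t then ((-1:ℝ)) ^ ((a :: t).idxOf (a' : Sym2 V)) else 0)
        * (if z ∈ (a' : Sym2 V) then (1:ℝ) else 0) = (if z ∈ a then (1:ℝ) else 0) := by
      simp [ha', List.idxOf_cons_self]
    have h2 : ∑ e ∈ Finset.univ.erase a',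
        (if (e : Sym2 V) ∈ a :: t then ((-1:ℝ)) ^ ((a :: t).idxOf (e : Sym2 V)) else 0)
          * (if z ∈ (e : Sym2 V) then (1:ℝ) else 0)
        = -∑ e ∈ Finset.univ.erase a',
            (if (e : Sym2 V) ∈ t then ((-1:ℝ)) ^ (t.idxOf (e : Sym2 V)) else 0)
              * (if z ∈ (e : Sym2 V) then (1:ℝ) else 0) := by
      rw [← Finset.sum_neg_distrib]
      refine Finset.sum_congr rfl ?_
      intro e he
      have hea : (e : Sym2 V) ≠ a := by
        intro hh
        exact (Finset.mem_erase.mp he).1 (Subtype.ext hh)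
      by_cases het : (e : Sym2 V) ∈ t
      · have : (e : Sym2 V) ∈ a :: t := List.mem_cons_of_mem _ het
        rw [if_pos this, if_pos het, List.idxOf_cons_ne _ hea.symm, pow_succ]
        ring
      · have : (e : Sym2 V) ∉ a :: t := by
          simp [hea, het]
        rw [if_neg this, if_neg het]
        ring
    have h3 : ∑ e ∈ Finset.univ.erase a',
        (if (e : Sym2 V) ∈ t then ((-1:ℝ)) ^ (t.idxOf (e : Sym2 V)) else 0)
          * (if z ∈ (e : Sym2 V) then (1:ℝ) else 0)
        = ∑ e : G.edgeSet,
            (if (e : Sym2 V) ∈ t then ((-1:ℝ)) ^ (t.idxOf (e : Sym2 V)) else 0)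
              * (if z ∈ (e : Sym2 V) then (1:ℝ) else 0) := by
      rw [Finset.sum_erase _]
      rw [if_neg (by simpa [ha'] using hat)]
      ring
    rw [h1, h2, h3, ih hndt (fun e he => hc e (List.mem_cons_of_mem _ he))]
    rw [altSum]; ring

theorem part1 [DecidableRel G.Adj] (hG : G.Connected)
    (I : Matrix G.edgeSet V ℝ)
    (hI : ∀ (e : G.edgeSet) (v : V), I e v = if v ∈ (e : Sym2 V) then 1 else 0) :
    ((Fintype.card G.edgeSet > Fintype.card V ∨
        ∃ (v : V) (w : G.Walk v v), w.IsCycle ∧ Even w.length) → (I * Iᵀ).det = 0) := by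
  rintro (hgt | ⟨v, w, hcyc, heven⟩)
  · by_contra hdet
    have hunit : IsUnit (I * Iᵀ) := by
      rw [Matrix.isUnit_iff_isUnit_det]
      exact isUnit_iff_ne_zero.mpr hdet
    have h1 : (I * Iᵀ).rank = Fintype.card G.edgeSet := Matrix.rank_of_isUnit _ hunit
    have h2 : (I * Iᵀ).rank ≤ Fintype.card V :=
      le_trans (Matrix.rank_mul_le_left I Iᵀ) (Matrix.rank_le_card_width I)
    omega
  · set c : List (Sym2 V) := w.edges with hc
    set x : G.edgeSet → ℝ :=
      fun e => if (e : Sym2 V) ∈ c then ((-1:ℝ)) ^ (c.idxOf (e : Sym2 V)) else 0 with hx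
    have hxI : x ᵥ* I = 0 := by
      funext z
      have hs := sum_indicator_eq_altSum (G := G) c hcyc.edges_nodup
        (fun e he => w.edges_subset_edgeSet he) z
      have h0 : altSum z c = 0 := by
        rw [hc, altSum_walk w z, heven.neg_one_pow]
        ring
      have : x ᵥ* I = fun z => ∑ e : G.edgeSet, x e * I e z := by
        funext z'
        simp [Matrix.vecMul, dotProduct]
      rw [this]
      simp only [hx]
      rw [show ∀ (f : G.edgeSet → ℝ), (∑ e : G.edgeSet, f e * I e z)
           = ∑ e : G.edgeSet, f e * (if z ∈ (e : Sym2 V) then (1:ℝ) else 0) from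
         fun f => Finset.sum_congr rfl (fun e _ => by rw [hI])]
      exact hs.trans h0
    by_contra hdet
    have hx0 : x ᵥ* (I * Iᵀ) = 0 := by
      rw [← Matrix.vecMul_vecMul, hxI, Matrix.zero_vecMul]
    have := Matrix.eq_zero_of_vecMul_eq_zero hdet hx0
    have hlen : c ≠ [] := by
      have h3 := hcyc.three_le_length
      have : c.length = w.length := w.length_edges
      intro hnil
      rw [hnil] at this
      simp at this
      omega
    obtain ⟨e0, he0⟩ := List.exists_mem_of_ne_nil c hlen
    have he0' : e0 ∈ G.edgeSet := w.edges_subset_edgeSet he0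
    have : x ⟨e0, he0'⟩ = 0 := by rw [this]; rfl
    rw [hx] at this
    simp only [he0, if_pos] at this
    exact (pow_ne_zero _ (by norm_num : (-1:ℝ) ≠ 0)) this

lemma sum_pair_indicator {a b : V} (hne : a ≠ b) (x : V → ℤ) :
    ∑ q : V, (if q ∈ (s(a,b) : Sym2 V) then (1:ℤ) else 0) * x q = x a + x b := by
  have : ∀ q : V, (if q ∈ (s(a,b) : Sym2 V) then (1:ℤ) else 0) * x q
      = if q ∈ ({a, b} : Finset V) then x q else 0 := by
    intro q
    by_cases h : q ∈ (s(a,b) : Sym2 V) <;>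
      simp_all [Sym2.mem_iff, Finset.mem_insert]
  rw [Finset.sum_congr rfl (fun q _ => this q), Finset.sum_ite_mem,
    Finset.univ_inter, Finset.sum_pair hne]

lemma row_eq_single_add {a b : V} (hne : a ≠ b) :
    (fun q => if q ∈ (s(a,b) : Sym2 V) then (1:ℤ) else 0)
      = Pi.single a 1 + Pi.single b 1 := by
  funext q
  by_cases hqa : q = a <;> by_cases hqb : q = b <;>
    simp_all [Sym2.mem_iff, Pi.single_apply, hne.symm]

lemma kernel_walk {x : V → ℤ} (hadj : ∀ {a b : V}, G.Adj a b → x a + x b = 0) :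
    ∀ {a b : V} (p : G.Walk a b), x b = (-1) ^ p.length * x a := by
  intro a b p
  induction p with
  | nil => simp
  | cons h p ih =>
    rename_i a' m b'
    have h1 : x m = -x a' := by linarith [hadj h]
    rw [SimpleGraph.Walk.length_cons, pow_succ]
    rw [ih, h1]
    ring

lemma kernel_trivial (hG : G.Connected) {v : V} (w : G.Walk v v) (hodd : Odd w.length)
    {x : V → ℤ} (hadj : ∀ {a b : V}, G.Adj a b → x a + x b = 0) : x = 0 := by
  have hv : x v = 0 := by
    have := kernel_walk (G := G) hadj w
    rw [hodd.neg_one_pow] at this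
    omega
  funext u
  obtain ⟨p⟩ := hG.preconnected v u
  rw [kernel_walk (G := G) hadj p, hv, mul_zero]
  rfl

lemma span_walk {N : Submodule ℤ (V → ℤ)}
    (hgen : ∀ {a b : V}, G.Adj a b → (Pi.single a 1 + Pi.single b 1 : V → ℤ) ∈ N) :
    ∀ {a b : V} (p : G.Walk a b),
      (Pi.single a 1 - ((-1:ℤ) ^ p.length) • Pi.single b 1 : V → ℤ) ∈ N := by
  intro a b p
  induction p with
  | nil => simp
  | cons h p ih =>
    rename_i a' m b'
    have key : (Pi.single a' 1 - ((-1:ℤ) ^ (SimpleGraph.Walk.cons h p).length) • Pi.single b' 1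
        : V → ℤ)
        = (Pi.single a' 1 + Pi.single m 1)
          - (Pi.single m 1 - ((-1:ℤ) ^ p.length) • Pi.single b' 1) := by
      rw [SimpleGraph.Walk.length_cons, pow_succ]
      module
    rw [key]
    exact sub_mem (hgen h) ih

lemma span_facts (hG : G.Connected) {v : V} (w : G.Walk v v) (hodd : Odd w.length)
    {N : Submodule ℤ (V → ℤ)}
    (hgen : ∀ {a b : V}, G.Adj a b → (Pi.single a 1 + Pi.single b 1 : V → ℤ) ∈ N) :
    ((2:ℤ) • Pi.single v 1 : V → ℤ) ∈ N ∧
      ∀ a : V, (Pi.single a 1 - Pi.single v 1 : V → ℤ) ∈ N := by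
  have h2v : ((2:ℤ) • Pi.single v 1 : V → ℤ) ∈ N := by
    have := span_walk (G := G) hgen w
    rw [hodd.neg_one_pow] at this
    have key : ((2:ℤ) • Pi.single v 1 : V → ℤ)
        = Pi.single v 1 - (-1:ℤ) • Pi.single v 1 := by module
    rw [key]; exact this
  refine ⟨h2v, fun a => ?_⟩
  obtain ⟨p⟩ := hG.preconnected a v
  have hp := span_walk (G := G) hgen p
  rcases Nat.even_or_odd p.length with he | ho
  · rwa [he.neg_one_pow, one_smul] at hp
  · rw [ho.neg_one_pow] at hp
    have key : (Pi.single a 1 - Pi.single v 1 : V → ℤ)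
        = (Pi.single a 1 - (-1:ℤ) • Pi.single v 1) - (2:ℤ) • Pi.single v 1 := by module
    rw [key]
    exact sub_mem hp h2v

noncomputable def phiSum (V : Type) [Fintype V] : (V → ℤ) →ₗ[ℤ] ZMod 2 where
  toFun := fun x => ((∑ q, x q : ℤ) : ZMod 2)
  map_add' := by
    intro x y
    rw [← Int.cast_add, ← Finset.sum_add_distrib]
    rfl
  map_smul' := by
    intro r x
    simp only [Pi.smul_apply, smul_eq_mul, ← Finset.mul_sum, Int.cast_mul,
      RingHom.id_apply, zsmul_eq_mul]

lemma phiSum_apply (x : V → ℤ) : phiSum V x = ((∑ q, x q : ℤ) : ZMod 2) := rfl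

lemma mem_span_of_ker (hG : G.Connected) {v : V} (w : G.Walk v v) (hodd : Odd w.length)
    {N : Submodule ℤ (V → ℤ)}
    (hgen : ∀ {a b : V}, G.Adj a b → (Pi.single a 1 + Pi.single b 1 : V → ℤ) ∈ N)
    {x : V → ℤ} (hx : phiSum V x = 0) : x ∈ N := by
  obtain ⟨h2v, hdiff⟩ := span_facts hG w hodd hgen
  have hdvd : (2:ℤ) ∣ ∑ q, x q := by
    have := (ZMod.intCast_zmod_eq_zero_iff_dvd (∑ q, x q) 2).mp hx
    exact_mod_cast this
  obtain ⟨k, hk⟩ := hdvd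
  have hxeq : x = (∑ q, x q • (Pi.single q (1:ℤ) - Pi.single v 1 : V → ℤ)) + k • ((2:ℤ) • Pi.single v 1) := by
    have h1 : ∑ q, x q • (Pi.single q (1:ℤ) : V → ℤ) = x := by
      have : ∀ q : V, x q • (Pi.single q (1:ℤ) : V → ℤ) = (Pi.single q (x q) : V → ℤ) := by
        intro q
        funext r
        by_cases h : r = q <;> simp [Pi.single_apply, h]
      rw [Finset.sum_congr rfl (fun q _ => this q), Finset.univ_sum_single]
    have h2 : ∑ q, x q • (Pi.single q (1:ℤ) - Pi.single v 1 : V → ℤ)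
        = (∑ q, x q • (Pi.single q (1:ℤ) : V → ℤ)) - (∑ q, x q) • (Pi.single v (1:ℤ) : V → ℤ) := by
      rw [Finset.sum_smul]
      simp [smul_sub, Finset.sum_sub_distrib]
    rw [h2, h1, hk]
    module
  rw [hxeq]
  exact add_mem (Submodule.sum_mem _ (fun q _ => Submodule.smul_mem _ _ (hdiff q)))
    (Submodule.smul_mem _ _ h2v)

lemma det_of_coker_two {f : (V → ℤ) →ₗ[ℤ] (V → ℤ)} (hinj : Function.Injective f)
    (hcard : Nat.card ((V → ℤ) ⧸ LinearMap.range f) = 2) :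
    (LinearMap.det f).natAbs = 2 := by
  have hidx : (LinearMap.range f).toAddSubgroup.index = 2 := hcard
  obtain ⟨n, snf⟩ := (LinearMap.range f).smithNormalForm (Pi.basisFun ℤ V)
  have hite := snf.toAddSubgroup_index_eq_ite
  rw [hidx] at hite
  have hn : n = Fintype.card V := by
    by_contra h
    rw [if_neg h] at hite
    omega
  rw [if_pos hn] at hite
  have hprod : ∏ i, (snf.a i).natAbs = 2 := by
    have := hite.symm
    simpa [Ideal.span_singleton_toAddSubgroup_eq_zmultiples, Int.index_zmultiples] using this
  set b := snf.bM with hb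
  have hbij : Function.Bijective snf.f :=
    (Fintype.bijective_iff_injective_and_card snf.f).mpr
      ⟨snf.f.injective, by rw [Fintype.card_fin, hn]⟩
  set eqv : Fin n ≃ V := Equiv.ofBijective snf.f hbij with heqv
  set e1 : (V → ℤ) ≃ₗ[ℤ] LinearMap.range f := LinearEquiv.ofInjective f hinj with he1
  have hfe : f = (LinearMap.range f).subtype ∘ₗ (e1 : (V → ℤ) →ₗ[ℤ] LinearMap.range f) := by
    ext x
    rfl
  set e2 : (V → ℤ) ≃ₗ[ℤ] LinearMap.range f := b.equiv snf.bN eqv.symm with he2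
  have hass := LinearMap.associated_det_comp_equiv (LinearMap.range f).subtype e1 e2
  have hdet2 : LinearMap.det ((LinearMap.range f).subtype ∘ₗ (e2 : (V → ℤ) →ₗ[ℤ] _))
      = ∏ v : V, snf.a (eqv.symm v) := by
    rw [← LinearMap.det_toMatrix b]
    have hmat : LinearMap.toMatrix b b ((LinearMap.range f).subtype ∘ₗ (e2 : (V → ℤ) →ₗ[ℤ] _))
        = Matrix.diagonal (fun v => snf.a (eqv.symm v)) := by
      ext i j
      rw [LinearMap.toMatrix_apply]
      have : ((LinearMap.range f).subtype ∘ₗ (e2 : (V → ℤ) →ₗ[ℤ] _)) (b j)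
          = snf.a (eqv.symm j) • b j := by
        have h1 : (e2 : (V → ℤ) →ₗ[ℤ] _) (b j) = snf.bN (eqv.symm j) := b.equiv_apply _ _ _
        have h2 : ((snf.bN (eqv.symm j)) : V → ℤ) = snf.a (eqv.symm j) • b (snf.f (eqv.symm j)) :=
          snf.snf _
        have h3 : snf.f (eqv.symm j) = j := eqv.apply_symm_apply j
        simp only [LinearMap.comp_apply, h1, Submodule.coe_subtype]
        rw [h2, h3]
      rw [this, _root_.map_smul, b.repr_self]
      by_cases h : i = j
      · subst h
        simp
      · simp [Matrix.diagonal_apply_ne _ h, Finsupp.single_apply,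
          show j ≠ i from fun hh => h hh.symm]
    rw [hmat, Matrix.det_diagonal]
  calc (LinearMap.det f).natAbs
      = (LinearMap.det ((LinearMap.range f).subtype ∘ₗ (e1 : (V → ℤ) →ₗ[ℤ] _))).natAbs := by
        rw [← hfe]
    _ = (LinearMap.det ((LinearMap.range f).subtype ∘ₗ (e2 : (V → ℤ) →ₗ[ℤ] _))).natAbs :=
        Int.natAbs_eq_iff_associated.mpr hass
    _ = (∏ v : V, snf.a (eqv.symm v)).natAbs := by rw [hdet2]
    _ = ∏ v : V, (snf.a (eqv.symm v)).natAbs := by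
        exact map_prod Int.natAbsHom _ _
    _ = ∏ i : Fin n, (snf.a i).natAbs := Equiv.prod_comp eqv.symm (fun i => (snf.a i).natAbs)
    _ = 2 := hprod

lemma phiSum_single (a : V) : phiSum V (Pi.single a 1) = 1 := by
  rw [phiSum_apply]
  have h : ∑ q, (Pi.single a 1 : V → ℤ) q = 1 := by
    simp [Pi.single_apply]
  rw [h]
  rfl

theorem part2 [DecidableRel G.Adj] (hG : G.Connected)
    (I : Matrix G.edgeSet V ℝ)
    (hI : ∀ (e : G.edgeSet) (v : V), I e v = if v ∈ (e : Sym2 V) then 1 else 0)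
    (hcard : Fintype.card G.edgeSet = Fintype.card V)
    {v : V} (w : G.Walk v v) (hcyc : w.IsCycle) (hodd : Odd w.length) :
    (I * Iᵀ).det = 4 := by
  classical
  set ε : V ≃ G.edgeSet := Fintype.equivOfCardEq hcard.symm with hε
  set Mz : Matrix V V ℤ := fun p q => if q ∈ (ε p : Sym2 V) then 1 else 0 with hMz
  have edge_repr : ∀ e : G.edgeSet, ∃ a b : V, G.Adj a b ∧ (e : Sym2 V) = s(a, b) := by
    rintro ⟨e, he⟩
    induction e using Sym2.ind with
    | _ a b => exact ⟨a, b, he, rfl⟩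
  -- rows of Mz
  have row_eq : ∀ (p : V) {a b : V}, G.Adj a b → (ε p : Sym2 V) = s(a, b) →
      Mz p = Pi.single a 1 + Pi.single b 1 := by
    intro p a b hab hep
    rw [hMz]
    show (fun q => if q ∈ (ε p : Sym2 V) then (1:ℤ) else 0) = _
    rw [hep]
    exact row_eq_single_add hab.ne
  -- determinant of Mz is nonzero
  have hdetz : Mz.det ≠ 0 := by
    intro h
    obtain ⟨x, hx0, hxk⟩ := Matrix.exists_mulVec_eq_zero_iff.mpr h
    have hadj : ∀ {a b : V}, G.Adj a b → x a + x b = 0 := by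
      intro a b hab
      have h0 := congrFun hxk (ε.symm ⟨s(a, b), hab⟩)
      have h1 : (Mz *ᵥ x) (ε.symm ⟨s(a, b), hab⟩)
          = ∑ q, (if q ∈ (s(a,b) : Sym2 V) then (1:ℤ) else 0) * x q := by
        rw [Matrix.mulVec, dotProduct]
        refine Finset.sum_congr rfl (fun q _ => ?_)
        rw [hMz]
        show (if q ∈ (ε (ε.symm ⟨s(a, b), hab⟩) : Sym2 V) then (1:ℤ) else 0) * x q = _
        rw [ε.apply_symm_apply]
      rw [h1, sum_pair_indicator hab.ne] at h0
      exact h0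
    exact hx0 (kernel_trivial hG w hodd hadj)
  -- the span of the rows
  set N : Submodule ℤ (V → ℤ) := Submodule.span ℤ (Set.range Mz) with hN
  have hgen : ∀ {a b : V}, G.Adj a b → (Pi.single a 1 + Pi.single b 1 : V → ℤ) ∈ N := by
    intro a b hab
    have := row_eq (ε.symm ⟨s(a, b), hab⟩) hab (by rw [ε.apply_symm_apply])
    rw [← this]
    exact Submodule.subset_span (Set.mem_range_self _)
  have hNker : N = LinearMap.ker (phiSum V) := by
    refine le_antisymm ?_ ?_
    · rw [hN, Submodule.span_le]
      rintro _ ⟨p, rfl⟩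
      obtain ⟨a, b, hab, hep⟩ := edge_repr (ε p)
      rw [SetLike.mem_coe, LinearMap.mem_ker, row_eq p hab hep, map_add,
        phiSum_single, phiSum_single]
      decide
    · intro x hx
      exact mem_span_of_ker hG w hodd hgen (LinearMap.mem_ker.mp hx)
  have hsurj : Function.Surjective (phiSum V) := by
    intro c
    have : c = 0 ∨ c = 1 := (by decide : ∀ c : ZMod 2, c = 0 ∨ c = 1) c
    rcases this with rfl | rfl
    · exact ⟨0, map_zero _⟩
    · obtain ⟨v0⟩ := hG.nonempty
      exact ⟨Pi.single v0 1, phiSum_single v0⟩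
  have hNcard : Nat.card ((V → ℤ) ⧸ N) = 2 := by
    have e2 : ((V → ℤ) ⧸ N) ≃ₗ[ℤ] ZMod 2 := by
      rw [hNker]
      exact (phiSum V).quotKerEquivOfSurjective hsurj
    rw [Nat.card_congr e2.toEquiv, Nat.card_zmod]
  -- the linear map given by the transpose
  set f : (V → ℤ) →ₗ[ℤ] (V → ℤ) := (Mzᵀ).mulVecLin with hf
  have hrange : LinearMap.range f = N := by
    rw [hf, Matrix.range_mulVecLin, hN]
    rfl
  have hinj : Function.Injective f := by
    intro x y hxy
    by_contra hne
    have hsub : Mzᵀ *ᵥ (x - y) = 0 := by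
      rw [Matrix.mulVec_sub]
      simp only [hf, Matrix.mulVecLin_apply] at hxy
      rw [hxy, sub_self]
    have : Mzᵀ.det = 0 := Matrix.exists_mulVec_eq_zero_iff.mp ⟨x - y, sub_ne_zero.mpr hne, hsub⟩
    rw [Matrix.det_transpose] at this
    exact hdetz this
  have hdetf : (Mz.det).natAbs = 2 := by
    have h1 := det_of_coker_two hinj (by rw [hrange]; exact hNcard)
    have h2 : LinearMap.det f = Mzᵀ.det := by
      rw [hf, show Mzᵀ.mulVecLin = Matrix.toLin' Mzᵀ from rfl, LinearMap.det_toLin']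
    rw [h2, Matrix.det_transpose] at h1
    exact h1
  -- back to the real matrix
  set Iq : Matrix V V ℝ := I.submatrix ε id with hIq
  have hsub : (I * Iᵀ).det = (Iq * Iqᵀ).det := by
    rw [← Matrix.det_submatrix_equiv_self ε (I * Iᵀ),
      ← Matrix.submatrix_mul_equiv I Iᵀ ε (Equiv.refl V) ε]
    rfl
  have hcast : Iq = Mz.map (fun z : ℤ => (z : ℝ)) := by
    ext p q
    rw [hIq, Matrix.submatrix_apply, hI, Matrix.map_apply, hMz]
    by_cases h : q ∈ (ε p : Sym2 V) <;> simp [h]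
  have hdetIq : Iq.det = ((Mz.det : ℤ) : ℝ) := by
    rw [hcast]
    exact ((Int.castRingHom ℝ).map_det Mz).symm
  rw [hsub, Matrix.det_mul, Matrix.det_transpose, hdetIq]
  rcases Int.natAbs_eq Mz.det with h | h <;> rw [hdetf] at h <;> rw [h] <;> push_cast <;> norm_num


/-- Let `G` be a connected simple graph with `n` vertices and `m` edges that is not a tree,
and let `I` be its edge-vertex incidence matrix.  If `m > n` or `G` contains an even cycle,
then `det (I ⬝ Iᵀ) = 0`; if `m = n` and `G` contains an odd cycle, then `det (I ⬝ Iᵀ) = 4`. -/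
theorem det_gram_incidence_non_tree {V : Type} [Fintype V] [DecidableEq V]
    (G : SimpleGraph V) [DecidableRel G.Adj] (hG : G.Connected) (hnt : ¬ G.IsTree)
    (I : Matrix G.edgeSet V ℝ)
    (hI : ∀ (e : G.edgeSet) (v : V), I e v = if v ∈ (e : Sym2 V) then 1 else 0) :
    ((Fintype.card G.edgeSet > Fintype.card V ∨
        ∃ (v : V) (w : G.Walk v v), w.IsCycle ∧ Even w.length) → (I * Iᵀ).det = 0) ∧
    ((Fintype.card G.edgeSet = Fintype.card V ∧
        ∃ (v : V) (w : G.Walk v v), w.IsCycle ∧ Odd w.length) → (I * Iᵀ).det = 4) := by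
  constructor
  · exact part1 hG I hI
  · rintro ⟨hcard, v, w, hcyc, hodd⟩
    exact part2 hG I hI hcard w hcyc hodd
end

section
/- If m and n are positive integers with m ≤ n/2, then there exists a matrix I ∈ {0,1}^{m×n} with exactly two ones in each row such that det(I·Iᵀ) = 2^m. If n/2 ≤ m ≤ n and 2m−n is divisible by 3, then there exists a matrix I ∈ {0,1}^{m×n} with exactly two ones in each row such that det(I·Iᵀ) = 2^((n+m)/3). -/
open scoped Classical
open Matrix

noncomputable section AuxGram

/-- edge block -/
def Eblk : Matrix (Fin 1) (Fin 2) ℝ := !![1, 1]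

/-- triangle block -/
def Tblk : Matrix (Fin 3) (Fin 3) ℝ := !![1,1,0; 0,1,1; 1,0,1]

lemma Eblk_mem (i : Fin 1) (j : Fin 2) : Eblk i j = 0 ∨ Eblk i j = 1 := by
  fin_cases i <;> fin_cases j <;> simp [Eblk, Matrix.vecHead, Matrix.vecTail]

lemma Tblk_mem (i : Fin 3) (j : Fin 3) : Tblk i j = 0 ∨ Tblk i j = 1 := by
  fin_cases i <;> fin_cases j <;> norm_num [Tblk, Matrix.vecHead, Matrix.vecTail]

lemma Eblk_row_sum (i : Fin 1) : ∑ j, Eblk i j = 2 := by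
  fin_cases i
  simp [Eblk, Fin.sum_univ_two, Matrix.vecHead, Matrix.vecTail]
  norm_num

lemma Tblk_row_sum (i : Fin 3) : ∑ j, Tblk i j = 2 := by
  fin_cases i <;> norm_num [Tblk, Fin.sum_univ_three, Matrix.vecHead, Matrix.vecTail] <;> simp [Matrix.cons_val] <;> norm_num

lemma Eblk_gram_det : (Eblk * Eblkᵀ).det = 2 := by
  simp [Matrix.det_fin_one, Matrix.mul_apply, Fin.sum_univ_two, Eblk, Matrix.vecHead, Matrix.vecTail]
  norm_num [Matrix.vecMul, dotProduct, Fin.sum_univ_two]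

lemma Tblk_gram_det : (Tblk * Tblkᵀ).det = 4 := by
  norm_num [Matrix.det_fin_three, Matrix.mul_apply, Fin.sum_univ_three, Tblk, Matrix.vecHead, Matrix.vecTail, Matrix.vecMul, dotProduct]
  simp [Matrix.cons_val]
  norm_num

lemma card_filter_of_sum {ι : Type*} [Fintype ι] (v : ι → ℝ)
    (h01 : ∀ j, v j = 0 ∨ v j = 1) (hs : ∑ j, v j = 2) :
    (Finset.univ.filter fun j => v j = 1).card = 2 := by
  have key : ((Finset.univ.filter fun j => v j = 1).card : ℝ) = 2 := by
    rw [← hs, ← Finset.sum_filter_add_sum_filter_not Finset.univ (fun j => v j = 1) v]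
    have h1 : ∑ j ∈ Finset.univ.filter fun j => v j = 1, v j
        = (Finset.univ.filter fun j => v j = 1).card • (1:ℝ) := by
      rw [Finset.sum_congr rfl (fun j hj => (Finset.mem_filter.mp hj).2)]
      simp
    have h2 : ∑ j ∈ Finset.univ.filter fun j => ¬ v j = 1, v j = 0 := by
      apply Finset.sum_eq_zero
      intro j hj
      rcases h01 j with h | h
      · exact h
      · exact absurd h (Finset.mem_filter.mp hj).2
    rw [h1, h2]
    simp
  exact_mod_cast key

/-- Core construction: `t` triangles, `s` disjoint edges, `z` isolated vertices. -/
lemma exists_gram (m n t s z : ℕ) (hm : 3 * t + s = m) (hn : 3 * t + 2 * s + z = n) :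
    ∃ I : Matrix (Fin m) (Fin n) ℝ,
      (∀ i j, I i j = 0 ∨ I i j = 1) ∧
      (∀ i, (Finset.univ.filter fun j => I i j = 1).card = 2) ∧
      (I * Iᵀ).det = 4 ^ t * 2 ^ s := by
  -- block matrix
  set M0 : Matrix ((Fin 3 × Fin t) ⊕ (Fin 1 × Fin s)) ((Fin 3 × Fin t) ⊕ (Fin 2 × Fin s)) ℝ :=
    Matrix.fromBlocks (Matrix.blockDiagonal fun _ => Tblk) 0 0
      (Matrix.blockDiagonal fun _ => Eblk) with hM0
  set M : Matrix ((Fin 3 × Fin t) ⊕ (Fin 1 × Fin s))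
      (((Fin 3 × Fin t) ⊕ (Fin 2 × Fin s)) ⊕ Fin z) ℝ :=
    Matrix.fromCols M0 0 with hM
  have ecard : Fintype.card (Fin m) = Fintype.card ((Fin 3 × Fin t) ⊕ (Fin 1 × Fin s)) := by
    simp only [Fintype.card_sum, Fintype.card_prod, Fintype.card_fin]; omega
  have fcard : Fintype.card (Fin n)
      = Fintype.card (((Fin 3 × Fin t) ⊕ (Fin 2 × Fin s)) ⊕ Fin z) := by
    simp only [Fintype.card_sum, Fintype.card_prod, Fintype.card_fin]; omega
  obtain ⟨e⟩ := Fintype.card_eq.mp ecard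
  obtain ⟨f⟩ := Fintype.card_eq.mp fcard
  have hent : ∀ p q, M p q = 0 ∨ M p q = 1 := by
    intro p q
    rcases q with q | q
    · rcases p with p | p <;> rcases q with q | q
      · rcases p with ⟨a, u⟩; rcases q with ⟨b, v⟩
        simp only [hM, hM0, Matrix.fromCols_apply_inl, Matrix.fromBlocks_apply₁₁,
          Matrix.blockDiagonal_apply]
        split
        · exact Tblk_mem a b
        · exact Or.inl rfl
      · simp [hM, hM0, Matrix.fromCols_apply_inl]
      · simp [hM, hM0, Matrix.fromCols_apply_inl]
      · rcases p with ⟨a, u⟩; rcases q with ⟨b, v⟩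
        simp only [hM, hM0, Matrix.fromCols_apply_inl, Matrix.fromBlocks_apply₂₂,
          Matrix.blockDiagonal_apply]
        split
        · exact Eblk_mem a b
        · exact Or.inl rfl
    · left; simp [hM, Matrix.fromCols_apply_inr]
  refine ⟨M.submatrix e f, fun i j => hent (e i) (f j), ?_, ?_⟩
  · -- row counts
    intro i
    apply card_filter_of_sum
    · exact fun j => hent (e i) (f j)
    · show ∑ j, M (e i) (f j) = 2
      rw [Equiv.sum_comp f (fun q => M (e i) q)]
      have : ∀ p, ∑ q, M p q = 2 := by
        intro p
        rw [Fintype.sum_sum_type]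
        have hz : ∑ q : Fin z, M p (Sum.inr q) = 0 := by
          simp [hM, Matrix.fromCols_apply_inr]
        rw [hz, add_zero]
        show ∑ q : (Fin 3 × Fin t) ⊕ (Fin 2 × Fin s), M0 p q = 2
        rw [Fintype.sum_sum_type]
        rcases p with ⟨a, u⟩ | ⟨a, u⟩
        · have h2 : ∑ q : Fin 2 × Fin s, M0 (Sum.inl (a, u)) (Sum.inr q) = 0 := by
            simp [hM0]
          rw [h2, add_zero]
          have : ∑ q : Fin 3 × Fin t, M0 (Sum.inl (a, u)) (Sum.inl q)
              = ∑ b : Fin 3, Tblk a b := by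
            rw [Fintype.sum_prod_type]
            simp [hM0, Matrix.blockDiagonal_apply, Finset.sum_ite_eq]
          rw [this, Tblk_row_sum]
        · have h1 : ∑ q : Fin 3 × Fin t, M0 (Sum.inr (a, u)) (Sum.inl q) = 0 := by
            simp [hM0]
          rw [h1, zero_add]
          have : ∑ q : Fin 2 × Fin s, M0 (Sum.inr (a, u)) (Sum.inr q)
              = ∑ b : Fin 2, Eblk a b := by
            rw [Fintype.sum_prod_type]
            simp [hM0, Matrix.blockDiagonal_apply, Finset.sum_ite_eq]
          rw [this, Eblk_row_sum]
      exact this (e i)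
  · -- determinant
    have hT : (M.submatrix e f)ᵀ = Mᵀ.submatrix f e := by
      rw [Matrix.transpose_submatrix]
    rw [hT, Matrix.submatrix_mul_equiv M Mᵀ e f e, Matrix.det_submatrix_equiv_self]
    have hMM : M * Mᵀ = M0 * M0ᵀ := by
      rw [hM, Matrix.transpose_fromCols, Matrix.fromCols_mul_fromRows]
      simp
    rw [hMM, hM0, Matrix.fromBlocks_transpose, Matrix.fromBlocks_multiply]
    simp only [Matrix.mul_zero, Matrix.zero_mul, add_zero, zero_add,
      Matrix.transpose_zero, Matrix.blockDiagonal_transpose, ← Matrix.blockDiagonal_mul]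
    rw [Matrix.det_fromBlocks_zero₂₁, Matrix.det_blockDiagonal, Matrix.det_blockDiagonal]
    simp only [Tblk_gram_det, Eblk_gram_det, Finset.prod_const, Finset.card_univ, Fintype.card_fin]

end AuxGram

/-- Tightness of the bound on the Gramian determinant for 0/1-matrices with exactly two
ones in each row: if `m ≤ n/2` there is such an `m × n` matrix with `det (I ⬝ Iᵀ) = 2^m`,
and if `n/2 ≤ m ≤ n` with `3 ∣ 2m - n` there is one with `det (I ⬝ Iᵀ) = 2^((n+m)/3)`. -/
theorem det_gram_two_ones_per_row_tight (m n : ℕ) (hm : 0 < m) (hn : 0 < n) :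
    ((m : ℝ) ≤ (n : ℝ) / 2 →
      ∃ I : Matrix (Fin m) (Fin n) ℝ,
        (∀ i j, I i j = 0 ∨ I i j = 1) ∧
        (∀ i, (Finset.univ.filter fun j => I i j = 1).card = 2) ∧
        (I * Iᵀ).det = 2 ^ m) ∧
    ((n : ℝ) / 2 ≤ (m : ℝ) → m ≤ n → 3 ∣ 2 * m - n →
      ∃ I : Matrix (Fin m) (Fin n) ℝ,
        (∀ i j, I i j = 0 ∨ I i j = 1) ∧
        (∀ i, (Finset.univ.filter fun j => I i j = 1).card = 2) ∧
        (I * Iᵀ).det = 2 ^ (((n : ℝ) + (m : ℝ)) / 3)) := by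
  constructor
  · intro h
    have h2 : 2 * m ≤ n := by rify; linarith
    obtain ⟨I, h01, hrow, hdet⟩ := exists_gram m n 0 m (n - 2 * m) (by omega) (by omega)
    exact ⟨I, h01, hrow, by simpa using hdet⟩
  · intro h1 h2 h3
    have hn2 : n ≤ 2 * m := by rify; linarith
    obtain ⟨k, hk⟩ := h3
    obtain ⟨I, h01, hrow, hdet⟩ := exists_gram m n k (n - m) 0 (by omega) (by omega)
    refine ⟨I, h01, hrow, ?_⟩
    rw [hdet]
    have he : ((n : ℝ) + (m : ℝ)) / 3 = ((2 * k + (n - m) : ℕ) : ℝ) := by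
      have : n + m = 3 * (2 * k + (n - m)) := by omega
      have := congrArg (fun x : ℕ => (x : ℝ)) this
      push_cast at this ⊢
      linarith
    rw [he, Real.rpow_natCast]
    rw [show (4 : ℝ) = 2 ^ 2 by norm_num, ← pow_mul, ← pow_add]
end

section
/- If A is an n×n matrix with all entries in {−1,0,1} having exactly t nonzero entries, then |det(A)| ≤ (t/n)^(n/2). -/
open scoped Classical
open Matrix

/-- Trace of a real Hermitian matrix equals the sum of its eigenvalues. -/
lemma trace_eq_sum_eigenvalues' {m : Type*} [Fintype m] [DecidableEq m]
    {M : Matrix m m ℝ} (hM : M.IsHermitian) :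
    M.trace = ∑ i, hM.eigenvalues i := by
  nth_rewrite 1 [hM.spectral_theorem]
  rw [Unitary.conjStarAlgAut_apply]
  rw [Matrix.trace_mul_cycle]
  have h1 : (star (hM.eigenvectorUnitary : Matrix m m ℝ)) *
      (hM.eigenvectorUnitary : Matrix m m ℝ) = 1 := Unitary.coe_star_mul_self _
  rw [h1, Matrix.one_mul, Matrix.trace_diagonal]
  simp [RCLike.ofReal]

/-- If `A` is an `n × n` matrix with entries in `{-1,0,1}` and exactly `t` nonzero
entries, then `|det A| ≤ (t/n)^(n/2)`. -/
theorem abs_det_le_of_t_nonzero (n t : ℕ) (A : Matrix (Fin n) (Fin n) ℝ)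
    (h : ∀ i j, A i j = -1 ∨ A i j = 0 ∨ A i j = 1)
    (ht : (Finset.univ.filter fun p : Fin n × Fin n => A p.1 p.2 ≠ 0).card = t) :
    |A.det| ≤ ((t : ℝ) / (n : ℝ)) ^ ((n : ℝ) / 2) := by
  rcases Nat.eq_zero_or_pos n with hn | hn
  · subst hn
    simp [Matrix.det_fin_zero]
  have hn' : (0:ℝ) < n := by exact_mod_cast hn
  set G : Matrix (Fin n) (Fin n) ℝ := Aᴴ * A with hG
  have hPSD : G.PosSemidef := Matrix.posSemidef_conjTranspose_mul_self A
  have hHerm : G.IsHermitian := hPSD.isHermitian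
  set lam : Fin n → ℝ := hHerm.eigenvalues with hlam
  have hlam_nonneg : ∀ i, 0 ≤ lam i := fun i => hPSD.eigenvalues_nonneg i
  -- trace of G is t
  have htrace : G.trace = (t : ℝ) := by
    have : G.trace = ∑ p : Fin n × Fin n, (A p.1 p.2) ^ 2 := by
      rw [hG, Matrix.trace]
      simp only [Matrix.diag_apply, Matrix.mul_apply, Matrix.conjTranspose_apply,
        star_trivial, ← sq]
      rw [Finset.sum_comm, ← Finset.sum_product']
      rw [Finset.univ_product_univ]
    rw [this, ← ht]
    rw [← Finset.sum_filter_add_sum_filter_not Finset.univ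
      (fun p : Fin n × Fin n => A p.1 p.2 ≠ 0)]
    have h2 : ∑ p ∈ Finset.univ.filter (fun p : Fin n × Fin n => ¬ A p.1 p.2 ≠ 0),
        (A p.1 p.2) ^ 2 = 0 := by
      apply Finset.sum_eq_zero
      intro p hp
      simp only [Finset.mem_filter, not_not] at hp
      rw [hp.2]; ring
    have h1 : ∑ p ∈ Finset.univ.filter (fun p : Fin n × Fin n => A p.1 p.2 ≠ 0),
        (A p.1 p.2) ^ 2 = (Finset.univ.filter fun p : Fin n × Fin n => A p.1 p.2 ≠ 0).card := by
      rw [Finset.card_eq_sum_ones, Nat.cast_sum]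
      apply Finset.sum_congr rfl
      intro p hp
      simp only [Finset.mem_filter] at hp
      rcases h p.1 p.2 with h' | h' | h' <;> simp [h'] at hp ⊢
    rw [h1, h2, add_zero]
  have hsum : ∑ i, lam i = (t : ℝ) := by
    rw [← trace_eq_sum_eigenvalues' hHerm, htrace]
  have hdetG : G.det = (A.det) ^ 2 := by
    rw [hG, Matrix.det_mul, Matrix.det_conjTranspose, star_trivial, sq]
  have hprod : ∏ i, lam i = (A.det) ^ 2 := by
    have h3 := hHerm.det_eq_prod_eigenvalues
    rw [hdetG] at h3
    simpa using h3.symm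
  -- AM-GM
  have hAMGM : ∏ i, lam i ≤ ((t : ℝ) / n) ^ (n : ℕ) := by
    have key := Real.geom_mean_le_arith_mean Finset.univ (fun _ => (1:ℝ)) lam
      (fun _ _ => zero_le_one) (by simp [hn']) (fun i _ => hlam_nonneg i)
    simp only [Real.rpow_one, one_mul, Finset.sum_const, Finset.card_univ,
      Fintype.card_fin, nsmul_eq_mul, mul_one] at key
    rw [hsum] at key
    have hp0 : (0:ℝ) ≤ ∏ i, lam i := Finset.prod_nonneg fun i _ => hlam_nonneg i
    have := Real.rpow_le_rpow (Real.rpow_nonneg hp0 _) key (le_of_lt hn' : (0:ℝ) ≤ n)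
    rwa [← Real.rpow_mul hp0, inv_mul_cancel₀ (ne_of_gt hn'), Real.rpow_one,
      Real.rpow_natCast] at this
  have hdet2 : (A.det) ^ 2 ≤ ((t : ℝ) / n) ^ (n : ℕ) := hprod ▸ hAMGM
  have hq : (0:ℝ) ≤ (t : ℝ) / n := div_nonneg (Nat.cast_nonneg t) (le_of_lt hn')
  calc |A.det| = ((A.det) ^ 2) ^ ((1:ℝ)/2) := by
        rw [← Real.sqrt_eq_rpow, Real.sqrt_sq_eq_abs]
    _ ≤ (((t : ℝ) / n) ^ (n : ℕ)) ^ ((1:ℝ)/2) :=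
        Real.rpow_le_rpow (sq_nonneg _) hdet2 (by norm_num)
    _ = ((t : ℝ) / n) ^ ((n : ℝ)/2) := by
        rw [← Real.rpow_natCast ((t:ℝ)/n) n, ← Real.rpow_mul hq]
        congr 1
        ring
end

section
/- Let n and t be positive integers such that k = t/n and n²/t are integers, and suppose there exists a Hadamard matrix of order k. Then there exists a matrix A ∈ {−1,0,1}^{n×n} with exactly t nonzero entries such that |det(A)| = (t/n)^(n/2). -/
open scoped Classical
open Matrix

/-- If `k = t/n` and `n²/t` are integers and a Hadamard matrix of order `k` exists, then
there is an `n × n` matrix with entries in `{-1,0,1}` having exactly `t` nonzero entries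
and `|det A| = (t/n)^(n/2)`. -/
theorem abs_det_eq_of_hadamard (n t : ℕ) (hn : 0 < n) (ht : 0 < t)
    (hdvd₁ : n ∣ t) (hdvd₂ : t ∣ n ^ 2)
    (hH : ∃ H : Matrix (Fin (t / n)) (Fin (t / n)) ℝ,
      (∀ i j, H i j = 1 ∨ H i j = -1) ∧ H * Hᵀ = ((t / n : ℕ) : ℝ) • 1) :
    ∃ A : Matrix (Fin n) (Fin n) ℝ,
      (∀ i j, A i j = -1 ∨ A i j = 0 ∨ A i j = 1) ∧
      (Finset.univ.filter fun p : Fin n × Fin n => A p.1 p.2 ≠ 0).card = t ∧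
      |A.det| = ((t : ℝ) / (n : ℝ)) ^ ((n : ℝ) / 2) := by
  obtain ⟨H, hH1, hH2⟩ := hH
  have htnk : t = n * (t / n) := (Nat.mul_div_cancel' hdvd₁).symm
  have hkpos : 0 < t / n := Nat.div_pos (Nat.le_of_dvd ht hdvd₁) hn
  have hkdvdn : t / n ∣ n := by
    have : n * (t / n) ∣ n * n := by rw [← htnk]; simpa [sq] using hdvd₂
    exact (mul_dvd_mul_iff_left hn.ne').mp this
  have hkm : t / n * (n / (t / n)) = n := Nat.mul_div_cancel' hkdvdn
  have e : Fin (t / n) × Fin (n / (t / n)) ≃ Fin n := (finProdFinEquiv).trans (finCongr hkm)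
  have hHne : ∀ i j, H i j ≠ 0 := by
    intro i j; rcases hH1 i j with h | h <;> rw [h] <;> norm_num
  set A : Matrix (Fin n) (Fin n) ℝ :=
    (Matrix.reindex e e) (Matrix.blockDiagonal fun _ : Fin (n / (t / n)) => H) with hA
  have hAapp : ∀ q : (Fin (t / n) × Fin (n / (t / n))) × (Fin (t / n) × Fin (n / (t / n))),
      A (e q.1) (e q.2) = if q.1.2 = q.2.2 then H q.1.1 q.2.1 else 0 := by
    intro q
    simp [hA, Matrix.reindex_apply, Matrix.submatrix_apply, Matrix.blockDiagonal_apply]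
  refine ⟨A, ?_, ?_, ?_⟩
  · intro i j
    simp only [hA, Matrix.reindex_apply, Matrix.submatrix_apply,
      Matrix.blockDiagonal_apply]
    split
    · rcases hH1 (e.symm i).1 (e.symm j).1 with h | h <;> simp [h]
    · simp
  · have hcard : (Finset.univ.filter fun p : Fin n × Fin n => A p.1 p.2 ≠ 0).card
        = (Finset.univ.filter fun q : (Fin (t / n) × Fin (n / (t / n))) ×
            (Fin (t / n) × Fin (n / (t / n))) => q.1.2 = q.2.2).card := by
      refine (Finset.card_equiv (e.prodCongr e) ?_).symm
      intro q
      simp only [Finset.mem_filter, Finset.mem_univ, true_and, Equiv.prodCongr_apply,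
        Prod.map]
      rw [hAapp q]
      constructor
      · intro hq; simp [hq, hHne]
      · intro hq; by_contra hc; simp [hc] at hq
    rw [hcard, Finset.card_filter]
    rw [Fintype.sum_prod_type]
    simp only [Fintype.sum_prod_type]
    simp [Finset.sum_ite_eq, Finset.card_univ]
    rw [mul_comm (n / (t / n)) (t / n), hkm, Nat.div_mul_cancel hdvd₁]
  · have hdetA : A.det = H.det ^ (n / (t / n)) := by
      rw [hA, Matrix.det_reindex_self, Matrix.det_blockDiagonal]
      simp [Finset.prod_const, Finset.card_univ]
    have hdet2 : H.det ^ 2 = ((t / n : ℕ) : ℝ) ^ (t / n) := by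
      have := congrArg Matrix.det hH2
      rw [Matrix.det_mul, Matrix.det_transpose, Matrix.det_smul, Matrix.det_one] at this
      simpa [sq] using this
    have habs : |H.det| = ((t / n : ℕ) : ℝ) ^ (((t / n : ℕ) : ℝ) / 2) := by
      rw [← Real.sqrt_sq_eq_abs, hdet2, ← Real.rpow_natCast ((t / n : ℕ) : ℝ) (t / n),
        Real.sqrt_eq_rpow, ← Real.rpow_mul (by positivity)]
      ring_nf
    have hbase : ((t : ℝ) / (n : ℝ)) = ((t / n : ℕ) : ℝ) :=
      (Nat.cast_div hdvd₁ (by positivity)).symm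
    rw [hdetA, abs_pow, habs, hbase, ← Real.rpow_natCast _ (n / (t / n)),
      ← Real.rpow_mul (by positivity)]
    congr 1
    have : ((t / n : ℕ) : ℝ) * ((n / (t / n) : ℕ) : ℝ) = (n : ℝ) := by exact_mod_cast hkm
    field_simp
    linarith [this]
end

section
/- If A ∈ {0,1}^{n×n} has the k-consecutive ones property, then |det(A)| ≤ (2k)^(n/2). -/
open scoped Classical

/-- A 0/1-matrix `A` has the `k`-consecutive ones property if in every row the 1-entries
form at most `k` blocks of consecutive entries, i.e. for each row `i` the set
`{j : A i j = 1}` is a union of at most `k` intervals of consecutive indices. -/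
def KConsecutiveOnes {n : ℕ} (A : Matrix (Fin n) (Fin n) ℝ) (k : ℕ) : Prop :=
  ∀ i : Fin n, ∃ s : Finset (ℕ × ℕ), s.card ≤ k ∧
    ∀ j : Fin n, A i j = 1 ↔ ∃ p ∈ s, p.1 ≤ (j : ℕ) ∧ (j : ℕ) ≤ p.2

lemma hadamard_abs_det_le (n : ℕ) (M : Matrix (Fin n) (Fin n) ℝ) :
    |M.det| ≤ ∏ i, Real.sqrt (∑ j, M i j ^ 2) := by
  haveI : Fact (Module.finrank ℝ (EuclideanSpace ℝ (Fin n)) = n) :=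
    ⟨finrank_euclideanSpace_fin⟩
  set b := EuclideanSpace.basisFun (Fin n) ℝ with hbdef
  let o : Orientation ℝ (EuclideanSpace ℝ (Fin n)) (Fin n) := b.toBasis.orientation
  let v : Fin n → EuclideanSpace ℝ (Fin n) := fun i => (WithLp.equiv 2 _).symm (M i)
  have h1 := o.abs_volumeForm_apply_le v
  have h2 := o.volumeForm_robust' b v
  have h3 : b.toBasis.det v = M.transpose.det := by
    rw [Module.Basis.det_apply]
    have : b.toBasis.toMatrix v = M.transpose := by
      ext i j
      simp only [Module.Basis.toMatrix_apply, Matrix.transpose_apply]; rfl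
    rw [this]
  have h4 : ∀ i, ‖v i‖ = Real.sqrt (∑ j, M i j ^ 2) := by
    intro i
    rw [EuclideanSpace.norm_eq]
    congr 1
    refine Finset.sum_congr rfl fun j _ => ?_
    simp [v, sq_abs]
  calc |M.det| = |b.toBasis.det v| := by rw [h3, Matrix.det_transpose]
    _ = |o.volumeForm v| := h2.symm
    _ ≤ ∏ i, ‖v i‖ := h1
    _ = ∏ i, Real.sqrt (∑ j, M i j ^ 2) := by simp [h4]

open scoped Classical

/-- Extend a row to ℕ by zero. -/
noncomputable def rowExt {n : ℕ} (A : Matrix (Fin n) (Fin n) ℝ) (i : Fin n) (m : ℕ) : ℝ :=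
  if h : m < n then A i ⟨m, h⟩ else 0

/-- Column-difference matrix. -/
noncomputable def diffMat {n : ℕ} (A : Matrix (Fin n) (Fin n) ℝ) :
    Matrix (Fin n) (Fin n) ℝ :=
  Matrix.of fun i j => A i j - rowExt A i ((j : ℕ) + 1)

lemma det_diffMat {n : ℕ} (A : Matrix (Fin n) (Fin n) ℝ) : (diffMat A).det = A.det := by
  let U : Matrix (Fin n) (Fin n) ℝ :=
    Matrix.of fun l j => (if l = j then (1:ℝ) else 0) + (if (l : ℕ) = (j : ℕ) + 1 then -1 else 0)
  have hU : U.det = 1 := by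
    have ht : U.BlockTriangular OrderDual.toDual := by
      intro l j h
      have h' : (l : ℕ) < (j : ℕ) := h
      simp only [U, Matrix.of_apply]
      rw [if_neg (by rintro rfl; exact lt_irrefl _ h'), if_neg (by omega)]
      ring
    rw [Matrix.det_of_lowerTriangular U ht]
    have : ∀ l : Fin n, U l l = 1 := by
      intro l; simp only [U, Matrix.of_apply]
      rw [if_neg (by omega : ¬ ((l:ℕ) = (l:ℕ)+1))]; simp
    simp [this]
  have hmul : diffMat A = A * U := by
    ext i j
    rw [Matrix.mul_apply]
    have : ∀ l : Fin n, A i l * U l j =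
        (if l = j then A i l else 0) + (if (l : ℕ) = (j : ℕ) + 1 then -A i l else 0) := by
      intro l
      simp only [U, Matrix.of_apply]
      split_ifs <;> ring
    rw [Finset.sum_congr rfl fun l _ => this l, Finset.sum_add_distrib,
      Finset.sum_ite_eq' Finset.univ j (fun l => A i l)]
    simp only [Finset.mem_univ, if_true]
    have h2 : (∑ l : Fin n, if (l : ℕ) = (j : ℕ) + 1 then -A i l else 0)
        = -rowExt A i ((j : ℕ) + 1) := by
      by_cases h : (j : ℕ) + 1 < n
      · rw [Finset.sum_eq_single (⟨(j : ℕ) + 1, h⟩ : Fin n)]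
        · simp [rowExt, h]
        · intro l _ hl
          rw [if_neg (by intro hc; exact hl (by ext; simp [hc]))]
        · simp
      · rw [Finset.sum_eq_zero]
        · simp [rowExt, h]
        · intro l _
          rw [if_neg (by have := l.isLt; omega)]
    rw [h2]
    simp only [diffMat, Matrix.of_apply]
    ring
  rw [hmul, Matrix.det_mul, hU, mul_one]

lemma row_sq_sum_le {n k : ℕ} (A : Matrix (Fin n) (Fin n) ℝ)
    (h01 : ∀ i j, A i j = 0 ∨ A i j = 1) (i : Fin n)
    (s : Finset (ℕ × ℕ)) (hcard : s.card ≤ k)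
    (hchar : ∀ j : Fin n, A i j = 1 ↔ ∃ p ∈ s, p.1 ≤ (j : ℕ) ∧ (j : ℕ) ≤ p.2) :
    ∑ j, (diffMat A i j) ^ 2 ≤ 2 * (k : ℝ) := by
  set d : Fin n → ℝ := fun j => diffMat A i j with hd
  have hrowExt01 : ∀ m, rowExt A i m = 0 ∨ rowExt A i m = 1 := by
    intro m; unfold rowExt; split
    · exact h01 i _
    · exact Or.inl rfl
  set T : Finset (Fin n) := Finset.univ.filter (fun j => d j ≠ 0) with hT
  -- the choice function
  have hgex : ∀ m : ℕ, ∃ p : ℕ × ℕ, (∃ q ∈ s, q.1 ≤ m ∧ m ≤ q.2) → p ∈ s ∧ p.1 ≤ m ∧ m ≤ p.2 := by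
    intro m
    by_cases h : ∃ q ∈ s, q.1 ≤ m ∧ m ≤ q.2
    · obtain ⟨q, hq, h1, h2⟩ := h
      exact ⟨q, fun _ => ⟨hq, h1, h2⟩⟩
    · exact ⟨(0, 0), fun hc => absurd hc h⟩
  choose g hg using hgex
  -- nonzero with A i j = 0 means a one starts at j+1
  have hzero : ∀ j : Fin n, j ∈ T → A i j = 0 →
      ∃ h1 : (j : ℕ) + 1 < n, A i ⟨(j : ℕ) + 1, h1⟩ = 1 := by
    intro j hj hAj
    have hdj : d j ≠ 0 := (Finset.mem_filter.mp hj).2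
    have hd' : d j = A i j - rowExt A i ((j : ℕ) + 1) := rfl
    by_cases h1 : (j : ℕ) + 1 < n
    · refine ⟨h1, ?_⟩
      rcases h01 i ⟨(j : ℕ) + 1, h1⟩ with h | h
      · exfalso; apply hdj
        rw [hd', hAj]; unfold rowExt; rw [dif_pos h1, h]; ring
      · exact h
    · exfalso; apply hdj
      rw [hd', hAj]; unfold rowExt; rw [dif_neg h1]; ring
  -- injection
  set f : Fin n → (ℕ × ℕ) × Bool :=
    fun j => if A i j = 1 then (g (j : ℕ), true) else (g ((j : ℕ) + 1), false) with hf
  have hmaps : ∀ j ∈ T, f j ∈ s ×ˢ (Finset.univ : Finset Bool) := by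
    intro j hj
    rw [Finset.mem_product]
    by_cases hAj : A i j = 1
    · have := hg (j : ℕ) ((hchar j).mp hAj)
      simp [hf, hAj, this.1]
    · have hAj0 : A i j = 0 := (h01 i j).resolve_right hAj
      obtain ⟨h1, hA1⟩ := hzero j hj hAj0
      have := hg ((j : ℕ) + 1) ((hchar ⟨(j : ℕ) + 1, h1⟩).mp hA1)
      simp [hf, hAj, this.1]
  have key : ∀ j j' : Fin n, j ∈ T → j' ∈ T → f j = f j' → (j : ℕ) < (j' : ℕ) → False := by
    intro j j' hj hj' hff hlt
    have hdj : d j ≠ 0 := (Finset.mem_filter.mp hj).2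
    by_cases hAj : A i j = 1
    · -- bool component true, so A i j' = 1 as well
      have hAj' : A i j' = 1 := by
        by_contra hc
        have : ((g (j : ℕ), true) : (ℕ × ℕ) × Bool) = (g ((j' : ℕ) + 1), false) := by
          simpa [hf, hAj, hc] using hff
        exact Bool.noConfusion (congrArg Prod.snd this)
      have hgeq : g (j : ℕ) = g (j' : ℕ) := by
        have : ((g (j : ℕ), true) : (ℕ × ℕ) × Bool) = (g (j' : ℕ), true) := by
          simpa [hf, hAj, hAj'] using hff
        exact congrArg Prod.fst this
      obtain ⟨hp, hp1, hp2⟩ := hg (j : ℕ) ((hchar j).mp hAj)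
      obtain ⟨_, hq1, hq2⟩ := hg (j' : ℕ) ((hchar j').mp hAj')
      have h1 : (j : ℕ) + 1 < n := lt_of_le_of_lt hlt j'.isLt
      have hA1 : A i ⟨(j : ℕ) + 1, h1⟩ = 1 := by
        rw [hchar]
        simp only [Fin.val_mk]
        exact ⟨g (j : ℕ), hp, by omega, by rw [hgeq]; omega⟩
      apply hdj
      have hd' : d j = A i j - rowExt A i ((j : ℕ) + 1) := rfl
      rw [hd', hAj]; unfold rowExt; rw [dif_pos h1, hA1]; ring
    · have hAj0 : A i j = 0 := (h01 i j).resolve_right hAj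
      have hAj' : ¬ A i j' = 1 := by
        by_contra hc
        have : ((g ((j : ℕ) + 1), false) : (ℕ × ℕ) × Bool) = (g (j' : ℕ), true) := by
          simpa [hf, hAj, hc] using hff
        exact Bool.noConfusion (congrArg Prod.snd this)
      have hAj'0 : A i j' = 0 := (h01 i j').resolve_right hAj'
      have hgeq : g ((j : ℕ) + 1) = g ((j' : ℕ) + 1) := by
        have : ((g ((j : ℕ) + 1), false) : (ℕ × ℕ) × Bool) = (g ((j' : ℕ) + 1), false) := by
          simpa [hf, hAj, hAj'] using hff
        exact congrArg Prod.fst this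
      obtain ⟨h1, hA1⟩ := hzero j hj hAj0
      obtain ⟨h1', hA1'⟩ := hzero j' hj' hAj'0
      obtain ⟨hp, hp1, hp2⟩ := hg ((j : ℕ) + 1) ((hchar ⟨(j : ℕ) + 1, h1⟩).mp hA1)
      obtain ⟨_, hq1, hq2⟩ := hg ((j' : ℕ) + 1) ((hchar ⟨(j' : ℕ) + 1, h1'⟩).mp hA1')
      have : A i j' = 1 := by
        rw [hchar]
        refine ⟨g ((j : ℕ) + 1), hp, by omega, by rw [hgeq]; omega⟩
      rw [this] at hAj'0; norm_num at hAj'0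
  have hinj : Set.InjOn f T := by
    intro j hj j' hj' hff
    rcases lt_trichotomy (j : ℕ) (j' : ℕ) with h | h | h
    · exact (key j j' (by simpa using hj) (by simpa using hj') hff h).elim
    · exact Fin.ext h
    · exact (key j' j (by simpa using hj') (by simpa using hj) hff.symm h).elim
  have hTcard : T.card ≤ 2 * k := by
    have := Finset.card_le_card_of_injOn f hmaps hinj
    rw [Finset.card_product] at this
    simp only [Finset.card_univ, Fintype.card_bool] at this
    omega
  -- now bound the sum
  have hsq : ∀ j : Fin n, d j ^ 2 ≤ if j ∈ T then 1 else 0 := by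
    intro j
    by_cases hj : j ∈ T
    · rw [if_pos hj]
      have h1 : |d j| ≤ 1 := by
        have hd' : d j = A i j - rowExt A i ((j : ℕ) + 1) := rfl
        rcases h01 i j with h | h <;> rcases hrowExt01 ((j : ℕ) + 1) with h2 | h2 <;>
          rw [hd', h, h2] <;> norm_num
      calc d j ^ 2 = |d j| ^ 2 := (sq_abs _).symm
        _ ≤ 1 ^ 2 := by have := abs_nonneg (d j); gcongr
        _ = 1 := one_pow 2
    · rw [if_neg hj]
      have : d j = 0 := by
        by_contra hc
        exact hj (Finset.mem_filter.mpr ⟨Finset.mem_univ _, hc⟩)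
      rw [this]; norm_num
  calc ∑ j, d j ^ 2 ≤ ∑ j, (if j ∈ T then (1:ℝ) else 0) := Finset.sum_le_sum fun j _ => hsq j
    _ = T.card := by simp
    _ ≤ 2 * (k : ℝ) := by
        have : (T.card : ℝ) ≤ ((2 * k : ℕ) : ℝ) := Nat.cast_le.mpr hTcard
        simpa using this

/-- If `A ∈ {0,1}^{n×n}` has the `k`-consecutive ones property, then
`|det A| ≤ (2k)^(n/2)`. -/
theorem abs_det_le_of_kConsecutiveOnes (n k : ℕ) (A : Matrix (Fin n) (Fin n) ℝ)
    (h01 : ∀ i j, A i j = 0 ∨ A i j = 1) (hk : KConsecutiveOnes A k) :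
    |A.det| ≤ (2 * (k : ℝ)) ^ ((n : ℝ) / 2) := by
  have hrows : ∀ i : Fin n, ∑ j, (diffMat A i j) ^ 2 ≤ 2 * (k : ℝ) := by
    intro i
    obtain ⟨s, hcard, hchar⟩ := hk i
    exact row_sq_sum_le A h01 i s hcard hchar
  calc |A.det| = |(diffMat A).det| := by rw [det_diffMat]
    _ ≤ ∏ i, Real.sqrt (∑ j, (diffMat A) i j ^ 2) := hadamard_abs_det_le n (diffMat A)
    _ ≤ ∏ _i : Fin n, Real.sqrt (2 * (k : ℝ)) := by
        apply Finset.prod_le_prod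
        · intro i _; exact Real.sqrt_nonneg _
        · intro i _; exact Real.sqrt_le_sqrt (hrows i)
    _ = Real.sqrt (2 * (k : ℝ)) ^ n := by
        rw [Finset.prod_const, Finset.card_univ, Fintype.card_fin]
    _ = (2 * (k : ℝ)) ^ ((n : ℝ) / 2) := by
        rw [Real.sqrt_eq_rpow, ← Real.rpow_natCast ((2 * (k : ℝ)) ^ ((1:ℝ)/2)) n,
          ← Real.rpow_mul (by positivity)]
        congr 1
        ring
end
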